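/- arXiv:2302.11319 — 7 statements merged into one kernel-verified Lean document; each statement's English description precedes it below -/
import Mathlib

section
/- Let (K, δ) be a differential field and f ∈ K{x} an irreducible differential polynomial with nonzero separant s_f. If g ∈ [f] (the differential ideal generated by f) has order at most the order of f, then g lies in the ordinary ideal (f) generated by f in the polynomial ring K{x}. -/
set_option synthInstance.maxHeartbeats 1000000
set_option maxHeartbeats 1000000

open MvPolynomial
noncomputable section
variable {K : Type*} [Field K]

/-- order of a differential polynomial -/
def ordOf (f : MvPolynomial ℕ K) : ℕ := f.vars.sup id

/-- separant -/
def sep (f : MvPolynomial ℕ K) : MvPolynomial ℕ K := pderiv (ordOf f) f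

/-- rank of a differential polynomial -/
def rankOf (f : MvPolynomial ℕ K) : ℕ × ℕ := (ordOf f, f.degreeOf (ordOf f))

/-- the differential ideal generated by f -/
def diffIdeal (D : Derivation ℤ (MvPolynomial ℕ K) (MvPolynomial ℕ K))
    (f : MvPolynomial ℕ K) : Ideal (MvPolynomial ℕ K) :=
  Ideal.span (Set.range fun n : ℕ => (⇑D)^[n] f)

/-- saturation I : s^∞ -/
def saturation {R : Type*} [CommRing R] (J : Ideal R) (s : R) : Ideal R where
  carrier := {h | ∃ m : ℕ, s ^ m * h ∈ J}
  zero_mem' := ⟨0, by simp⟩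
  add_mem' := by
    rintro a b ⟨m, hm⟩ ⟨n, hn⟩
    refine ⟨m + n, ?_⟩
    have h : s ^ (m + n) * (a + b) = s ^ n * (s ^ m * a) + s ^ m * (s ^ n * b) := by ring
    rw [h]
    exact J.add_mem (J.mul_mem_left _ hm) (J.mul_mem_left _ hn)
  smul_mem' := by
    rintro c a ⟨m, hm⟩
    refine ⟨m, ?_⟩
    have h : s ^ m * (c • a) = c * (s ^ m * a) := by rw [smul_eq_mul]; ring
    rw [h]
    exact J.mul_mem_left _ hm

/-- evaluation of a differential polynomial at a point of K -/
def evalD (δ : Derivation ℤ K K) (a : K) (f : MvPolynomial ℕ K) : K :=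
  MvPolynomial.eval (fun n => (⇑δ)^[n] a) f

/-- the field of constants -/
def constants (δ : Derivation ℤ K K) : Subfield K where
  carrier := {a | δ a = 0}
  zero_mem' := by simp
  one_mem' := by simp
  add_mem' := by intro a b ha hb; simp only [Set.mem_setOf_eq] at *; rw [map_add, ha, hb, add_zero]
  mul_mem' := by
    intro a b ha hb; simp only [Set.mem_setOf_eq] at *
    rw [Derivation.leibniz, ha, hb]; simp
  neg_mem' := by intro a ha; simp only [Set.mem_setOf_eq] at *; rw [map_neg, ha, neg_zero]
  inv_mem' := by
    intro a ha
    simp only [Set.mem_setOf_eq] at *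
    rcases eq_or_ne a 0 with rfl | h
    · simp
    · have h1 : a * a⁻¹ = 1 := mul_inv_cancel₀ h
      have h2 : δ (a * a⁻¹) = 0 := by rw [h1]; exact δ.map_one_eq_zero
      rw [Derivation.leibniz, ha] at h2
      simp only [smul_eq_mul, mul_zero, add_zero, zero_mul, smul_zero] at h2
      exact (mul_eq_zero.mp h2).resolve_left h

/-- the SDCF axiom scheme -/
def SDCFAx (δ : Derivation ℤ K K) : Prop :=
  ∀ f g : MvPolynomial ℕ K, f ≠ 0 → g ≠ 0 → sep f ≠ 0 → ordOf g < ordOf f →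
    ∃ a : K, evalD δ a f = 0 ∧ evalD δ a g ≠ 0
namespace Stmt5Aux

lemma ringHom_eqOn_supported {K : Type*} [Field K] {B : Type*} [CommSemiring B]
    (φ ψ : MvPolynomial ℕ K →+* B)
    {s : Set ℕ} (hC : ∀ a : K, φ (C a) = ψ (C a))
    (hX : ∀ i ∈ s, φ (X i) = ψ (X i))
    {p : MvPolynomial ℕ K} (hp : p ∈ supported K s) : φ p = ψ p := by
  rw [supported_eq_adjoin_X] at hp
  induction hp using Algebra.adjoin_induction with
  | mem x hx => obtain ⟨i, hi, rfl⟩ := hx; exact hX i hi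
  | algebraMap r => simpa [algebraMap_eq] using hC r
  | add x y _ _ hx hy => simp [map_add, hx, hy]
  | mul x y _ _ hx hy => simp [map_mul, hx, hy]

lemma pderiv_mem_supported {K : Type*} [Field K] {s : Set ℕ} (j : ℕ) {p : MvPolynomial ℕ K}
    (hp : p ∈ supported K s) : pderiv j p ∈ supported K s := by
  rw [supported_eq_adjoin_X] at hp
  induction hp using Algebra.adjoin_induction with
  | mem x hx =>
    obtain ⟨i, hi, rfl⟩ := hx
    by_cases h : i = j
    · subst h; rw [pderiv_X_self]; exact one_mem _
    · rw [pderiv_X_of_ne h]; exact zero_mem _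
  | algebraMap r => rw [algebraMap_eq, pderiv_C]; exact zero_mem _
  | add x y _ _ hx hy => rw [map_add]; exact add_mem hx hy
  | mul x y hx hy ihx ihy =>
    rw [← supported_eq_adjoin_X] at hx hy
    rw [pderiv_mul]
    exact add_mem (mul_mem ihx hy) (mul_mem hx ihy)

lemma D_supported {K : Type*} [Field K] (δ : Derivation ℤ K K)
    (D : Derivation ℤ (MvPolynomial ℕ K) (MvPolynomial ℕ K))
    (hDX : ∀ n : ℕ, D (X n) = X (n + 1)) (hDC : ∀ a : K, D (C a) = C (δ a))
    (m : ℕ) {p : MvPolynomial ℕ K} (hp : p ∈ supported K (Set.Iic m)) :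
    D p ∈ supported K (Set.Iic (m + 1)) := by
  rw [supported_eq_adjoin_X] at hp
  induction hp using Algebra.adjoin_induction with
  | mem x hx =>
    obtain ⟨i, hi, rfl⟩ := hx
    rw [hDX]
    exact X_mem_supported.mpr (Set.mem_Iic.mpr (by simpa using Set.mem_Iic.mp hi))
  | algebraMap r =>
    rw [algebraMap_eq, hDC, ← algebraMap_eq]
    exact Subalgebra.algebraMap_mem _ _
  | add x y _ _ hx hy => rw [map_add]; exact add_mem hx hy
  | mul x y hx hy ihx ihy =>
    rw [← supported_eq_adjoin_X] at hx hy
    have hx' := supported_mono (Set.Iic_subset_Iic.mpr (by omega : m ≤ m + 1)) hx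
    have hy' := supported_mono (Set.Iic_subset_Iic.mpr (by omega : m ≤ m + 1)) hy
    rw [Derivation.leibniz, smul_eq_mul, smul_eq_mul]
    exact add_mem (mul_mem hx' ihy) (mul_mem hy' ihx)

lemma D_sub_lead_mem {K : Type*} [Field K] (δ : Derivation ℤ K K)
    (D : Derivation ℤ (MvPolynomial ℕ K) (MvPolynomial ℕ K))
    (hDX : ∀ n : ℕ, D (X n) = X (n + 1)) (hDC : ∀ a : K, D (C a) = C (δ a))
    (m : ℕ) {p : MvPolynomial ℕ K} (hp : p ∈ supported K (Set.Iic m)) :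
    D p - pderiv m p * X (m + 1) ∈ supported K (Set.Iic m) := by
  rw [supported_eq_adjoin_X] at hp
  induction hp using Algebra.adjoin_induction with
  | mem x hx =>
    obtain ⟨i, hi, rfl⟩ := hx
    have hi' : i ≤ m := Set.mem_Iic.mp hi
    rcases eq_or_lt_of_le hi' with rfl | h
    · rw [hDX, pderiv_X_self, one_mul, sub_self]; exact zero_mem _
    · rw [hDX, pderiv_X_of_ne (by omega : i ≠ m), zero_mul, sub_zero]
      exact X_mem_supported.mpr (Set.mem_Iic.mpr (by omega))
  | algebraMap r =>
    rw [algebraMap_eq, hDC, pderiv_C, zero_mul, sub_zero, ← algebraMap_eq]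
    exact Subalgebra.algebraMap_mem _ _
  | add x y _ _ ihx ihy =>
    have h : D (x + y) - pderiv m (x + y) * X (m + 1) =
        (D x - pderiv m x * X (m + 1)) + (D y - pderiv m y * X (m + 1)) := by
      rw [map_add, map_add]; ring
    rw [h]; exact add_mem ihx ihy
  | mul x y hx hy ihx ihy =>
    rw [← supported_eq_adjoin_X] at hx hy
    have h1 : D (x * y) = x * D y + y * D x := by
      rw [Derivation.leibniz, smul_eq_mul, smul_eq_mul]
    have h2 : pderiv m (x * y) = pderiv m x * y + x * pderiv m y := pderiv_mul
    have h : D (x * y) - pderiv m (x * y) * X (m + 1) =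
        y * (D x - pderiv m x * X (m + 1)) + x * (D y - pderiv m y * X (m + 1)) := by
      rw [h1, h2]; ring
    rw [h]
    exact add_mem (mul_mem hy ihx) (mul_mem hx ihy)

lemma mem_supported_ord {K : Type*} [Field K] (p : MvPolynomial ℕ K) :
    p ∈ supported K (Set.Iic (ordOf p)) := by
  rw [mem_supported]
  intro i hi
  exact Set.mem_Iic.mpr (Finset.le_sup (f := id) (Finset.mem_coe.mp hi))

def natOptionEquiv : ℕ ≃ Option ℕ where
  toFun i := match i with | 0 => none | (j+1) => some j
  invFun o := match o with | none => 0 | some j => j + 1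
  left_inv i := by cases i <;> rfl
  right_inv o := by cases o <;> rfl

lemma optionEquivLeft_pderiv_none {K : Type*} [Field K] (q : MvPolynomial (Option ℕ) K) :
    Polynomial.derivative (optionEquivLeft K ℕ q) = optionEquivLeft K ℕ (pderiv none q) := by
  induction q using MvPolynomial.induction_on with
  | C a => simp [optionEquivLeft_C, pderiv_C]
  | add p q hp hq => simp only [map_add, hp, hq]
  | mul_X p i hp =>
    have h2 : pderiv (R := K) none (p * X i) = pderiv none p * X i + p * pderiv none (X i) :=
      pderiv_mul
    rw [map_mul, Polynomial.derivative_mul, hp, h2, map_add, map_mul, map_mul]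
    cases i with
    | none => simp [optionEquivLeft_X_none]
    | some j =>
      rw [optionEquivLeft_X_some, pderiv_X_of_ne (by simp : (some j) ≠ none)]
      simp

lemma not_dvd_sep {K : Type*} [Field K] (f : MvPolynomial ℕ K) (hs : sep f ≠ 0) :
    ¬ f ∣ sep f := by
  intro hdvd
  set n := ordOf f with hn
  let en : ℕ ≃ Option ℕ := (Equiv.swap n 0).trans natOptionEquiv
  have hen : en n = none := by
    simp only [en, Equiv.trans_apply, Equiv.swap_apply_left]
    rfl
  let e := (renameEquiv K en).trans (optionEquivLeft K ℕ)
  have hcomm : e (sep f) = Polynomial.derivative (e f) := by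
    have h1 : rename en (sep f) = pderiv none (rename en f) := by
      rw [show (none : Option ℕ) = en n from hen.symm, pderiv_rename en.injective]
      rfl
    show optionEquivLeft K ℕ (rename en (sep f)) = _
    rw [h1, ← optionEquivLeft_pderiv_none]
    rfl
  have hS : e (sep f) ≠ 0 := by
    intro h
    exact hs (by simpa using (map_eq_zero_iff e e.injective).mp h)
  have hdvd' : e f ∣ e (sep f) := map_dvd e hdvd
  rcases Nat.eq_zero_or_pos (e f).natDegree with h0 | hpos
  · obtain ⟨a, ha⟩ := Polynomial.natDegree_eq_zero.mp h0
    rw [hcomm, ← ha, Polynomial.derivative_C] at hS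
    exact hS rfl
  · have h1 : (e f).natDegree ≤ (e (sep f)).natDegree :=
      Polynomial.natDegree_le_of_dvd hdvd' hS
    have h2 : (e (sep f)).natDegree < (e f).natDegree := by
      rw [hcomm]
      exact Polynomial.natDegree_derivative_lt (by omega)
    omega

noncomputable def vAux {K B : Type*} [Field K] [CommRing B] (c : K →+* B) (w : ℕ → B) (u : B)
    (n : ℕ) (r : ℕ → MvPolynomial ℕ K) : ℕ → B
  | i =>
    if n < i then
      -(eval₂ c (fun j => if h : j < i then vAux c w u n r j else 0) (r (i - n - 1))) * u
    else w i
  termination_by i => i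
  decreasing_by exact h

lemma vAux_eq {K B : Type*} [Field K] [CommRing B] (c : K →+* B) (w : ℕ → B) (u : B)
    (n : ℕ) (r : ℕ → MvPolynomial ℕ K) (i : ℕ) :
    vAux c w u n r i =
      if n < i then
        -(eval₂ c (fun j => if h : j < i then vAux c w u n r j else 0) (r (i - n - 1))) * u
      else w i := by
  rw [vAux]

lemma key {K : Type*} [Field K] (δ : Derivation ℤ K K)
    (D : Derivation ℤ (MvPolynomial ℕ K) (MvPolynomial ℕ K))
    (hDX : ∀ n : ℕ, D (X n) = X (n + 1)) (hDC : ∀ a : K, D (C a) = C (δ a))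
    (f : MvPolynomial ℕ K) {B : Type*} [CommRing B]
    (ν : MvPolynomial ℕ K →+* B) (u : B)
    (hνf : ν f = 0) (hνs : ν (sep f) * u = 1)
    (g : MvPolynomial ℕ K) (hg : g ∈ diffIdeal D f) (hord : ordOf g ≤ ordOf f) :
    ν g = 0 := by
  classical
  obtain ⟨r, hrdef⟩ : ∃ r : ℕ → MvPolynomial ℕ K,
      ∀ k, r k = (⇑D)^[k + 1] f - sep f * X (ordOf f + k + 1) := ⟨_, fun _ => rfl⟩
  have hr_eq : ∀ k, (⇑D)^[k + 1] f = sep f * X (ordOf f + k + 1) + r k := by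
    intro k; rw [hrdef]; ring
  have hf_supp : f ∈ supported K (Set.Iic (ordOf f)) := mem_supported_ord f
  have hs_supp : sep f ∈ supported K (Set.Iic (ordOf f)) := pderiv_mem_supported _ hf_supp
  have hr_supp : ∀ k, r k ∈ supported K (Set.Iic (ordOf f + k)) := by
    intro k
    induction k with
    | zero =>
      have h := D_sub_lead_mem δ D hDX hDC (ordOf f) hf_supp
      simpa [hrdef, sep] using h
    | succ k ih =>
      have h1 : (⇑D)^[k + 1 + 1] f = D ((⇑D)^[k + 1] f) := Function.iterate_succ_apply' _ _ _
      have hrw : r (k + 1) = D (sep f) * X (ordOf f + k + 1) + D (r k) := by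
        have h2 : D (sep f * X (ordOf f + k + 1)) =
            sep f * X (ordOf f + k + 2) + X (ordOf f + k + 1) * D (sep f) := by
          rw [Derivation.leibniz, smul_eq_mul, smul_eq_mul, hDX]
        rw [hrdef, show ordOf f + (k + 1) + 1 = ordOf f + k + 2 from rfl, h1, hr_eq k,
          map_add, h2]
        ring
      rw [hrw]
      refine add_mem (mul_mem ?_ ?_) ?_
      · exact supported_mono (Set.Iic_subset_Iic.mpr (by omega))
          (D_supported δ D hDX hDC _ hs_supp)
      · exact X_mem_supported.mpr (Set.mem_Iic.mpr (by omega))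
      · exact supported_mono (Set.Iic_subset_Iic.mpr (by omega))
          (D_supported δ D hDX hDC _ ih)
  obtain ⟨v, hv⟩ : ∃ v : ℕ → B,
      v = vAux (ν.comp (C : K →+* MvPolynomial ℕ K)) (fun i => ν (X i)) u (ordOf f) r :=
    ⟨_, rfl⟩
  have hv_le : ∀ i, i ≤ ordOf f → v i = ν (X i) := by
    intro i hi
    rw [hv, vAux_eq, if_neg (not_lt.mpr hi)]
  have heval_trunc : ∀ m i : ℕ, m < i → ∀ p ∈ supported K (Set.Iic m),
      eval₂ (ν.comp (C : K →+* MvPolynomial ℕ K)) (fun j => if h : j < i then v j else 0) p =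
        eval₂Hom (ν.comp (C : K →+* MvPolynomial ℕ K)) v p := by
    intro m i hmi p hp
    exact ringHom_eqOn_supported
      (eval₂Hom (ν.comp (C : K →+* MvPolynomial ℕ K)) (fun j => if h : j < i then v j else 0))
      (eval₂Hom (ν.comp (C : K →+* MvPolynomial ℕ K)) v)
      (fun a => by simp)
      (fun j hj => by
        simp only [eval₂Hom_X']
        rw [dif_pos (lt_of_le_of_lt (Set.mem_Iic.mp hj) hmi)]) hp
  have hχν : ∀ p ∈ supported K (Set.Iic (ordOf f)),
      eval₂Hom (ν.comp (C : K →+* MvPolynomial ℕ K)) v p = ν p := by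
    intro p hp
    refine ringHom_eqOn_supported _ ν (fun a => by simp) (fun i hi => ?_) hp
    rw [eval₂Hom_X', hv_le i (Set.mem_Iic.mp hi)]
  have hvgt : ∀ k : ℕ,
      v (ordOf f + k + 1) =
        -(eval₂Hom (ν.comp (C : K →+* MvPolynomial ℕ K)) v (r k)) * u := by
    intro k
    rw [hv, vAux_eq, if_pos (by omega : ordOf f < ordOf f + k + 1), ← hv,
      show ordOf f + k + 1 - ordOf f - 1 = k by omega,
      heval_trunc (ordOf f + k) (ordOf f + k + 1) (by omega) (r k) (hr_supp k)]
  have hχD : ∀ k : ℕ, eval₂Hom (ν.comp (C : K →+* MvPolynomial ℕ K)) v ((⇑D)^[k] f) = 0 := by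
    intro k
    cases k with
    | zero =>
      simp only [Function.iterate_zero, id_eq]
      rw [hχν f hf_supp, hνf]
    | succ k =>
      rw [hr_eq k, map_add, map_mul, eval₂Hom_X', hvgt k, hχν (sep f) hs_supp]
      have h : ν (sep f) *
            (-(eval₂Hom (ν.comp (C : K →+* MvPolynomial ℕ K)) v (r k)) * u) =
          -(eval₂Hom (ν.comp (C : K →+* MvPolynomial ℕ K)) v (r k)) * (ν (sep f) * u) := by
        ring
      rw [h, hνs, mul_one, neg_add_cancel]
  have hg' : g ∈ Ideal.span (Set.range fun k : ℕ => (⇑D)^[k] f) := hg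
  have hχg : eval₂Hom (ν.comp (C : K →+* MvPolynomial ℕ K)) v g = 0 := by
    refine Submodule.span_induction ?_ ?_ ?_ ?_ hg'
    · rintro x ⟨k, rfl⟩; exact hχD k
    · exact map_zero _
    · intro x y _ _ hx hy; rw [map_add, hx, hy, add_zero]
    · intro a x _ hx; rw [smul_eq_mul, map_mul, hx, mul_zero]
  have hg_supp : g ∈ supported K (Set.Iic (ordOf f)) :=
    supported_mono (Set.Iic_subset_Iic.mpr hord) (mem_supported_ord g)
  rw [← hχν g hg_supp]
  exact hχg

end Stmt5Aux

/-- If `f` is irreducible with nonzero separant and `g ∈ [f]` has order at most `ord f`,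
then `g` lies in the ordinary ideal `(f)`. -/
theorem stmt5 {K : Type*} [Field K] (δ : Derivation ℤ K K)
    (D : Derivation ℤ (MvPolynomial ℕ K) (MvPolynomial ℕ K))
    (hDX : ∀ n : ℕ, D (X n) = X (n + 1))
    (hDC : ∀ a : K, D (C a) = C (δ a))
    (f : MvPolynomial ℕ K) (hf : Irreducible f) (hs : sep f ≠ 0)
    (g : MvPolynomial ℕ K) (hg : g ∈ diffIdeal D f) (hord : ordOf g ≤ ordOf f) :
    g ∈ Ideal.span {f} := by
  have hfp : Prime f := UniqueFactorizationMonoid.irreducible_iff_prime.mp hf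
  haveI hI : (Ideal.span {f} : Ideal (MvPolynomial ℕ K)).IsPrime :=
    (Ideal.span_singleton_prime hf.ne_zero).mpr hfp
  have hsbar : Ideal.Quotient.mk (Ideal.span {f}) (sep f) ≠ 0 := by
    rw [Ne, Ideal.Quotient.eq_zero_iff_mem, Ideal.mem_span_singleton]
    exact Stmt5Aux.not_dvd_sep f hs
  have hνg := Stmt5Aux.key δ D hDX hDC f
    ((algebraMap _ (Localization.Away (Ideal.Quotient.mk (Ideal.span {f}) (sep f)))).comp
      (Ideal.Quotient.mk (Ideal.span {f})))
    (IsLocalization.Away.invSelf (Ideal.Quotient.mk (Ideal.span {f}) (sep f)))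
    (by
      have hf0 : Ideal.Quotient.mk (Ideal.span {f}) f = 0 :=
        Ideal.Quotient.eq_zero_iff_mem.mpr (Ideal.subset_span (Set.mem_singleton f))
      rw [RingHom.comp_apply, hf0, map_zero])
    (by
      rw [RingHom.comp_apply]
      exact IsLocalization.Away.mul_invSelf _)
    g hg hord
  have hinj : Function.Injective
      (algebraMap (MvPolynomial ℕ K ⧸ (Ideal.span {f} : Ideal (MvPolynomial ℕ K)))
        (Localization.Away (Ideal.Quotient.mk (Ideal.span {f}) (sep f)))) :=
    IsLocalization.injective _ (powers_le_nonZeroDivisors_of_noZeroDivisors hsbar)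
  have hπg : Ideal.Quotient.mk (Ideal.span {f}) g = 0 := by
    apply hinj
    rw [map_zero]
    exact hνg
  exact Ideal.Quotient.eq_zero_iff_mem.mp hπg
end
end

section
/- Let (K, δ) be a differential field and f ∈ K{x} an irreducible differential polynomial with nonzero separant s_f. Then the saturated ideal [f] : s_f^∞ = {h ∈ K{x} : s_f^m · h ∈ [f] for some m ≥ 0} is a prime differential ideal of K{x}. -/
set_option synthInstance.maxHeartbeats 1000000
set_option maxHeartbeats 1000000

open MvPolynomial
noncomputable section
variable {K : Type*} [Field K]

lemma support_pderiv_subset (i : ℕ) (p : MvPolynomial ℕ K) :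
    (pderiv i p).support ⊆ p.support.image (fun m => m - Finsupp.single i 1) := by
  conv_lhs => rw [show pderiv i p = ∑ m ∈ p.support,
    monomial (m - Finsupp.single i 1) (coeff m p * m i) by
      conv_lhs => rw [as_sum p]
      rw [map_sum]; exact Finset.sum_congr rfl fun m _ => pderiv_monomial]
  refine (MvPolynomial.support_sum).trans ?_
  intro v hv
  simp only [Finset.mem_biUnion] at hv
  obtain ⟨m, hm, hv⟩ := hv
  have := support_monomial_subset hv
  simp only [Finset.mem_singleton] at this
  exact Finset.mem_image.mpr ⟨m, hm, this.symm⟩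

lemma vars_pderiv_subset (i : ℕ) (p : MvPolynomial ℕ K) :
    (pderiv i p).vars ⊆ p.vars := by
  intro v hv
  rw [mem_vars] at hv ⊢
  obtain ⟨d, hd, hvd⟩ := hv
  obtain ⟨m, hm, rfl⟩ := Finset.mem_image.mp (support_pderiv_subset i p hd)
  exact ⟨m, hm, Finsupp.support_tsub hvd⟩

lemma degreeOf_pderiv_lt' {i : ℕ} {p : MvPolynomial ℕ K} (h : 0 < p.degreeOf i) :
    (pderiv i p).degreeOf i < p.degreeOf i := by
  rw [degreeOf_lt_iff h]
  intro m hm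
  obtain ⟨m', hm', rfl⟩ := Finset.mem_image.mp (support_pderiv_subset i p hm)
  have h1 : m' i ≤ p.degreeOf i := monomial_le_degreeOf i hm'
  have h2 : ((m' - Finsupp.single i 1 : ℕ →₀ ℕ)) i = m' i - 1 := by
    rw [Finsupp.tsub_apply, Finsupp.single_eq_same]
  omega

lemma degreeOf_pos_of_pderiv_ne_zero {i : ℕ} {p : MvPolynomial ℕ K} (h : pderiv i p ≠ 0) :
    0 < p.degreeOf i := by
  by_contra hc
  push_neg at hc
  apply h
  rw [show pderiv i p = ∑ m ∈ p.support,
    monomial (m - Finsupp.single i 1) (coeff m p * m i) by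
      conv_lhs => rw [as_sum p]
      rw [map_sum]; exact Finset.sum_congr rfl fun m _ => pderiv_monomial]
  refine Finset.sum_eq_zero fun m hm => ?_
  have : m i ≤ 0 := le_trans (monomial_le_degreeOf i hm) hc
  simp [Nat.le_zero.mp this]

/-- embedding into polynomials in the `n`-th variable -/
def psi (n : ℕ) : MvPolynomial ℕ K →+* Polynomial (MvPolynomial ℕ K) :=
  eval₂Hom (Polynomial.C.comp C) (fun i => if i = n then Polynomial.X else Polynomial.C (X i))

lemma psi_C (n : ℕ) (a : K) : psi n (C a) = Polynomial.C (C a) := by simp [psi]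

lemma psi_monomial_erase (n : ℕ) (a : ℕ →₀ ℕ) (c : K) (ha : a n = 0) :
    psi n (monomial a c) = Polynomial.C (monomial a c) := by
  rw [monomial_eq, map_mul, psi_C, map_finsuppProd]
  rw [show (a.prod fun i e => psi n (X i ^ e)) = a.prod fun i e => Polynomial.C (X i ^ e) by
    refine Finsupp.prod_congr fun i hi => ?_
    have hin : i ≠ n := fun h => by
      rw [h] at hi; exact absurd ha (Finsupp.mem_support_iff.mp hi)
    rw [map_pow]
    simp [psi, hin]]
  rw [← map_finsuppProd, ← map_mul, ← monomial_eq]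

lemma psi_monomial (n : ℕ) (m : ℕ →₀ ℕ) (c : K) :
    psi n (monomial m c) = Polynomial.monomial (m n) (monomial (m.erase n) c) := by
  have h1 : monomial m c = monomial (m.erase n) c * X n ^ (m n) := by
    rw [X_pow_eq_monomial, monomial_mul, mul_one, Finsupp.erase_add_single]
  rw [h1, map_mul, psi_monomial_erase n _ c (by simp), map_pow]
  have : psi (K := K) n (X n) = Polynomial.X := by simp [psi]
  rw [this, Polynomial.C_mul_X_pow_eq_monomial]

lemma rho_psi (n : ℕ) (p : MvPolynomial ℕ K) :
    Polynomial.eval₂ (RingHom.id _) (X n) (psi n p) = p := by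
  have : (Polynomial.eval₂RingHom (RingHom.id (MvPolynomial ℕ K)) (X n)).comp (psi n)
      = RingHom.id _ := by
    apply MvPolynomial.ringHom_ext
    · intro a; simp [psi]
    · intro i
      by_cases h : i = n <;> simp [psi, h]
  exact congrArg (fun g => g p) this

lemma psi_injective (n : ℕ) : Function.Injective (psi (K := K) n) :=
  Function.LeftInverse.injective (rho_psi n)

lemma psi_coeff (n : ℕ) (p : MvPolynomial ℕ K) (k : ℕ) :
    (psi n p).coeff k
      = ∑ m ∈ p.support, if m n = k then monomial (m.erase n) (coeff m p) else 0 := by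
  conv_lhs => rw [as_sum p, map_sum]
  rw [Polynomial.finset_sum_coeff]
  refine Finset.sum_congr rfl fun m _ => ?_
  rw [psi_monomial, Polynomial.coeff_monomial]

lemma psi_natDegree (n : ℕ) (p : MvPolynomial ℕ K) (hp : p ≠ 0) :
    (psi n p).natDegree = degreeOf n p := by
  set d := degreeOf n p with hd
  apply le_antisymm
  · rw [Polynomial.natDegree_le_iff_coeff_eq_zero]
    intro k hk
    rw [psi_coeff]
    refine Finset.sum_eq_zero fun m hm => ?_
    have : m n ≤ d := monomial_le_degreeOf n hm
    rw [if_neg (by omega)]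
  · apply Polynomial.le_natDegree_of_ne_zero
    rw [psi_coeff]
    have hne : p.support.Nonempty := support_nonempty.mpr hp
    obtain ⟨m₀, hm₀, hm₀d⟩ := Finset.exists_mem_eq_sup p.support hne (fun m => m n)
    have hm₀d : m₀ n = d := by rw [hd, degreeOf_eq_sup, hm₀d]
    intro hzero
    have := congrArg (coeff (m₀.erase n)) hzero
    rw [coeff_sum, coeff_zero] at this
    rw [Finset.sum_eq_single m₀ ?_ (fun h => absurd hm₀ h)] at this
    · rw [if_pos hm₀d, coeff_monomial, if_pos rfl] at this
      exact mem_support_iff.mp hm₀ this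
    · intro m hm hmne
      by_cases h1 : m n = d
      · rw [if_pos h1, coeff_monomial, if_neg]
        intro heq
        apply hmne
        have : m.erase n + Finsupp.single n (m n) = m₀.erase n + Finsupp.single n (m₀ n) := by
          rw [heq, h1, hm₀d]
        rwa [Finsupp.erase_add_single, Finsupp.erase_add_single] at this
      · rw [if_neg h1, coeff_zero]

lemma not_dvd_pderiv (n : ℕ) (f : MvPolynomial ℕ K) (hf : Irreducible f)
    (hs : pderiv n f ≠ 0) : ¬ f ∣ pderiv n f := by
  intro hdvd
  have hd0 : 0 < degreeOf n f := degreeOf_pos_of_pderiv_ne_zero hs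
  have hψdvd : psi n f ∣ psi n (pderiv n f) := map_dvd _ hdvd
  have hψs : psi n (pderiv n f) ≠ 0 := fun h => hs (psi_injective n (h.trans (map_zero _).symm))
  have hdeg := Polynomial.natDegree_le_natDegree (Polynomial.degree_le_of_dvd hψdvd hψs)
  rw [psi_natDegree n f hf.ne_zero, psi_natDegree n _ hs] at hdeg
  exact absurd hdeg (not_le.mpr (degreeOf_pderiv_lt' hd0))

lemma D_supported (δ : Derivation ℤ K K)
    (D : Derivation ℤ (MvPolynomial ℕ K) (MvPolynomial ℕ K))
    (hDX : ∀ n : ℕ, D (X n) = X (n + 1)) (hDC : ∀ a : K, D (C a) = C (δ a))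
    (m : ℕ) (p : MvPolynomial ℕ K) (hp : p ∈ supported K ↑(Finset.range m)) :
    D p ∈ supported K ↑(Finset.range (m + 1)) := by
  have hmono : ∀ q : MvPolynomial ℕ K, q ∈ supported K ↑(Finset.range m) →
      q ∈ supported K ↑(Finset.range (m + 1)) := by
    intro q hq
    rw [mem_supported] at hq ⊢
    refine hq.trans ?_
    intro x hx
    simp only [Finset.coe_range, Set.mem_Iio] at hx ⊢
    omega
  rw [supported_eq_adjoin_X] at hp
  induction hp using Algebra.adjoin_induction with
  | mem x hx =>
    obtain ⟨i, hi, rfl⟩ := hx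
    rw [hDX]
    refine X_mem_supported.mpr ?_
    simp at hi ⊢; omega
  | algebraMap r =>
    rw [MvPolynomial.algebraMap_eq, hDC]
    exact Subalgebra.algebraMap_mem _ (δ r)
  | add x y hx hy ihx ihy => rw [map_add]; exact add_mem ihx ihy
  | mul x y hx hy ihx ihy =>
    rw [D.leibniz, smul_eq_mul, smul_eq_mul]
    rw [← supported_eq_adjoin_X] at hx hy
    exact add_mem (mul_mem (hmono _ hx) ihy) (mul_mem (hmono _ hy) ihx)

lemma D_formula (δ : Derivation ℤ K K)
    (D : Derivation ℤ (MvPolynomial ℕ K) (MvPolynomial ℕ K))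
    (hDX : ∀ n : ℕ, D (X n) = X (n + 1)) (hDC : ∀ a : K, D (C a) = C (δ a))
    (m : ℕ) (p : MvPolynomial ℕ K) (hp : p ∈ supported K ↑(Finset.range m)) :
    D p - ∑ i ∈ Finset.range m, pderiv i p * X (i + 1) ∈ supported K ↑(Finset.range m) := by
  rw [supported_eq_adjoin_X] at hp
  induction hp using Algebra.adjoin_induction with
  | mem x hx =>
    obtain ⟨j, hj, rfl⟩ := hx
    simp only [Finset.mem_coe, Finset.mem_range] at hj
    have hsum : ∑ i ∈ Finset.range m, pderiv i (X j : MvPolynomial ℕ K) * X (i + 1)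
        = X (j + 1) := by
      rw [Finset.sum_eq_single j]
      · rw [pderiv_X_self, one_mul]
      · intro i hi hne
        rw [pderiv_X_of_ne (Ne.symm hne), zero_mul]
      · intro h; exact absurd (Finset.mem_range.mpr hj) h
    rw [hDX, hsum, sub_self]
    exact zero_mem _
  | algebraMap r =>
    rw [MvPolynomial.algebraMap_eq, hDC]
    have hsum : ∑ i ∈ Finset.range m, pderiv i (C r : MvPolynomial ℕ K) * X (i + 1) = 0 := by
      refine Finset.sum_eq_zero fun i _ => ?_
      rw [pderiv_C, zero_mul]
    rw [hsum, sub_zero]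
    exact Subalgebra.algebraMap_mem _ (δ r)
  | add x y hx hy ihx ihy =>
    have hsum : ∑ i ∈ Finset.range m, pderiv i (x + y) * X (i + 1)
        = (∑ i ∈ Finset.range m, pderiv i x * X (i + 1))
          + ∑ i ∈ Finset.range m, pderiv i y * X (i + 1) := by
      rw [← Finset.sum_add_distrib]
      exact Finset.sum_congr rfl fun i _ => by rw [map_add, add_mul]
    rw [map_add, hsum]
    have : D x + D y - ((∑ i ∈ Finset.range m, pderiv i x * X (i + 1))
          + ∑ i ∈ Finset.range m, pderiv i y * X (i + 1))
        = (D x - ∑ i ∈ Finset.range m, pderiv i x * X (i + 1))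
          + (D y - ∑ i ∈ Finset.range m, pderiv i y * X (i + 1)) := by ring
    rw [this]
    exact add_mem ihx ihy
  | mul x y hx hy ihx ihy =>
    rw [← supported_eq_adjoin_X] at hx hy
    have hsum : ∑ i ∈ Finset.range m, pderiv i (x * y) * X (i + 1)
        = (∑ i ∈ Finset.range m, y * (pderiv i x * X (i + 1)))
          + ∑ i ∈ Finset.range m, x * (pderiv i y * X (i + 1)) := by
      rw [← Finset.sum_add_distrib]
      refine Finset.sum_congr rfl fun i _ => by rw [pderiv_mul]; ring
    rw [D.leibniz, smul_eq_mul, smul_eq_mul, hsum, ← Finset.mul_sum, ← Finset.mul_sum]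
    have : x * D y + y * D x - (y * ∑ i ∈ Finset.range m, pderiv i x * X (i + 1)
          + x * ∑ i ∈ Finset.range m, pderiv i y * X (i + 1))
        = x * (D y - ∑ i ∈ Finset.range m, pderiv i y * X (i + 1))
          + y * (D x - ∑ i ∈ Finset.range m, pderiv i x * X (i + 1)) := by ring
    rw [this]
    exact add_mem (mul_mem hx ihy) (mul_mem hy ihx)

lemma Dk_structure (δ : Derivation ℤ K K)
    (D : Derivation ℤ (MvPolynomial ℕ K) (MvPolynomial ℕ K))
    (hDX : ∀ n : ℕ, D (X n) = X (n + 1)) (hDC : ∀ a : K, D (C a) = C (δ a))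
    (n : ℕ) (f : MvPolynomial ℕ K) (hfv : f ∈ supported K ↑(Finset.range (n + 1))) :
    ∀ k : ℕ, 1 ≤ k →
      (⇑D)^[k] f - (pderiv n f) * X (n + k) ∈ supported K ↑(Finset.range (n + k)) := by
  have hsv : (pderiv n f : MvPolynomial ℕ K) ∈ supported K ↑(Finset.range (n + 1)) := by
    rw [mem_supported] at hfv ⊢
    exact (Finset.coe_subset.mpr (vars_pderiv_subset n f)).trans hfv
  have hmono : ∀ (a b : ℕ) (q : MvPolynomial ℕ K), a ≤ b →
      q ∈ supported K ↑(Finset.range a) → q ∈ supported K ↑(Finset.range b) := by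
    intro a b q hab hq
    rw [mem_supported] at hq ⊢
    refine hq.trans ?_
    intro x hx
    simp only [Finset.coe_range, Set.mem_Iio] at hx ⊢
    omega
  intro k hk
  induction k, hk using Nat.le_induction with
  | base =>
    have h1 := D_formula δ D hDX hDC (n + 1) f hfv
    rw [Finset.sum_range_succ] at h1
    have h2 : (⇑D)^[1] f - pderiv n f * X (n + 1)
        = (D f - (∑ i ∈ Finset.range n, pderiv i f * X (i + 1) + pderiv n f * X (n + 1)))
          + ∑ i ∈ Finset.range n, pderiv i f * X (i + 1) := by
      rw [Function.iterate_one]; ring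
    rw [h2]
    refine add_mem h1 (Subalgebra.sum_mem _ fun i hi => mul_mem ?_ ?_)
    · rw [mem_supported]
      refine (Finset.coe_subset.mpr (vars_pderiv_subset i f)).trans ?_
      rw [← mem_supported]; exact hfv
    · refine X_mem_supported.mpr ?_
      simp only [Finset.mem_range] at hi ⊢
      simp only [Finset.coe_range, Set.mem_Iio]
      omega
  | succ k hk ih =>
    set s : MvPolynomial ℕ K := pderiv n f with hs
    set T : MvPolynomial ℕ K := (⇑D)^[k] f - s * X (n + k) with hT
    have hDkf : (⇑D)^[k] f = s * X (n + k) + T := by rw [hT]; ring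
    have h4 : (⇑D)^[k+1] f - s * X (n + (k + 1)) = X (n + k) * D s + D T := by
      rw [Function.iterate_succ_apply', hDkf, map_add, D.leibniz, smul_eq_mul, smul_eq_mul,
        hDX (n + k), show n + k + 1 = n + (k + 1) by ring]
      ring
    rw [h4]
    refine add_mem (mul_mem ?_ ?_) ?_
    · refine X_mem_supported.mpr ?_
      simp only [Finset.coe_range, Set.mem_Iio]; omega
    · exact hmono (n + 2) (n + (k + 1)) _ (by omega) (D_supported δ D hDX hDC (n + 1) s hsv)
    · exact hmono (n + k + 1) (n + (k + 1)) _ (by omega)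
        (D_supported δ D hDX hDC (n + k) _ ih)

lemma supported_mono' (a b : ℕ) (q : MvPolynomial ℕ K) (hab : a ≤ b)
    (hq : q ∈ supported K ↑(Finset.range a)) : q ∈ supported K ↑(Finset.range b) := by
  rw [mem_supported] at hq ⊢
  refine hq.trans ?_
  intro x hx
  simp only [Finset.coe_range, Set.mem_Iio] at hx ⊢
  omega

lemma mem_supported_ordOf (p : MvPolynomial ℕ K) :
    p ∈ supported K ↑(Finset.range (p.vars.sup id + 1)) := by
  rw [mem_supported]
  intro x hx
  simp only [Finset.coe_range, Set.mem_Iio]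
  have := Finset.le_sup (f := id) hx
  simp only [id_eq] at this
  omega

lemma reduction (δ : Derivation ℤ K K)
    (D : Derivation ℤ (MvPolynomial ℕ K) (MvPolynomial ℕ K))
    (hDX : ∀ n : ℕ, D (X n) = X (n + 1)) (hDC : ∀ a : K, D (C a) = C (δ a))
    (n : ℕ) (f : MvPolynomial ℕ K) (hfv : f ∈ supported K ↑(Finset.range (n + 1)))
    (g : MvPolynomial ℕ K) :
    ∃ (a : ℕ) (g' : MvPolynomial ℕ K), g' ∈ supported K ↑(Finset.range (n + 1)) ∧
      (pderiv n f) ^ a * g - g' ∈ Ideal.span (Set.range fun k : ℕ => (⇑D)^[k] f) := by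
  set s : MvPolynomial ℕ K := pderiv n f with hs
  set J : Ideal (MvPolynomial ℕ K) := Ideal.span (Set.range fun k : ℕ => (⇑D)^[k] f) with hJ
  suffices H : ∀ N : ℕ, ∀ g : MvPolynomial ℕ K, g ∈ supported K ↑(Finset.range N) →
      ∃ (a : ℕ) (g' : MvPolynomial ℕ K), g' ∈ supported K ↑(Finset.range (n + 1)) ∧
        s ^ a * g - g' ∈ J by
    exact H (g.vars.sup id + 1) g (mem_supported_ordOf g)
  intro N
  induction N using Nat.strong_induction_on with
  | _ N ih =>
    intro g hgN
    by_cases hg : g ∈ supported K ↑(Finset.range (n + 1))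
    · exact ⟨0, g, hg, by simp⟩
    -- g has a variable ≥ n + 1
    have hvars_ne : g.vars.Nonempty := by
      rcases Finset.eq_empty_or_nonempty g.vars with h | h
      · exact absurd (by rw [mem_supported, h]; simp) hg
      · exact h
    obtain ⟨v, hv_mem, hv_eq⟩ := Finset.exists_mem_eq_sup g.vars hvars_ne id
    set v' : ℕ := g.vars.sup id with hv'
    have hv_eq' : v' = v := hv_eq
    have hle_v : ∀ u ∈ g.vars, u ≤ v := by
      intro u hu; rw [← hv_eq']; exact Finset.le_sup (f := id) hu
    have hv_big : n + 1 ≤ v := by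
      by_contra hc
      push_neg at hc
      apply hg
      rw [mem_supported]
      intro x hx
      simp only [Finset.coe_range, Set.mem_Iio]
      have := hle_v x hx
      omega
    have hvN : v < N := by
      rw [mem_supported] at hgN
      have := hgN hv_mem
      simpa only [Finset.coe_range, Set.mem_Iio] using this
    have hk1 : 1 ≤ v - n := by omega
    have hnk : n + (v - n) = v := by omega
    have hT := Dk_structure δ D hDX hDC n f hfv (v - n) hk1
    rw [hnk] at hT
    set T : MvPolynomial ℕ K := (⇑D)^[v - n] f - s * X v with hTdef
    have hDkf : (⇑D)^[v - n] f = s * X v + T := by rw [hTdef]; ring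
    set mk := Ideal.Quotient.mk J with hmk
    have h_rel : ∀ e : ℕ, (s * X v) ^ e - (-T) ^ e ∈ J := by
      intro e
      obtain ⟨c, hc⟩ := sub_dvd_pow_sub_pow (s * X v) (-T) e
      rw [hc, show s * X v - -T = (⇑D)^[v - n] f by rw [hDkf]; ring]
      exact Ideal.mul_mem_right _ _ (Ideal.subset_span ⟨v - n, rfl⟩)
    set d : ℕ := degreeOf v g with hd
    set g1 : MvPolynomial ℕ K := ∑ m ∈ g.support,
      s ^ (d - m v) * monomial (m.erase v) (coeff m g) * (-T) ^ (m v) with hg1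
    have h_mk : mk (s ^ d * g) = mk g1 := by
      conv_lhs => rw [as_sum g, Finset.mul_sum, map_sum]
      rw [hg1, map_sum]
      refine Finset.sum_congr rfl fun m hm => ?_
      have hmv : m v ≤ d := monomial_le_degreeOf v hm
      have hmono : monomial m (coeff m g) = monomial (m.erase v) (coeff m g) * X v ^ (m v) := by
        rw [X_pow_eq_monomial, monomial_mul, mul_one, Finsupp.erase_add_single]
      have hpow : s ^ d = s ^ (d - m v) * s ^ (m v) := by
        rw [← pow_add]; congr 1; omega
      rw [Ideal.Quotient.eq]
      have heq : s ^ d * monomial m (coeff m g)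
            - s ^ (d - m v) * monomial (m.erase v) (coeff m g) * (-T) ^ (m v)
          = (s ^ (d - m v) * monomial (m.erase v) (coeff m g))
            * ((s * X v) ^ (m v) - (-T) ^ (m v)) := by
        rw [hmono, hpow]; ring
      rw [heq]
      exact Ideal.mul_mem_left _ _ (h_rel (m v))
    have hg1_supp : g1 ∈ supported K ↑(Finset.range v) := by
      rw [hg1]
      refine Subalgebra.sum_mem _ fun m hm => ?_
      refine mul_mem (mul_mem (pow_mem ?_ _) ?_) (pow_mem (neg_mem ?_) _)
      · exact supported_mono' (n + 1) v s hv_big (by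
          rw [mem_supported]
          refine (Finset.coe_subset.mpr (vars_pderiv_subset n f)).trans ?_
          rw [← mem_supported]; exact hfv)
      · rw [mem_supported]
        intro x hx
        have hc : coeff m g ≠ 0 := mem_support_iff.mp hm
        rw [vars_monomial hc, Finsupp.support_erase] at hx
        obtain ⟨hxv, hxm⟩ := Finset.mem_erase.mp hx
        have hxle : x ≤ v := hle_v x ((mem_vars x).mpr ⟨m, hm, hxm⟩)
        simp only [Finset.coe_range, Set.mem_Iio]
        omega
      · exact hT
    obtain ⟨a₂, g', hg'supp, hg'⟩ := ih v hvN g1 hg1_supp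
    refine ⟨a₂ + d, g', hg'supp, ?_⟩
    rw [← Ideal.Quotient.eq] at hg' ⊢
    have : (s ^ (a₂ + d) * g : MvPolynomial ℕ K) = s ^ a₂ * (s ^ d * g) := by
      rw [pow_add]; ring
    rw [this, map_mul, h_mk, ← map_mul]
    exact hg'

/-- recursively defined values for the retraction into the localization -/
noncomputable def wfun {K : Type*} [Field K] (n : ℕ) (s : MvPolynomial ℕ K)
    (T : ℕ → MvPolynomial ℕ K) (i : ℕ) : Localization.Away s :=
  if i ≤ n then algebraMap (MvPolynomial ℕ K) (Localization.Away s) (X i)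
  else IsLocalization.Away.invSelf s *
    (- eval₂ ((algebraMap (MvPolynomial ℕ K) (Localization.Away s)).comp C)
      (fun j => if h : j < i then wfun n s T j else 0) (T (i - n)))
termination_by i
decreasing_by exact h


lemma wfun_le (n : ℕ) (s : MvPolynomial ℕ K) (T : ℕ → MvPolynomial ℕ K) {i : ℕ} (h : i ≤ n) :
    wfun n s T i = algebraMap (MvPolynomial ℕ K) (Localization.Away s) (X i) := by
  rw [wfun, if_pos h]

lemma wfun_gt (n : ℕ) (s : MvPolynomial ℕ K) (T : ℕ → MvPolynomial ℕ K) {i : ℕ} (h : ¬ i ≤ n) :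
    wfun n s T i = IsLocalization.Away.invSelf s *
      (- eval₂ ((algebraMap (MvPolynomial ℕ K) (Localization.Away s)).comp C)
        (fun j => if h : j < i then wfun n s T j else 0) (T (i - n))) := by
  rw [wfun, if_neg h]

lemma eval₂_wfun_supported (n : ℕ) (s : MvPolynomial ℕ K) (T : ℕ → MvPolynomial ℕ K)
    (p : MvPolynomial ℕ K) (hp : p ∈ supported K ↑(Finset.range (n + 1))) :
    eval₂ ((algebraMap (MvPolynomial ℕ K) (Localization.Away s)).comp C) (wfun n s T) p
      = algebraMap (MvPolynomial ℕ K) (Localization.Away s) p := by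
  rw [mem_supported] at hp
  have h1 : eval₂ ((algebraMap (MvPolynomial ℕ K) (Localization.Away s)).comp C) (wfun n s T) p
      = eval₂ ((algebraMap (MvPolynomial ℕ K) (Localization.Away s)).comp C)
        ((algebraMap (MvPolynomial ℕ K) (Localization.Away s)) ∘ X) p := by
    refine eval₂_congr _ _ _ ?_
    intro i c hic hc
    have hiv : i ∈ p.vars := (mem_vars i).mpr ⟨c, mem_support_iff.mpr hc, hic⟩
    have := hp hiv
    simp only [Finset.coe_range, Set.mem_Iio] at this
    exact wfun_le n s T (by omega)
  rw [h1, ← eval₂_comp_left, eval₂_eta]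

lemma eval₂_wfun_dite (n : ℕ) (s : MvPolynomial ℕ K) (T : ℕ → MvPolynomial ℕ K)
    (v : ℕ) (p : MvPolynomial ℕ K) (hp : p ∈ supported K ↑(Finset.range v)) :
    eval₂ ((algebraMap (MvPolynomial ℕ K) (Localization.Away s)).comp C)
      (fun j => if h : j < v then wfun n s T j else 0) p
      = eval₂ ((algebraMap (MvPolynomial ℕ K) (Localization.Away s)).comp C) (wfun n s T) p := by
  rw [mem_supported] at hp
  refine eval₂_congr _ _ _ ?_
  intro i c hic hc
  have hiv : i ∈ p.vars := (mem_vars i).mpr ⟨c, mem_support_iff.mpr hc, hic⟩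
  have := hp hiv
  simp only [Finset.coe_range, Set.mem_Iio] at this
  rw [dif_pos this]

lemma eval₂_wfun_Dk (δ : Derivation ℤ K K)
    (D : Derivation ℤ (MvPolynomial ℕ K) (MvPolynomial ℕ K))
    (hDX : ∀ n : ℕ, D (X n) = X (n + 1)) (hDC : ∀ a : K, D (C a) = C (δ a))
    (n : ℕ) (f : MvPolynomial ℕ K) (hfv : f ∈ supported K ↑(Finset.range (n + 1)))
    (k : ℕ) (hk : 1 ≤ k) :
    eval₂ ((algebraMap (MvPolynomial ℕ K) (Localization.Away (pderiv n f))).comp C)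
      (wfun n (pderiv n f) (fun j => (⇑D)^[j] f - pderiv n f * X (n + j)))
      ((⇑D)^[k] f) = 0 := by
  set s : MvPolynomial ℕ K := pderiv n f with hs
  set T : ℕ → MvPolynomial ℕ K := fun j => (⇑D)^[j] f - s * X (n + j) with hTdef
  set cK := ((algebraMap (MvPolynomial ℕ K) (Localization.Away s)).comp C) with hcK
  have hTk : T k ∈ supported K ↑(Finset.range (n + k)) := Dk_structure δ D hDX hDC n f hfv k hk
  have hsplit : (⇑D)^[k] f = s * X (n + k) + T k := by rw [hTdef]; ring
  have hsv : s ∈ supported K ↑(Finset.range (n + 1)) := by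
    rw [mem_supported]
    refine (Finset.coe_subset.mpr (vars_pderiv_subset n f)).trans ?_
    rw [← mem_supported]; exact hfv
  rw [hsplit, eval₂_add, eval₂_mul, eval₂_X]
  rw [eval₂_wfun_supported n s T s hsv]
  rw [wfun_gt n s T (show ¬ n + k ≤ n by omega)]
  rw [show n + k - n = k from by omega]
  rw [eval₂_wfun_dite n s T (n + k) (T k) hTk]
  set E := eval₂ cK (wfun n s T) (T k) with hE
  rw [show algebraMap (MvPolynomial ℕ K) (Localization.Away s) s *
      (IsLocalization.Away.invSelf s * -E)
      = (algebraMap (MvPolynomial ℕ K) (Localization.Away s) s *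
        IsLocalization.Away.invSelf s) * -E from by ring]
  rw [IsLocalization.Away.mul_invSelf]
  ring

lemma key_lemma (δ : Derivation ℤ K K)
    (D : Derivation ℤ (MvPolynomial ℕ K) (MvPolynomial ℕ K))
    (hDX : ∀ n : ℕ, D (X n) = X (n + 1)) (hDC : ∀ a : K, D (C a) = C (δ a))
    (n : ℕ) (f : MvPolynomial ℕ K) (hfv : f ∈ supported K ↑(Finset.range (n + 1)))
    (hs : pderiv n f ≠ 0) (hf : Irreducible f)
    (q : MvPolynomial ℕ K) (hq : q ∈ supported K ↑(Finset.range (n + 1))) (m : ℕ)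
    (hmem : (pderiv n f) ^ m * q ∈ Ideal.span (Set.range fun k : ℕ => (⇑D)^[k] f)) :
    f ∣ q := by
  set s : MvPolynomial ℕ K := pderiv n f with hs'
  set T : ℕ → MvPolynomial ℕ K := fun j => (⇑D)^[j] f - s * X (n + j) with hTdef
  set Loc := Localization.Away s with hLoc
  set cK := ((algebraMap (MvPolynomial ℕ K) Loc).comp C) with hcK
  set φ : MvPolynomial ℕ K →+* Loc := eval₂Hom cK (wfun n s T) with hφ
  have hφ_eval : ∀ p, φ p = eval₂ cK (wfun n s T) p := fun p => rfl
  have h1 : φ (s ^ m * q) ∈ Ideal.map φ (Ideal.span (Set.range fun k : ℕ => (⇑D)^[k] f)) :=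
    Ideal.mem_map_of_mem φ hmem
  rw [Ideal.map_span] at h1
  have h2 : Ideal.span (⇑φ '' Set.range fun k : ℕ => (⇑D)^[k] f)
      ≤ Ideal.span {algebraMap (MvPolynomial ℕ K) Loc f} := by
    rw [Ideal.span_le]
    rintro x ⟨y, ⟨k, rfl⟩, rfl⟩
    rcases Nat.eq_zero_or_pos k with hk | hk
    · subst hk
      have : φ ((⇑D)^[0] f) = algebraMap (MvPolynomial ℕ K) Loc f := by
        rw [hφ_eval, Function.iterate_zero_apply, eval₂_wfun_supported n s T f hfv]
      rw [this]
      exact Ideal.subset_span rfl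
    · have : φ ((⇑D)^[k] f) = 0 := by
        rw [hφ_eval]
        exact eval₂_wfun_Dk δ D hDX hDC n f hfv k hk
      rw [this]
      exact (Ideal.span _).zero_mem
  have h3 : algebraMap (MvPolynomial ℕ K) Loc (s ^ m * q)
      ∈ Ideal.span {algebraMap (MvPolynomial ℕ K) Loc f} := by
    have : φ (s ^ m * q) = algebraMap (MvPolynomial ℕ K) Loc (s ^ m * q) := by
      rw [hφ_eval]
      refine eval₂_wfun_supported n s T _ (mul_mem (pow_mem ?_ m) hq)
      rw [mem_supported]
      refine (Finset.coe_subset.mpr (vars_pderiv_subset n f)).trans ?_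
      rw [← mem_supported]; exact hfv
    rw [← this]
    exact h2 h1
  rw [Ideal.mem_span_singleton] at h3
  obtain ⟨c, hc⟩ := h3
  set e : ℕ := (IsLocalization.Away.sec s c).2 with he
  set r : MvPolynomial ℕ K := (IsLocalization.Away.sec s c).1 with hr
  have hsec := IsLocalization.Away.sec_spec (x := s) c
  have h4 : algebraMap (MvPolynomial ℕ K) Loc (s ^ m * q * s ^ e)
      = algebraMap (MvPolynomial ℕ K) Loc (f * r) := by
    rw [map_mul, hc, map_mul, mul_assoc, hsec]
  have hinj : Function.Injective (algebraMap (MvPolynomial ℕ K) Loc) :=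
    IsLocalization.injective Loc (powers_le_nonZeroDivisors_of_noZeroDivisors hs)
  have h5 : s ^ m * q * s ^ e = f * r := hinj h4
  have h6 : s ^ (m + e) * q = f * r := by rw [← h5, pow_add]; ring
  have hprime : Prime f := UniqueFactorizationMonoid.irreducible_iff_prime.mp hf
  have hnds : ¬ f ∣ s := not_dvd_pderiv n f hf hs
  have hdvd : f ∣ s ^ (m + e) * q := ⟨r, h6⟩
  exact (hprime.2.2 _ _ hdvd).resolve_left fun h => hnds (hprime.dvd_of_dvd_pow h)


/-- If `f` is irreducible with nonzero separant `s_f`, then `[f] : s_f^∞` is a prime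
differential ideal of `K{x}`. -/
theorem stmt6 {K : Type*} [Field K] (δ : Derivation ℤ K K)
    (D : Derivation ℤ (MvPolynomial ℕ K) (MvPolynomial ℕ K))
    (hDX : ∀ n : ℕ, D (X n) = X (n + 1))
    (hDC : ∀ a : K, D (C a) = C (δ a))
    (f : MvPolynomial ℕ K) (hf : Irreducible f) (hs : sep f ≠ 0) :
    (saturation (diffIdeal D f) (sep f)).IsPrime ∧
      ∀ h ∈ saturation (diffIdeal D f) (sep f),
        D h ∈ saturation (diffIdeal D f) (sep f) := by
  set n := ordOf f with hn
  have hsep : sep f = pderiv n f := rfl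
  set J := diffIdeal D f with hJ
  have hJspan : J = Ideal.span (Set.range fun k : ℕ => (⇑D)^[k] f) := rfl
  have hfv : f ∈ supported K ↑(Finset.range (n + 1)) := mem_supported_ordOf f
  have hs' : pderiv n f ≠ 0 := hsep ▸ hs
  have hsat_mem : ∀ x, x ∈ saturation J (sep f) ↔ ∃ m : ℕ, (pderiv n f) ^ m * x ∈ J :=
    fun x => Iff.rfl
  have hfJ : f ∈ J := hJspan ▸ Ideal.subset_span ⟨0, rfl⟩
  -- J is closed under D
  have hJD : ∀ x ∈ J, D x ∈ J := by
    intro x hx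
    rw [hJspan] at hx ⊢
    induction hx using Submodule.span_induction with
    | mem y hy =>
      obtain ⟨k, rfl⟩ := hy
      exact Ideal.subset_span ⟨k + 1, Function.iterate_succ_apply' (⇑D) k f⟩
    | zero => simpa using (Ideal.span _).zero_mem
    | add a b ha hb iha ihb => rw [map_add]; exact add_mem iha ihb
    | smul r a ha iha =>
      rw [smul_eq_mul, D.leibniz, smul_eq_mul, smul_eq_mul]
      exact add_mem (Ideal.mul_mem_left _ _ iha) (Ideal.mul_mem_right _ _ ha)
  constructor
  · rw [Ideal.isPrime_iff]
    constructor
    · -- not top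
      intro htop
      have h1 : (1 : MvPolynomial ℕ K) ∈ saturation J (sep f) := htop ▸ Submodule.mem_top
      obtain ⟨m, hm⟩ := (hsat_mem 1).mp h1
      rw [mul_one, hJspan] at hm
      have : f ∣ (1 : MvPolynomial ℕ K) := by
        have := key_lemma δ D hDX hDC n f hfv hs' hf 1 (one_mem _) m (by rwa [mul_one])
        exact this
      exact hf.not_isUnit (isUnit_of_dvd_one this)
    · intro x y hxy
      obtain ⟨m, hm⟩ := (hsat_mem (x * y)).mp hxy
      obtain ⟨a, x', hx's, hx'⟩ := reduction δ D hDX hDC n f hfv x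
      obtain ⟨b, y', hy's, hy'⟩ := reduction δ D hDX hDC n f hfv y
      rw [← hJspan] at hx' hy'
      set mk := Ideal.Quotient.mk J with hmk
      have hmkx : mk ((pderiv n f) ^ a * x) = mk x' := Ideal.Quotient.eq.mpr hx'
      have hmky : mk ((pderiv n f) ^ b * y) = mk y' := Ideal.Quotient.eq.mpr hy'
      have hmkxy : mk ((pderiv n f) ^ m * (x * y)) = 0 :=
        Ideal.Quotient.eq_zero_iff_mem.mpr hm
      have hprod : (pderiv n f) ^ m * (x' * y') ∈ J := by
        rw [← Ideal.Quotient.eq_zero_iff_mem, ← hmk]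
        have : mk ((pderiv n f) ^ m * (x' * y'))
            = mk ((pderiv n f) ^ m) * mk x' * mk y' := by
          rw [← map_mul, ← map_mul]; ring_nf
        rw [this, ← hmkx, ← hmky]
        have : mk ((pderiv n f) ^ m) * mk ((pderiv n f) ^ a * x) * mk ((pderiv n f) ^ b * y)
            = mk ((pderiv n f) ^ (a + b)) * mk ((pderiv n f) ^ m * (x * y)) := by
          rw [← map_mul, ← map_mul, ← map_mul]
          congr 1
          rw [pow_add]; ring
        rw [this, hmkxy, mul_zero]
      have hdvd : f ∣ x' * y' := by
        refine key_lemma δ D hDX hDC n f hfv hs' hf (x' * y') (mul_mem hx's hy's) m ?_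
        rw [← hJspan]; exact hprod
      have hprime : Prime f := UniqueFactorizationMonoid.irreducible_iff_prime.mp hf
      rcases hprime.2.2 _ _ hdvd with hfx | hfy
      · left
        refine (hsat_mem x).mpr ⟨a, ?_⟩
        obtain ⟨c, rfl⟩ := hfx
        have : (pderiv n f) ^ a * x = f * c + ((pderiv n f) ^ a * x - f * c) := by ring
        rw [this]
        exact add_mem (Ideal.mul_mem_right _ _ hfJ) hx'
      · right
        refine (hsat_mem y).mpr ⟨b, ?_⟩
        obtain ⟨c, rfl⟩ := hfy
        have : (pderiv n f) ^ b * y = f * c + ((pderiv n f) ^ b * y - f * c) := by ring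
        rw [this]
        exact add_mem (Ideal.mul_mem_right _ _ hfJ) hy'
  · -- differential
    intro h hh
    obtain ⟨m, hm⟩ := (hsat_mem h).mp hh
    refine (hsat_mem (D h)).mpr ⟨m + 1, ?_⟩
    set s : MvPolynomial ℕ K := pderiv n f
    have h1 : D (s ^ m * h) ∈ J := hJD _ hm
    have h2 : s ^ (m + 1) * D h = s * D (s ^ m * h) - s * (h * D (s ^ m)) := by
      rw [D.leibniz, smul_eq_mul, smul_eq_mul]; ring
    rw [h2]
    refine sub_mem (Ideal.mul_mem_left _ _ h1) ?_
    rcases Nat.eq_zero_or_pos m with rfl | hm1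
    · rw [pow_zero, D.map_one_eq_zero]
      simp
    · have hD : D (s ^ m) = m • (s ^ (m - 1) * D s) := by
        have h3 := D.leibniz_pow (a := s) m
        rwa [smul_eq_mul] at h3
      have hsm : s * s ^ (m - 1) = s ^ m := by
        rw [← pow_succ']
        congr 1
        omega
      have heq : s * (h * D (s ^ m)) = (m : MvPolynomial ℕ K) * (D s * (s ^ m * h)) := by
        rw [hD, nsmul_eq_mul, ← hsm]; ring
      rw [heq]
      exact Ideal.mul_mem_left _ _ (Ideal.mul_mem_left _ _ hm)
end
end

section
/- Let (K, δ) be a differential field, P a nonzero prime differential ideal of K{x}, and f an irreducible element of P of minimal rank. If the separant of f is zero, then all partial derivatives ∂f/∂xᵢ for i = 0, ..., ord f belong to P. -/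
set_option synthInstance.maxHeartbeats 1000000
set_option maxHeartbeats 1000000

open MvPolynomial
noncomputable section
variable {K : Type*} [Field K]

section AuxLemmas

theorem aux_pseudoDiv {R : Type*} [CommRing R] [IsDomain R] (F : Polynomial R) (hF : 0 < F.degree) :
    ∀ (N : ℕ) (g : Polynomial R), g.natDegree ≤ N →
      ∃ (m : ℕ) (q r : Polynomial R), Polynomial.C F.leadingCoeff ^ m * g = q * F + r ∧ r.degree < F.degree := by
  intro N
  induction N using Nat.strong_induction_on with
  | _ N IH =>
    intro g hg
    by_cases hlt : g.degree < F.degree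
    · exact ⟨0, 0, g, by simp, hlt⟩
    have hF0 : F ≠ 0 := fun h => by simp [h] at hF
    have hg0 : g ≠ 0 := by
      rintro rfl
      exact hlt (lt_of_le_of_lt bot_le hF)
    have hge : F.degree ≤ g.degree := le_of_not_gt hlt
    have hnge : F.natDegree ≤ g.natDegree := Polynomial.natDegree_le_natDegree hge
    have hlF : F.leadingCoeff ≠ 0 := Polynomial.leadingCoeff_ne_zero.2 hF0
    have hlg : g.leadingCoeff ≠ 0 := Polynomial.leadingCoeff_ne_zero.2 hg0
    set k := g.natDegree - F.natDegree with hk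
    set g' : Polynomial R := Polynomial.C F.leadingCoeff * g - Polynomial.C g.leadingCoeff * Polynomial.X ^ k * F with hg'
    have hdq : (Polynomial.C g.leadingCoeff * Polynomial.X ^ k * F).degree = g.degree := by
      rw [Polynomial.degree_mul, Polynomial.degree_mul, Polynomial.degree_C hlg, Polynomial.degree_X_pow, Polynomial.degree_eq_natDegree hF0,
        Polynomial.degree_eq_natDegree hg0]
      rw [zero_add, ← Nat.cast_add, Nat.sub_add_cancel hnge]
    have hdp : (Polynomial.C F.leadingCoeff * g).degree = g.degree := by
      rw [Polynomial.degree_mul, Polynomial.degree_C hlF, zero_add]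
    have hp0 : Polynomial.C F.leadingCoeff * g ≠ 0 := mul_ne_zero (fun h => hlF (by simpa using h)) hg0
    have hlc : (Polynomial.C F.leadingCoeff * g).leadingCoeff
        = (Polynomial.C g.leadingCoeff * Polynomial.X ^ k * F).leadingCoeff := by
      simp only [Polynomial.leadingCoeff_mul, Polynomial.leadingCoeff_C, Polynomial.leadingCoeff_X_pow]; ring
    have hdlt : g'.degree < g.degree := by
      rw [hg']
      calc (Polynomial.C F.leadingCoeff * g - Polynomial.C g.leadingCoeff * Polynomial.X ^ k * F).degree
          < (Polynomial.C F.leadingCoeff * g).degree := Polynomial.degree_sub_lt (hdp.trans hdq.symm) hp0 hlc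
        _ = g.degree := hdp
    by_cases hg'0 : g' = 0
    · refine ⟨1, Polynomial.C g.leadingCoeff * Polynomial.X ^ k, 0, ?_, lt_of_le_of_lt bot_le hF⟩
      have h0 : Polynomial.C F.leadingCoeff * g - Polynomial.C g.leadingCoeff * Polynomial.X ^ k * F = 0 := hg'0
      rw [pow_one]
      linear_combination h0
    · have hnlt : g'.natDegree < g.natDegree := Polynomial.natDegree_lt_natDegree hg'0 hdlt
      obtain ⟨m, q, r, heq, hr⟩ := IH g'.natDegree (lt_of_lt_of_le hnlt hg) g' le_rfl
      refine ⟨m + 1, q + Polynomial.C F.leadingCoeff ^ m * Polynomial.C g.leadingCoeff * Polynomial.X ^ k, r, ?_, hr⟩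
      have hgg : g' = Polynomial.C F.leadingCoeff * g - Polynomial.C g.leadingCoeff * Polynomial.X ^ k * F := rfl
      rw [pow_succ]
      linear_combination heq + (Polynomial.C F.leadingCoeff ^ m : Polynomial R) * hgg

theorem aux_pderiv_comm_D {K : Type*} [Field K] (δ : Derivation ℤ K K)
    (D : Derivation ℤ (MvPolynomial ℕ K) (MvPolynomial ℕ K))
    (hDX : ∀ n : ℕ, D (X n) = X (n + 1)) (hDC : ∀ a : K, D (C a) = C (δ a)) (j : ℕ)
    (g : MvPolynomial ℕ K) :
    pderiv (j + 1) (D g) = D (pderiv (j + 1) g) + pderiv j g := by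
  induction g using MvPolynomial.induction_on with
  | C a => simp [hDC]
  | add p q hp hq => simp only [map_add, hp, hq]; abel
  | mul_X p i hp =>
    have hD : D (p * X i) = D p * X i + p * X (i + 1) := by
      rw [Derivation.leibniz, smul_eq_mul, smul_eq_mul, hDX]; ring
    rw [hD, map_add, pderiv_mul, pderiv_mul, pderiv_mul, pderiv_mul, hp]
    by_cases h1 : i = j + 1
    · subst h1
      rw [pderiv_X, pderiv_X, pderiv_X, Pi.single_eq_same,
        Pi.single_eq_of_ne (by omega : j + 1 + 1 ≠ j + 1),
        Pi.single_eq_of_ne (by omega : j + 1 ≠ j)]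
      simp only [mul_one, mul_zero, add_zero, map_add]
      rw [Derivation.leibniz, smul_eq_mul, smul_eq_mul, hDX]; ring
    · by_cases h2 : i = j
      · subst h2
        rw [pderiv_X, pderiv_X, pderiv_X, Pi.single_eq_same, Pi.single_eq_same,
          Pi.single_eq_of_ne (by omega : i ≠ i + 1)]
        simp only [mul_one, mul_zero, add_zero]
        rw [Derivation.leibniz, smul_eq_mul, smul_eq_mul, hDX]; ring
      · rw [pderiv_X, pderiv_X, pderiv_X, Pi.single_eq_of_ne h1,
          Pi.single_eq_of_ne (by omega : i + 1 ≠ j + 1), Pi.single_eq_of_ne h2]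
        simp only [mul_zero, add_zero]
        rw [Derivation.leibniz, smul_eq_mul, smul_eq_mul, hDX]; ring

theorem aux_vars_monomial_subset {K : Type*} [Field K] {s : ℕ →₀ ℕ} {a : K} :
    (monomial s a).vars ⊆ s.support := by
  by_cases h : a = 0
  · simp [h]
  · rw [vars_monomial h]

theorem aux_pderiv_rep {K : Type*} [Field K] (i : ℕ) (g : MvPolynomial ℕ K) :
    pderiv i g = ∑ s ∈ g.support, monomial (s - Finsupp.single i 1) (coeff s g * s i) := by
  conv_lhs => rw [g.as_sum]
  rw [map_sum]
  exact Finset.sum_congr rfl fun s _ => pderiv_monomial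

theorem aux_vars_pderiv {K : Type*} [Field K] (i : ℕ) (g : MvPolynomial ℕ K) :
    (pderiv i g).vars ⊆ g.vars := by
  have hrep := aux_pderiv_rep i g
  intro j hj
  rw [hrep] at hj
  obtain ⟨s, hs, hj⟩ := Finset.mem_biUnion.mp (vars_sum_subset _ _ hj)
  have hj2 : j ∈ s.support := Finsupp.support_tsub (aux_vars_monomial_subset hj)
  exact (mem_vars j).mpr ⟨s, hs, hj2⟩

theorem aux_D_apply_eq {K : Type*} [Field K] (δ : Derivation ℤ K K)
    (D : Derivation ℤ (MvPolynomial ℕ K) (MvPolynomial ℕ K))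
    (hDX : ∀ n : ℕ, D (X n) = X (n + 1)) (hDC : ∀ a : K, D (C a) = C (δ a))
    (N : ℕ) (g : MvPolynomial ℕ K) (hg : g.vars ⊆ Finset.range (N + 1)) :
    D g = (∑ i ∈ Finset.range (N + 1), pderiv i g * X (i + 1)) +
      ∑ s ∈ g.support, monomial s (δ (coeff s g)) := by
  classical
  set Dv : Derivation ℤ (MvPolynomial ℕ K) (MvPolynomial ℕ K) :=
    (mkDerivation K fun i => X (i + 1)).restrictScalars ℤ with hDv
  set E : Derivation ℤ (MvPolynomial ℕ K) (MvPolynomial ℕ K) := D - Dv with hE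
  have hDvX : ∀ i, Dv (X i) = X (i + 1) := fun i => by
    simp [hDv, Derivation.restrictScalars_apply, mkDerivation_X]
  have hDvC : ∀ a : K, Dv (C a) = 0 := fun a => by
    have h : (C a : MvPolynomial ℕ K) = algebraMap K _ a := rfl
    rw [hDv, Derivation.restrictScalars_apply, h, Derivation.map_algebraMap]
  have hEX : ∀ i, E (X i) = 0 := fun i => by
    simp [hE, Derivation.sub_apply, hDX, hDvX]
  have hEC : ∀ a : K, E (C a) = C (δ a) := fun a => by
    simp [hE, Derivation.sub_apply, hDC, hDvC]
  have hEmono : ∀ (s : ℕ →₀ ℕ) (a : K), E (monomial s a) = monomial s (δ a) := by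
    intro s
    induction s using Finsupp.induction with
    | zero => intro a; simpa [monomial_zero'] using hEC a
    | single_add i e s hi he ih =>
      intro a
      rw [monomial_single_add, Derivation.leibniz, smul_eq_mul, smul_eq_mul]
      have hXpow : E ((X i : MvPolynomial ℕ K) ^ e) = 0 := by
        rw [Derivation.leibniz_pow, hEX]
        simp
      rw [hXpow, mul_zero, add_zero, ih, ← monomial_single_add]
  have hDvmono : ∀ (s : ℕ →₀ ℕ) (a : K), s.support ⊆ Finset.range (N + 1) →
      Dv (monomial s a) = ∑ i ∈ Finset.range (N + 1),
        monomial (s - Finsupp.single i 1) (a * s i) * X (i + 1) := by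
    intro s a hs
    rw [hDv, Derivation.restrictScalars_apply, mkDerivation_monomial]
    rw [Finsupp.sum]
    rw [Finset.smul_sum]
    rw [← Finset.sum_subset hs (fun i _ hi => by
      simp [Finsupp.notMem_support_iff.mp hi])]
    refine Finset.sum_congr rfl fun i _ => ?_
    rw [smul_eq_mul, ← smul_mul_assoc, smul_monomial, smul_eq_mul]
  have hrep1 : D g = Dv g + E g := by rw [hE]; simp [Derivation.sub_apply]
  rw [hrep1]
  congr 1
  · conv_lhs => rw [g.as_sum]
    rw [map_sum]
    have h1 : ∀ s ∈ g.support, Dv (monomial s (coeff s g)) = ∑ i ∈ Finset.range (N + 1),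
        monomial (s - Finsupp.single i 1) (coeff s g * s i) * X (i + 1) := fun s hs =>
      hDvmono s _ (fun j hj => hg ((mem_vars j).mpr ⟨s, hs, hj⟩))
    rw [Finset.sum_congr rfl h1, Finset.sum_comm]
    refine Finset.sum_congr rfl fun i _ => ?_
    rw [aux_pderiv_rep, Finset.sum_mul]
  · conv_lhs => rw [g.as_sum]
    rw [map_sum]
    exact Finset.sum_congr rfl fun s _ => hEmono s _

noncomputable def auxT {K : Type*} [Field K] (n : ℕ) :
    MvPolynomial ℕ K →+* Polynomial (MvPolynomial ℕ K) :=
  (eval₂Hom (Polynomial.C.comp MvPolynomial.C)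
    fun m => if m = n then Polynomial.X else Polynomial.C (X (if m < n then m else m - 1)))

noncomputable def auxU {K : Type*} [Field K] (n : ℕ) :
    Polynomial (MvPolynomial ℕ K) →+* MvPolynomial ℕ K :=
  Polynomial.eval₂RingHom
    (MvPolynomial.rename fun j : ℕ => if j < n then j else j + 1).toRingHom (X n)

theorem auxU_C {K : Type*} [Field K] (n : ℕ) (b : MvPolynomial ℕ K) :
    auxU n (Polynomial.C b) = rename (fun j : ℕ => if j < n then j else j + 1) b := by
  simp [auxU]

theorem auxU_auxT {K : Type*} [Field K] (n : ℕ) (g : MvPolynomial ℕ K) :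
    auxU n (auxT n g) = g := by
  induction g using MvPolynomial.induction_on with
  | C a => simp [auxT, auxU]
  | add p q hp hq => simp only [map_add, hp, hq]
  | mul_X p m hp =>
    rw [map_mul, map_mul, hp]
    congr 1
    by_cases h : m = n
    · subst h; simp [auxT, auxU]
    · simp only [auxT, auxU, eval₂Hom_X', if_neg h, Polynomial.coe_eval₂RingHom,
        Polynomial.eval₂_C, AlgHom.toRingHom_eq_coe, AlgHom.coe_toRingHom, rename_X]
      congr 1
      split_ifs <;> omega

theorem auxT_coeff_mem {K : Type*} [Field K] (n : ℕ) (g : MvPolynomial ℕ K)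
    (hg : g.vars ⊆ Finset.range (n + 1)) (k : ℕ) :
    (auxT n g).coeff k ∈ supported K (↑(Finset.range n) : Set ℕ) := by
  classical
  set S := supported K (↑(Finset.range n) : Set ℕ) with hS
  set Q : Polynomial (MvPolynomial ℕ K) → Prop := fun p => ∀ k, p.coeff k ∈ S with hQ
  have hQmul : ∀ p q, Q p → Q q → Q (p * q) := fun p q hp hq k => by
    rw [Polynomial.coeff_mul]
    exact Subalgebra.sum_mem _ fun x _ => mul_mem (hp _) (hq _)
  have hCmem : ∀ a : K, (C a : MvPolynomial ℕ K) ∈ S := fun a => by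
    rw [hS, mem_supported, vars_C]
    simp
  have hQone : Q 1 := fun k => by
    rw [Polynomial.coeff_one]
    split
    · exact one_mem S
    · exact zero_mem S
  suffices h : Q (auxT n g) from h k
  rw [g.as_sum, map_sum]
  intro k
  rw [Polynomial.finset_sum_coeff]
  refine Subalgebra.sum_mem _ fun s hs => ?_
  suffices h : Q (auxT n (monomial s (coeff s g))) from h k
  have hsupp : s.support ⊆ Finset.range (n + 1) := fun j hj =>
    hg ((mem_vars j).mpr ⟨s, hs, hj⟩)
  show Q (eval₂Hom _ _ (monomial s (coeff s g)))
  rw [eval₂Hom_monomial]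
  refine hQmul _ _ (fun k => ?_) ?_
  · rw [RingHom.comp_apply, Polynomial.coeff_C]
    split
    · exact hCmem _
    · exact zero_mem S
  · rw [Finsupp.prod]
    refine Finset.prod_induction _ Q hQmul hQone fun i hi => ?_
    have hin : i < n + 1 := Finset.mem_range.mp (hsupp hi)
    by_cases h : i = n
    · subst h
      rw [if_pos rfl]
      intro k
      rw [Polynomial.coeff_X_pow]
      split
      · exact one_mem S
      · exact zero_mem S
    · rw [if_neg h, ← Polynomial.C_pow]
      intro k
      rw [Polynomial.coeff_C]
      have hXS : (X (if i < n then i else i - 1) : MvPolynomial ℕ K) ^ s i ∈ S := by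
        refine pow_mem ?_ _
        rw [hS, X_mem_supported]
        simp only [Finset.coe_range, Set.mem_Iio]
        split_ifs <;> omega
      split
      · exact hXS
      · exact zero_mem S

theorem auxT_natDegree_le {K : Type*} [Field K] (n : ℕ) (g : MvPolynomial ℕ K) :
    (auxT n g).natDegree ≤ degreeOf n g := by
  classical
  conv_lhs => rw [g.as_sum, map_sum]
  refine Polynomial.natDegree_sum_le_of_forall_le _ _ fun s hs => ?_
  show ((auxT n : MvPolynomial ℕ K →+* _) (monomial s (coeff s g))).natDegree ≤ _
  rw [show (auxT n : MvPolynomial ℕ K →+* Polynomial (MvPolynomial ℕ K)) = eval₂Hom _ _ from rfl,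
    eval₂Hom_monomial]
  refine le_trans Polynomial.natDegree_mul_le ?_
  rw [RingHom.comp_apply, Polynomial.natDegree_C, zero_add, Finsupp.prod]
  refine le_trans (Polynomial.natDegree_prod_le _ _) ?_
  have hterm : ∀ i ∈ s.support,
      ((if i = n then Polynomial.X else
        Polynomial.C (X (if i < n then i else i - 1)) :
          Polynomial (MvPolynomial ℕ K)) ^ s i).natDegree
      ≤ if i = n then s i else 0 := by
    intro i _
    by_cases h : i = n
    · subst h; simp [Polynomial.natDegree_X_pow]
    · rw [if_neg h, if_neg h, ← Polynomial.C_pow, Polynomial.natDegree_C]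
  refine le_trans (Finset.sum_le_sum hterm) ?_
  rw [Finset.sum_ite_eq' s.support n (fun i => s i)]
  split
  · rw [degreeOf_eq_sup]
    exact Finset.le_sup (f := fun t : ℕ →₀ ℕ => t n) hs
  · exact Nat.zero_le _

theorem aux_degreeOf_eq_zero_of_not_mem_vars {K : Type*} [Field K] {j : ℕ}
    {c : MvPolynomial ℕ K} (h : j ∉ c.vars) : degreeOf j c = 0 := by
  rw [degreeOf_eq_sup]
  refine le_antisymm (Finset.sup_le fun s hs => ?_) (Nat.zero_le _)
  by_contra hc
  exact h ((mem_vars j).mpr ⟨s, hs, Finsupp.mem_support_iff.mpr (fun h0 => hc (by omega))⟩)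

theorem aux_degreeOf_auxU_le {K : Type*} [Field K] (n : ℕ)
    (p : Polynomial (MvPolynomial ℕ K)) : degreeOf n (auxU n p) ≤ p.natDegree := by
  classical
  show degreeOf n (Polynomial.eval₂ _ _ p) ≤ _
  rw [Polynomial.eval₂_eq_sum, Polynomial.sum]
  have hsum : ∀ (t : Finset ℕ) (h : ℕ → MvPolynomial ℕ K) (b : ℕ),
      (∀ i ∈ t, degreeOf n (h i) ≤ b) → degreeOf n (∑ i ∈ t, h i) ≤ b := by
    intro t h b
    induction t using Finset.induction_on with
    | empty => intro _; simp
    | insert x t' hx ih =>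
      intro hb
      rw [Finset.sum_insert hx]
      refine le_trans (degreeOf_add_le _ _ _) (max_le (hb x (Finset.mem_insert_self _ _))
        (ih fun i hi => hb i (Finset.mem_insert_of_mem hi)))
  refine hsum _ _ _ fun k hk => ?_
  refine le_trans (degreeOf_mul_le _ _ _) ?_
  have h1 : degreeOf n ((rename fun j : ℕ => if j < n then j else j + 1).toRingHom
      (p.coeff k)) = 0 := by
    refine aux_degreeOf_eq_zero_of_not_mem_vars ?_
    intro hmem
    obtain ⟨j', hj', hje⟩ := Finset.mem_image.mp (vars_rename _ _ hmem)
    revert hje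
    split_ifs <;> omega
  have h2 : degreeOf n ((X n : MvPolynomial ℕ K) ^ k) ≤ k := by
    rw [X_pow_eq_monomial, degreeOf_eq_sup]
    rw [support_monomial, if_neg (one_ne_zero)]
    simp
  rw [h1, zero_add]
  exact le_trans h2 (Polynomial.le_natDegree_of_ne_zero (Polynomial.mem_support_iff.mp hk))

theorem aux_vars_auxU {K : Type*} [Field K] (n : ℕ) (p : Polynomial (MvPolynomial ℕ K))
    (hp : ∀ k, p.coeff k ∈ supported K (↑(Finset.range n) : Set ℕ)) :
    (auxU n p).vars ⊆ Finset.range (n + 1) := by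
  classical
  show (Polynomial.eval₂ (MvPolynomial.rename
      fun j : ℕ => if j < n then j else j + 1).toRingHom (X n) p).vars ⊆ _
  rw [Polynomial.eval₂_eq_sum, Polynomial.sum]
  intro j hj
  obtain ⟨k, hk, hj⟩ := Finset.mem_biUnion.mp (vars_sum_subset _ _ hj)
  have hjm := vars_mul _ _ hj
  rw [Finset.mem_union] at hjm
  rcases hjm with h | h
  · have hv := vars_rename _ _ h
    obtain ⟨j', hj', rfl⟩ := Finset.mem_image.mp hv
    have hj'n : j' < n := by
      have := (mem_supported.mp (hp k)) hj'
      simpa using this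
    rw [Finset.mem_range]
    split_ifs <;> omega
  · have hsing : j ∈ ({n} : Finset ℕ) := by
      by_cases hk0 : k = 0
      · subst hk0; simp at h
      · rw [X_pow_eq_monomial] at h
        have h2 : j ∈ (Finsupp.single n k).support := by
          rw [vars_monomial (one_ne_zero)] at h
          exact h
        exact Finsupp.support_single_subset h2
    rw [Finset.mem_singleton] at hsing
    subst hsing
    simp

end AuxLemmas

/-- If `P` is a nonzero prime differential ideal, `f ∈ P` irreducible of minimal rank,
and the separant of `f` is zero, then all partials `∂f/∂xᵢ`, `i ≤ ord f`, lie in `P`. -/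
theorem stmt7 {K : Type*} [Field K] (δ : Derivation ℤ K K)
    (D : Derivation ℤ (MvPolynomial ℕ K) (MvPolynomial ℕ K))
    (hDX : ∀ n : ℕ, D (X n) = X (n + 1))
    (hDC : ∀ a : K, D (C a) = C (δ a))
    (P : Ideal (MvPolynomial ℕ K)) (hP0 : P ≠ ⊥) (hPprime : P.IsPrime)
    (hPdiff : ∀ h ∈ P, D h ∈ P)
    (f : MvPolynomial ℕ K) (hfP : f ∈ P) (hf : Irreducible f)
    (hmin : ∀ g ∈ P, g ≠ 0 → toLex (rankOf f) ≤ toLex (rankOf g))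
    (hs : sep f = 0) :
    ∀ i ≤ ordOf f, pderiv i f ∈ P := by
  classical
  intro i hi
  set n := ordOf f with hn
  have hsep : pderiv n f = 0 := hs
  by_cases hn0 : n = 0
  · have hi0 : i = 0 := by omega
    subst hi0
    rw [show (0 : ℕ) = n from hn0.symm, hsep]
    exact P.zero_mem
  have hn1 : 1 ≤ n := Nat.one_le_iff_ne_zero.mpr hn0
  have hf0 : f ≠ 0 := hf.ne_zero
  -- n is attained as a variable of f
  have hvne : f.vars.Nonempty := by
    by_contra h
    rw [Finset.not_nonempty_iff_eq_empty] at h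
    have : n = 0 := by rw [hn, ordOf, h]; simp
    omega
  obtain ⟨b, hb, hbs⟩ := Finset.exists_mem_eq_sup f.vars hvne id
  have hnvars : n ∈ f.vars := by
    have : n = b := by rw [hn, ordOf, hbs]; rfl
    rw [this]; exact hb
  have hfvars : f.vars ⊆ Finset.range (n + 1) := fun j hj =>
    Finset.mem_range.mpr (Nat.lt_succ_of_le (Finset.le_sup (f := id) hj))
  -- variables of D f
  have hDf_rep := aux_D_apply_eq δ D hDX hDC n f hfvars
  have hsum0 : (∑ i ∈ Finset.range (n + 1), pderiv i f * X (i + 1)) =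
      ∑ i ∈ Finset.range n, pderiv i f * X (i + 1) := by
    rw [Finset.sum_range_succ, hsep, zero_mul, add_zero]
  have hDf_vars : (D f).vars ⊆ Finset.range (n + 1) := by
    rw [hDf_rep, hsum0]
    intro j hj
    rcases Finset.mem_union.mp (vars_add_subset _ _ hj) with h | h
    · obtain ⟨i', hi', hji⟩ := Finset.mem_biUnion.mp (vars_sum_subset _ _ h)
      rcases Finset.mem_union.mp (vars_mul _ _ hji) with h2 | h2
      · exact hfvars (aux_vars_pderiv i' f h2)
      · rw [vars_X, Finset.mem_singleton] at h2
        subst h2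
        rw [Finset.mem_range]
        have := Finset.mem_range.mp hi'
        omega
    · obtain ⟨s, hs', hjs⟩ := Finset.mem_biUnion.mp (vars_sum_subset _ _ h)
      exact hfvars ((mem_vars j).mpr ⟨s, hs', aux_vars_monomial_subset hjs⟩)
  -- move to the subring of coefficients
  set SA := supported K (↑(Finset.range n) : Set ℕ) with hSA
  set SR := SA.toSubring with hSR
  have hFc : ↑(auxT n f).coeffs ⊆ (SR : Set (MvPolynomial ℕ K)) := by
    intro c hc
    obtain ⟨k, _, rfl⟩ := Polynomial.mem_coeffs_iff.mp hc
    exact Subalgebra.mem_toSubring.mpr (auxT_coeff_mem n f hfvars k)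
  have hGc : ↑(auxT n (D f)).coeffs ⊆ (SR : Set (MvPolynomial ℕ K)) := by
    intro c hc
    obtain ⟨k, _, rfl⟩ := Polynomial.mem_coeffs_iff.mp hc
    exact Subalgebra.mem_toSubring.mpr (auxT_coeff_mem n (D f) hDf_vars k)
  set Fh := (auxT n f).toSubring SR hFc with hFh
  set Gh := (auxT n (D f)).toSubring SR hGc with hGh
  -- the degree of F is positive
  have hdegT : 0 < (auxT n f).degree := by
    by_contra h
    push_neg at h
    have hTC := Polynomial.eq_C_of_degree_le_zero h
    have hfU : f = auxU n (auxT n f) := (auxU_auxT n f).symm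
    rw [hTC, auxU_C] at hfU
    have : n ∈ (rename (fun j : ℕ => if j < n then j else j + 1)
        ((auxT n f).coeff 0)).vars := by rw [← hfU]; exact hnvars
    obtain ⟨j', _, hje⟩ := Finset.mem_image.mp (vars_rename _ _ this)
    revert hje
    split_ifs <;> omega
  have hdegF : 0 < Fh.degree := by rw [hFh, Polynomial.degree_toSubring]; exact hdegT
  -- pseudo-division of G by F
  obtain ⟨m, qh, rh, heq, hr⟩ := aux_pseudoDiv Fh hdegF Gh.natDegree Gh le_rfl
  -- map the equation down to MvPolynomial ℕ K
  have heqA := congrArg (fun p : Polynomial SR => auxU n (p.map SR.subtype)) heq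
  simp only [Polynomial.map_mul, Polynomial.map_pow, Polynomial.map_add, Polynomial.map_C,
    map_mul, map_pow, map_add] at heqA
  have hmapF : Polynomial.map SR.subtype Fh = auxT n f := by
    rw [hFh]; exact Polynomial.map_toSubring _ _ _
  have hmapG : Polynomial.map SR.subtype Gh = auxT n (D f) := by
    rw [hGh]; exact Polynomial.map_toSubring _ _ _
  rw [hmapF, hmapG, auxU_C, auxU_auxT, auxU_auxT] at heqA
  set dec : ℕ → ℕ := fun j : ℕ => if j < n then j else j + 1 with hdec
  have hdecinj : Function.Injective dec := by
    intro a b hab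
    simp only [hdec] at hab
    revert hab
    split_ifs <;> omega
  set w : MvPolynomial ℕ K := rename dec (SR.subtype Fh.leadingCoeff) with hw
  set qt : MvPolynomial ℕ K := auxU n (Polynomial.map SR.subtype qh) with hqt
  set rt : MvPolynomial ℕ K := auxU n (Polynomial.map SR.subtype rh) with hrt
  have heqMain : w ^ m * D f = qt * f + rt := heqA
  -- facts about w
  have hF0 : Fh ≠ 0 := fun h => by rw [h] at hdegF; simp at hdegF
  have hlc0 : Fh.leadingCoeff ≠ 0 := Polynomial.leadingCoeff_ne_zero.mpr hF0
  have hlcA0 : (SR.subtype Fh.leadingCoeff : MvPolynomial ℕ K) ≠ 0 := fun h =>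
    hlc0 (Subtype.ext h)
  have hw0 : w ≠ 0 := by
    intro h0
    rw [hw] at h0
    exact hlcA0 (rename_injective dec hdecinj (h0.trans (map_zero (rename dec)).symm))
  have hlcvars : (SR.subtype Fh.leadingCoeff : MvPolynomial ℕ K).vars ⊆ Finset.range n := by
    have hmem : (SR.subtype Fh.leadingCoeff : MvPolynomial ℕ K) ∈ SA :=
      Subalgebra.mem_toSubring.mp Fh.leadingCoeff.2
    intro j hj
    have := (mem_supported.mp hmem) hj
    simpa using this
  have hwvars : w.vars ⊆ Finset.range n := by
    intro j hj
    obtain ⟨j', hj', rfl⟩ := Finset.mem_image.mp (vars_rename _ _ hj)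
    have : j' < n := Finset.mem_range.mp (hlcvars hj')
    simp only [hdec]
    rw [Finset.mem_range]
    split_ifs <;> omega
  have hwP : w ∉ P := by
    intro hmem
    have hle := hmin w hmem hw0
    have hlt : toLex (rankOf w) < toLex (rankOf f) := by
      rw [Prod.Lex.lt_iff]
      left
      show ordOf w < (rankOf f).1
      have h1 : ordOf w < n := by
        rw [ordOf]
        rw [Finset.sup_lt_iff (by exact_mod_cast hn1 : (⊥ : ℕ) < n)]
        intro b2 hb2
        exact Finset.mem_range.mp (hwvars hb2)
      exact h1
    exact absurd (lt_of_le_of_lt hle hlt) (lt_irrefl _)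
  -- the remainder is zero
  have hrt0 : rt = 0 := by
    by_contra hrt0
    have hrh0 : rh ≠ 0 := by
      intro h0
      rw [h0] at hrt
      simp [Polynomial.map_zero] at hrt
      exact hrt0 hrt
    have hrtP : rt ∈ P := by
      have h1 : rt = w ^ m * D f - qt * f := by rw [heqMain]; ring
      rw [h1]
      exact P.sub_mem (Ideal.mul_mem_left _ _ (hPdiff f hfP)) (Ideal.mul_mem_left _ _ hfP)
    have hle := hmin rt hrtP hrt0
    have hrtvars : rt.vars ⊆ Finset.range (n + 1) := by
      rw [hrt]
      refine aux_vars_auxU n _ fun k => ?_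
      rw [Polynomial.coeff_map]
      exact Subalgebra.mem_toSubring.mp (rh.coeff k).2
    have hdeg1 : degreeOf n rt < degreeOf n f := by
      have c1 : degreeOf n rt ≤ (Polynomial.map SR.subtype rh).natDegree := by
        rw [hrt]; exact aux_degreeOf_auxU_le n _
      have c2 : (Polynomial.map SR.subtype rh).natDegree ≤ rh.natDegree :=
        Polynomial.natDegree_map_le
      have c3 : rh.natDegree < Fh.natDegree := Polynomial.natDegree_lt_natDegree hrh0 hr
      have c4 : Fh.natDegree ≤ degreeOf n f := by
        rw [hFh, Polynomial.natDegree_toSubring]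
        exact auxT_natDegree_le n f
      omega
    have hlt : toLex (rankOf rt) < toLex (rankOf f) := by
      rw [Prod.Lex.lt_iff]
      have hordle : ordOf rt ≤ n := by
        rw [ordOf]
        refine Finset.sup_le fun b2 hb2 => ?_
        have hb2' := Finset.mem_range.mp (hrtvars hb2)
        simp only [id_eq]
        omega
      rcases lt_or_eq_of_le hordle with h | h
      · left; exact h
      · right
        constructor
        · exact h
        · show degreeOf (ordOf rt) rt < degreeOf (ordOf f) f
          rw [h, ← hn]
          exact hdeg1
    exact absurd (lt_of_le_of_lt hle hlt) (lt_irrefl _)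
  rw [hrt0, add_zero] at heqMain
  -- f divides D f
  have hprime : Prime f := UniqueFactorizationMonoid.irreducible_iff_prime.mp hf
  have hdvd : f ∣ w ^ m * D f := ⟨qt, by rw [heqMain, mul_comm]⟩
  have hfDf : f ∣ D f := by
    rcases hprime.2.2 _ _ hdvd with h | h
    · exfalso
      obtain ⟨c, hc⟩ := hprime.dvd_of_dvd_pow h
      exact hwP (hc ▸ Ideal.mul_mem_right _ _ hfP)
    · exact h
  obtain ⟨hq, hDfeq⟩ := hfDf
  -- downward induction on the partial derivatives
  have key : ∀ k : ℕ, pderiv (n - k) f ∈ P := by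
    intro k
    induction k with
    | zero =>
      rw [Nat.sub_zero, hsep]
      exact P.zero_mem
    | succ k ih =>
      by_cases hk : n ≤ k
      · rw [show n - (k + 1) = n - k by omega]
        exact ih
      · have hstep := aux_pderiv_comm_D δ D hDX hDC (n - (k + 1)) f
        rw [show n - (k + 1) + 1 = n - k by omega] at hstep
        have h1 : pderiv (n - k) (D f) ∈ P := by
          rw [hDfeq, pderiv_mul]
          exact P.add_mem (Ideal.mul_mem_right _ _ ih) (Ideal.mul_mem_right _ _ hfP)
        have h2 : pderiv (n - (k + 1)) f = pderiv (n - k) (D f) - D (pderiv (n - k) f) := by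
          rw [hstep]; ring
        rw [h2]
        exact P.sub_mem h1 (hPdiff _ ih)
  have := key (n - i)
  rwa [show n - (n - i) = i by omega] at this
end
end

section
/- Let (K, δ) be a differential field and P a prime differential ideal of K{x}. If there is an irreducible f ∈ P of minimal rank in P whose separant s_f is nonzero, then P = [f] : s_f^∞. -/
set_option synthInstance.maxHeartbeats 1000000
set_option maxHeartbeats 1000000

open MvPolynomial
noncomputable section
variable {K : Type*} [Field K]

namespace SDCF
set_option linter.dupNamespace false


lemma degOf_eq_zero_iff {g : MvPolynomial ℕ K} {n : ℕ} :
    degreeOf n g = 0 ↔ n ∉ g.vars := by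
  constructor
  · rintro h hv
    rw [mem_vars] at hv
    obtain ⟨m, hm, hn⟩ := hv
    have h1 := monomial_le_degreeOf n hm
    rw [h] at h1
    rw [Finsupp.mem_support_iff] at hn
    omega
  · intro h
    rw [degreeOf_eq_sup]
    apply Nat.le_antisymm _ (Nat.zero_le _)
    apply Finset.sup_le
    intro m hm
    by_contra hc
    exact h (mem_vars n |>.mpr ⟨m, hm, Finsupp.mem_support_iff.mpr (by omega)⟩)

lemma coeff_pderiv (n : ℕ) (g : MvPolynomial ℕ K) (m : ℕ →₀ ℕ) :
    coeff m (pderiv n g) = coeff (m + Finsupp.single n 1) g * (m n + 1) := by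
  conv_lhs => rw [g.as_sum]
  rw [map_sum, coeff_sum]
  simp only [pderiv_monomial, coeff_monomial]
  rw [Finset.sum_eq_single (m + Finsupp.single n 1)]
  · simp [Finsupp.add_apply, Finsupp.single_apply, add_tsub_cancel_right]
  · intro m' hm' hne
    split_ifs with h
    · rcases Nat.eq_zero_or_pos (m' n) with h0 | h0
      · simp [h0]
      · exfalso; apply hne
        ext a
        have h2 := congrArg (fun z => z a) h
        simp only [Finsupp.tsub_apply, Finsupp.add_apply, Finsupp.single_apply] at h2 ⊢
        split_ifs at h2 ⊢ with hna
        · subst hna; omega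
        · omega
    · rfl
  · intro h
    rw [MvPolynomial.notMem_support_iff.mp h]
    simp

lemma vars_pderiv_subset (n : ℕ) (g : MvPolynomial ℕ K) :
    (pderiv n g).vars ⊆ g.vars := by
  intro k hk
  rw [mem_vars] at hk ⊢
  obtain ⟨m, hm, hkm⟩ := hk
  rw [MvPolynomial.mem_support_iff, coeff_pderiv] at hm
  refine ⟨m + Finsupp.single n 1,
    MvPolynomial.mem_support_iff.mpr fun hc => hm (by simp [hc]), ?_⟩
  rw [Finsupp.mem_support_iff] at hkm ⊢
  simp only [Finsupp.add_apply]
  omega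

lemma degreeOf_pderiv_self_lt {g : MvPolynomial ℕ K} {n : ℕ} (h : 0 < degreeOf n g) :
    degreeOf n (pderiv n g) < degreeOf n g := by
  rw [degreeOf_lt_iff h]
  intro m hm
  rw [MvPolynomial.mem_support_iff, coeff_pderiv] at hm
  have h1 : coeff (m + Finsupp.single n 1) g ≠ 0 := fun hc => hm (by simp [hc])
  have h2 := monomial_le_degreeOf n (MvPolynomial.mem_support_iff.mpr h1)
  simp [Finsupp.add_apply, Finsupp.single_apply] at h2
  omega



/-- apply δ to each coefficient -/
def mapδ (δ : Derivation ℤ K K) (g : MvPolynomial ℕ K) : MvPolynomial ℕ K :=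
  ∑ m ∈ g.support, monomial m (δ (coeff m g))

lemma coeff_mapδ (δ : Derivation ℤ K K) (g : MvPolynomial ℕ K) (m : ℕ →₀ ℕ) :
    coeff m (mapδ δ g) = δ (coeff m g) := by
  rw [mapδ, coeff_sum]
  simp only [coeff_monomial]
  rw [Finset.sum_eq_single m]
  · simp
  · intro m' _ hne; exact if_neg hne
  · intro h
    rw [MvPolynomial.notMem_support_iff.mp h]
    simp

lemma mapδ_add (δ : Derivation ℤ K K) (g h : MvPolynomial ℕ K) :
    mapδ δ (g + h) = mapδ δ g + mapδ δ h := by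
  apply MvPolynomial.ext
  intro m
  simp [coeff_mapδ]

lemma mapδ_C (δ : Derivation ℤ K K) (a : K) : mapδ δ (C a) = C (δ a) := by
  apply MvPolynomial.ext
  intro m
  rw [coeff_mapδ]
  classical
  rw [coeff_C, coeff_C, apply_ite δ, map_zero]

lemma mapδ_mul_X (δ : Derivation ℤ K K) (g : MvPolynomial ℕ K) (n : ℕ) :
    mapδ δ (g * X n) = mapδ δ g * X n := by
  apply MvPolynomial.ext
  intro m
  classical
  rw [coeff_mapδ, coeff_mul_X', coeff_mul_X', apply_ite δ, map_zero, coeff_mapδ]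

lemma vars_mapδ_subset (δ : Derivation ℤ K K) (g : MvPolynomial ℕ K) :
    (mapδ δ g).vars ⊆ g.vars := by
  intro k hk
  rw [mem_vars] at hk ⊢
  obtain ⟨m, hm, hkm⟩ := hk
  rw [MvPolynomial.mem_support_iff, coeff_mapδ] at hm
  exact ⟨m, MvPolynomial.mem_support_iff.mpr fun hc => hm (by rw [hc, map_zero]), hkm⟩

lemma D_apply (δ : Derivation ℤ K K) (D : Derivation ℤ (MvPolynomial ℕ K) (MvPolynomial ℕ K))
    (hDX : ∀ n : ℕ, D (X n) = X (n + 1)) (hDC : ∀ a : K, D (C a) = C (δ a))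
    (g : MvPolynomial ℕ K) :
    ∀ A : Finset ℕ, g.vars ⊆ A →
      D g = (∑ n ∈ A, pderiv n g * X (n + 1)) + mapδ δ g := by
  induction g using MvPolynomial.induction_on with
  | C a =>
    intro A _
    rw [hDC, mapδ_C]
    simp [pderiv_C]
  | add q r hq hr =>
    intro A hA
    classical
    set B := A ∪ q.vars ∪ r.vars with hB
    have hAB : A ⊆ B := by intro x hx; simp [hB, hx]
    have h1 : D (q + r) = (∑ n ∈ B, pderiv n (q + r) * X (n + 1)) + mapδ δ (q + r) := by
      rw [map_add, hq B (by intro x hx; simp [hB, hx]), hr B (by intro x hx; simp [hB, hx]),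
        mapδ_add]
      simp only [map_add, add_mul, Finset.sum_add_distrib]
      ring
    rw [h1, ← Finset.sum_subset hAB]
    intro x _ hx
    rw [pderiv_eq_zero_of_notMem_vars (fun hc => hx (hA hc))]
    simp
  | mul_X q j hq =>
    intro A hA
    classical
    set B := A ∪ q.vars ∪ {j} with hB
    have hAB : A ⊆ B := by intro x hx; simp [hB, hx]
    have hjB : j ∈ B := by simp [hB]
    have h1 : D (q * X j) = (∑ n ∈ B, pderiv n (q * X j) * X (n + 1)) + mapδ δ (q * X j) := by
      rw [Derivation.leibniz, hDX, hq B (by intro x hx; simp [hB, hx]), mapδ_mul_X]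
      have h2 : ∀ n, pderiv n (q * X j) * X (n + 1)
          = pderiv n q * X (n + 1) * X j + q * pderiv n (X j) * X (n + 1) := by
        intro n
        rw [pderiv_mul]
        ring
      rw [Finset.sum_congr rfl fun n _ => h2 n, Finset.sum_add_distrib]
      have h3 : (∑ n ∈ B, q * pderiv n (X j) * X (n + 1)) = q * X (j + 1) := by
        rw [Finset.sum_eq_single j]
        · rw [pderiv_X_self]; ring
        · intro n _ hne
          rw [pderiv_X_of_ne (Ne.symm hne)]  -- careful direction
          ring
        · intro h; exact absurd hjB h
      rw [h3, ← Finset.sum_mul]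
      simp only [smul_eq_mul]
      ring
    rw [h1, ← Finset.sum_subset hAB]
    intro x _ hx
    rw [pderiv_eq_zero_of_notMem_vars (fun hc => hx (hA hc))]
    simp

lemma vars_D_le (δ : Derivation ℤ K K) (D : Derivation ℤ (MvPolynomial ℕ K) (MvPolynomial ℕ K))
    (hDX : ∀ n : ℕ, D (X n) = X (n + 1)) (hDC : ∀ a : K, D (C a) = C (δ a))
    (g : MvPolynomial ℕ K) (N : ℕ) (hg : ∀ k ∈ g.vars, k ≤ N) :
    ∀ k ∈ (D g).vars, k ≤ N + 1 := by
  intro k hk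
  classical
  rw [D_apply δ D hDX hDC g g.vars subset_rfl] at hk
  have h1 := vars_add_subset _ _ hk
  rw [Finset.mem_union] at h1
  rcases h1 with h1 | h1
  · have h2 := vars_sum_subset _ _ h1
    rw [Finset.mem_biUnion] at h2
    obtain ⟨n, hn, h3⟩ := h2
    have h4 := vars_mul _ _ h3
    rw [Finset.mem_union] at h4
    rcases h4 with h4 | h4
    · exact le_trans (hg k (vars_pderiv_subset n g h4)) (Nat.le_succ N)
    · rw [vars_X] at h4
      rw [Finset.mem_singleton] at h4
      subst h4
      exact Nat.succ_le_succ (hg n hn)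
  · exact le_trans (hg k (vars_mapδ_subset δ g h1)) (Nat.le_succ N)


lemma iterate_D (δ : Derivation ℤ K K) (D : Derivation ℤ (MvPolynomial ℕ K) (MvPolynomial ℕ K))
    (hDX : ∀ n : ℕ, D (X n) = X (n + 1)) (hDC : ∀ a : K, D (C a) = C (δ a))
    (f : MvPolynomial ℕ K) (p : ℕ) (hp : ∀ n ∈ f.vars, n ≤ p) (i : ℕ) :
    ∃ E : MvPolynomial ℕ K, (⇑D)^[i + 1] f = pderiv p f * X (p + 1 + i) + E ∧
      ∀ n ∈ E.vars, n ≤ p + i := by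
  induction i with
  | zero =>
    have hsub : f.vars ⊆ Finset.range (p + 1) := by
      intro n hn; rw [Finset.mem_range]; exact Nat.lt_succ_of_le (hp n hn)
    refine ⟨(∑ n ∈ Finset.range p, pderiv n f * X (n + 1)) + mapδ δ f, ?_, ?_⟩
    · rw [Function.iterate_one, D_apply δ D hDX hDC f (Finset.range (p + 1)) hsub,
        Finset.sum_range_succ]
      simp only [Nat.add_zero]
      ring
    · intro n hn
      classical
      have h1 := vars_add_subset _ _ hn
      rw [Finset.mem_union] at h1
      rcases h1 with h1 | h1
      · have h2 := vars_sum_subset _ _ h1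
        rw [Finset.mem_biUnion] at h2
        obtain ⟨j, hj, h3⟩ := h2
        rw [Finset.mem_range] at hj
        have h4 := vars_mul _ _ h3
        rw [Finset.mem_union] at h4
        rcases h4 with h4 | h4
        · exact hp n (vars_pderiv_subset j f h4)
        · rw [vars_X, Finset.mem_singleton] at h4
          omega
      · exact hp n (vars_mapδ_subset δ f h1)
  | succ i ih =>
    obtain ⟨E, hE, hEv⟩ := ih
    classical
    refine ⟨X (p + 1 + i) * D (pderiv p f) + D E, ?_, ?_⟩
    · rw [Function.iterate_succ_apply', hE, map_add, Derivation.leibniz, hDX]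
      have : p + 1 + i + 1 = p + 1 + (i + 1) := by ring
      rw [this]
      simp only [smul_eq_mul]
      ring
    · intro n hn
      have h1 := vars_add_subset _ _ hn
      rw [Finset.mem_union] at h1
      have hDs : ∀ k ∈ (D (pderiv p f)).vars, k ≤ p + 1 :=
        vars_D_le δ D hDX hDC _ p (fun k hk => hp k (vars_pderiv_subset p f hk))
      rcases h1 with h1 | h1
      · have h4 := vars_mul _ _ h1
        rw [Finset.mem_union] at h4
        rcases h4 with h4 | h4
        · rw [vars_X, Finset.mem_singleton] at h4; omega
        · have := hDs n h4; omega
      · have := vars_D_le δ D hDX hDC E (p + i) hEv n h1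
        omega

lemma pseudo_div (v d : ℕ) (hd : 0 < d) (a b : MvPolynomial ℕ K)
    (ha : degreeOf v a = 0) (hb : degreeOf v b < d) (V : Finset ℕ)
    (haV : a.vars ⊆ V) (hbV : b.vars ⊆ V) (hvV : v ∈ V) :
    ∀ (e : ℕ) (h : MvPolynomial ℕ K), h.vars ⊆ V → degreeOf v h ≤ e →
      ∃ (k : ℕ) (q r : MvPolynomial ℕ K),
        a ^ k * h = q * (a * X v ^ d + b) + r ∧ degreeOf v r < d ∧ r.vars ⊆ V := by
  intro e
  induction e with
  | zero =>
    intro h hV hdeg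
    exact ⟨0, 0, h, by ring, by omega, hV⟩
  | succ e ih =>
    intro h hV hdeg
    rcases Nat.lt_or_ge (degreeOf v h) (e + 1) with hlt | hge
    · exact ih h hV (by omega)
    have hdeg' : degreeOf v h = e + 1 := by omega
    rcases Nat.lt_or_ge (e + 1) d with hlt | hde
    · exact ⟨0, 0, h, by ring, by omega, hV⟩
    -- split off the top coefficient
    classical
    set c := h.divMonomial (Finsupp.single v (e + 1)) with hc
    set h' := h.modMonomial (Finsupp.single v (e + 1)) with hh'
    have hsplit : X v ^ (e + 1) * c + h' = h := by
      rw [X_pow_eq_monomial]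
      exact divMonomial_add_modMonomial h _
    have hcdeg : degreeOf v c = 0 := by
      rw [degreeOf_eq_sup]
      apply Nat.le_antisymm _ (Nat.zero_le _)
      apply Finset.sup_le
      intro m hm
      rw [MvPolynomial.mem_support_iff, hc, coeff_divMonomial] at hm
      have h2 := monomial_le_degreeOf v (MvPolynomial.mem_support_iff.mpr hm)
      simp [Finsupp.add_apply, Finsupp.single_apply] at h2
      omega
    have hcV : c.vars ⊆ V := by
      intro k hk
      rw [mem_vars] at hk
      obtain ⟨m, hm, hkm⟩ := hk
      rw [MvPolynomial.mem_support_iff, hc, coeff_divMonomial] at hm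
      apply hV
      rw [mem_vars]
      refine ⟨Finsupp.single v (e + 1) + m, MvPolynomial.mem_support_iff.mpr hm, ?_⟩
      rw [Finsupp.mem_support_iff] at hkm ⊢
      simp only [Finsupp.add_apply]
      omega
    have hh'deg : degreeOf v h' ≤ e := by
      rw [degreeOf_le_iff]
      intro m hm
      rw [MvPolynomial.mem_support_iff, hh'] at hm
      by_contra hcon
      rw [coeff_modMonomial_of_le] at hm
      · exact hm rfl
      · rw [Finsupp.single_le_iff]; omega
    have hh'V : h'.vars ⊆ V := by
      intro k hk
      rw [mem_vars] at hk
      obtain ⟨m, hm, hkm⟩ := hk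
      rw [MvPolynomial.mem_support_iff, hh'] at hm
      apply hV
      rw [mem_vars]
      refine ⟨m, ?_, hkm⟩
      rw [MvPolynomial.mem_support_iff]
      intro hz
      by_cases hle : Finsupp.single v (e + 1) ≤ m
      · rw [coeff_modMonomial_of_le _ hle] at hm; exact hm rfl
      · rw [coeff_modMonomial_of_not_le _ hle, hz] at hm; exact hm rfl
    -- the reduction step
    set w := X (R := K) v ^ (e + 1 - d) with hw
    have hwX : w * X v ^ d = X v ^ (e + 1) := by
      rw [hw, ← pow_add, Nat.sub_add_cancel hde]
    set h1 := a * h' - c * w * b with hh1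
    have hkey : a * h = (c * w) * (a * X v ^ d + b) + h1 := by
      rw [hh1, ← hsplit]
      have : c * w * (a * X v ^ d + b) = a * (w * X v ^ d) * c + c * w * b := by ring
      rw [this, hwX]
      ring
    have hwdeg : degreeOf v w ≤ e + 1 - d := by
      rw [hw, X_pow_eq_monomial, degreeOf_le_iff]
      intro m hm
      rw [MvPolynomial.mem_support_iff, coeff_monomial] at hm
      split_ifs at hm with hmm
      · subst hmm; simp [Finsupp.single_apply]
      · exact absurd rfl hm
    have hwV : w.vars ⊆ V := by
      rw [hw, X_pow_eq_monomial]
      intro k hk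
      rw [mem_vars] at hk
      obtain ⟨m, hm, hkm⟩ := hk
      rw [MvPolynomial.mem_support_iff, coeff_monomial] at hm
      split_ifs at hm with hmm
      · subst hmm
        have := Finsupp.support_single_subset hkm
        rw [Finset.mem_singleton] at this
        subst this
        exact hvV
      · exact absurd rfl hm
    have hh1deg : degreeOf v h1 ≤ e := by
      refine le_trans (degreeOf_sub_le v _ _) ?_
      have d1 : degreeOf v (a * h') ≤ e :=
        le_trans (degreeOf_mul_le v a h') (by omega)
      have d2 : degreeOf v (c * w * b) ≤ e := by
        refine le_trans (degreeOf_mul_le v _ b) ?_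
        have := le_trans (degreeOf_mul_le v c w) (by omega : degreeOf v c + degreeOf v w ≤ 0 + (e + 1 - d))
        omega
      omega
    have hh1V : h1.vars ⊆ V := by
      refine subset_trans (vars_sub_subset _) ?_
      intro k hk
      rw [Finset.mem_union] at hk
      rcases hk with hk | hk
      · have := vars_mul _ _ hk
        rw [Finset.mem_union] at this
        rcases this with hk2 | hk2
        · exact haV hk2
        · exact hh'V hk2
      · have := vars_mul _ _ hk
        rw [Finset.mem_union] at this
        rcases this with hk2 | hk2
        · have := vars_mul _ _ hk2
          rw [Finset.mem_union] at this
          rcases this with hk3 | hk3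
          · exact hcV hk3
          · exact hwV hk3
        · exact hbV hk2
    obtain ⟨k, q, r, hqr, hrdeg, hrV⟩ := ih h1 hh1V (by omega)
    refine ⟨k + 1, a ^ k * (c * w) + q, r, ?_, hrdeg, hrV⟩
    have : a ^ (k + 1) * h = a ^ k * (a * h) := by ring
    rw [this, hkey]
    rw [mul_add, mul_add, add_mul]
    rw [← mul_assoc (a^k), hqr]
    ring


lemma rank_lt_aux {p d : ℕ} (g : MvPolynomial ℕ K)
    (h1 : ∀ n ∈ g.vars, n ≤ p) (h2 : degreeOf p g < d) :
    toLex (rankOf g) < toLex (p, d) := by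
  rw [rankOf]
  rcases lt_or_eq_of_le (show ordOf g ≤ p from Finset.sup_le fun n hn => h1 n hn) with hlt | heq
  · exact Prod.Lex.lt_iff.mpr (Or.inl hlt)
  · exact Prod.Lex.lt_iff.mpr (Or.inr ⟨heq, by rw [heq]; exact h2⟩)

lemma partial_reduce (δ : Derivation ℤ K K)
    (D : Derivation ℤ (MvPolynomial ℕ K) (MvPolynomial ℕ K))
    (hDX : ∀ n : ℕ, D (X n) = X (n + 1)) (hDC : ∀ a : K, D (C a) = C (δ a))
    (f : MvPolynomial ℕ K) (p : ℕ) (hp : ∀ n ∈ f.vars, n ≤ p) :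
    ∀ (k : ℕ) (h : MvPolynomial ℕ K), (∀ n ∈ h.vars, n ≤ p + k) →
      ∃ (m : ℕ) (r : MvPolynomial ℕ K),
        (pderiv p f) ^ m * h - r ∈ diffIdeal D f ∧ ∀ n ∈ r.vars, n ≤ p := by
  intro k
  induction k with
  | zero =>
    intro h hv
    exact ⟨0, h, by rw [pow_zero, one_mul, sub_self]; exact Ideal.zero_mem _,
      fun n hn => by simpa using hv n hn⟩
  | succ k ih =>
    intro h hv
    set s := pderiv p f with hs_def
    obtain ⟨E, hgE, hEv⟩ := iterate_D δ D hDX hDC f p hp k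
    have hq : p + 1 + k = p + k + 1 := by ring
    rw [hq] at hgE
    set q := p + k + 1 with hq_def
    have hsv : s.vars ⊆ Finset.range (q + 1) := by
      intro n hn
      rw [Finset.mem_range]
      have := hp n (vars_pderiv_subset p f hn)
      omega
    have hEb : E.vars ⊆ Finset.range (q + 1) := by
      intro n hn
      rw [Finset.mem_range]
      have := hEv n hn
      omega
    have hsdeg : degreeOf q s = 0 :=
      degOf_eq_zero_iff.mpr fun hc => by
        have := hp q (vars_pderiv_subset p f hc); omega
    have hEdeg : degreeOf q E < 1 := by
      have h0 : degreeOf q E = 0 :=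
        degOf_eq_zero_iff.mpr fun hc => by have := hEv q hc; omega
      omega
    obtain ⟨k1, q1, r1, heq, hr1deg, hr1V⟩ :=
      pseudo_div q 1 one_pos s E hsdeg hEdeg (Finset.range (q + 1)) hsv hEb
        (by simp) (degreeOf q h) h
        (fun n hn => Finset.mem_range.mpr (by have := hv n hn; omega)) le_rfl
    have hmem1 : s ^ k1 * h - r1 ∈ diffIdeal D f := by
      have h1 : s ^ k1 * h - r1 = q1 * ((⇑D)^[k + 1] f) := by
        rw [heq, hgE, pow_one]; ring
      rw [h1]
      exact Ideal.mul_mem_left _ _ (Ideal.subset_span ⟨k + 1, rfl⟩)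
    have hr1v' : ∀ n ∈ r1.vars, n ≤ p + k := by
      intro n hn
      have h1 := Finset.mem_range.mp (hr1V hn)
      have h2 : q ∉ r1.vars := degOf_eq_zero_iff.mp (by omega)
      rcases Nat.lt_or_ge n q with h3 | h3
      · omega
      · exfalso; apply h2; have : n = q := by omega
        rwa [this] at hn
    obtain ⟨m2, r, hmem2, hrv⟩ := ih r1 hr1v'
    refine ⟨k1 + m2, r, ?_, hrv⟩
    have h2 : s ^ (k1 + m2) * h - r
        = s ^ m2 * (s ^ k1 * h - r1) + (s ^ m2 * r1 - r) := by ring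
    rw [h2]
    exact Ideal.add_mem _ (Ideal.mul_mem_left _ _ hmem1) hmem2

end SDCF

/-- If `P` is a prime differential ideal containing an irreducible `f` of minimal rank
with nonzero separant, then `P = [f] : s_f^∞`. -/
theorem stmt8 {K : Type*} [Field K] (δ : Derivation ℤ K K)
    (D : Derivation ℤ (MvPolynomial ℕ K) (MvPolynomial ℕ K))
    (hDX : ∀ n : ℕ, D (X n) = X (n + 1))
    (hDC : ∀ a : K, D (C a) = C (δ a))
    (P : Ideal (MvPolynomial ℕ K)) (hPprime : P.IsPrime)
    (hPdiff : ∀ h ∈ P, D h ∈ P)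
    (f : MvPolynomial ℕ K) (hfP : f ∈ P) (hf : Irreducible f)
    (hmin : ∀ g ∈ P, g ≠ 0 → toLex (rankOf f) ≤ toLex (rankOf g))
    (hs : sep f ≠ 0) :
    P = saturation (diffIdeal D f) (sep f) := by
  classical
  set p := ordOf f with hp_def
  set d := degreeOf p f with hd_def
  have hf0 : f ≠ 0 := hf.ne_zero
  have hfv : ∀ n ∈ f.vars, n ≤ p := fun n hn => Finset.le_sup (f := id) hn
  have hsp : sep f = pderiv p f := rfl
  have hpd : 0 < d := by
    rcases Nat.eq_zero_or_pos d with h0 | h0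
    · exact absurd (by rw [hsp]; exact pderiv_eq_zero_of_notMem_vars (SDCF.degOf_eq_zero_iff.mp h0)) hs
    · exact h0
  have hdiffP : diffIdeal D f ≤ P := by
    rw [diffIdeal, Ideal.span_le]
    rintro _ ⟨n, rfl⟩
    simp only
    induction n with
    | zero => simpa using hfP
    | succ n ih => rw [Function.iterate_succ_apply']; exact hPdiff _ ih
  have hrf : rankOf f = (p, d) := rfl
  have hnotP : ∀ g : MvPolynomial ℕ K, g ≠ 0 → (∀ n ∈ g.vars, n ≤ p) →
      degreeOf p g < d → g ∉ P := by
    intro g hg0 hgv hgd hgP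
    have hle := hmin g hgP hg0
    rw [hrf] at hle
    exact absurd hle (not_le_of_gt (SDCF.rank_lt_aux g hgv hgd))
  have hsepP : sep f ∉ P := by
    rw [hsp]
    exact hnotP _ (hsp ▸ hs) (fun n hn => hfv n (SDCF.vars_pderiv_subset p f hn))
      (SDCF.degreeOf_pderiv_self_lt hpd)
  apply le_antisymm
  · -- P ⊆ saturation
    intro h hh
    obtain ⟨m, r, hmem, hrv⟩ := SDCF.partial_reduce δ D hDX hDC f p hfv (ordOf h) h
      (fun n hn => le_trans (Finset.le_sup (f := id) hn) (Nat.le_add_left _ _))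
    rw [← hsp] at hmem
    have hrP : r ∈ P := by
      have h1 : sep f ^ m * h ∈ P := Ideal.mul_mem_left P _ hh
      have h2 : sep f ^ m * h - r ∈ P := hdiffP hmem
      have h3 : r = sep f ^ m * h - (sep f ^ m * h - r) := by ring
      rw [h3]; exact Ideal.sub_mem P h1 h2
    -- split f = I * X p ^ d + F
    set I := f.divMonomial (Finsupp.single p d) with hI
    set F := f.modMonomial (Finsupp.single p d) with hF
    have hsplit : I * X p ^ d + F = f := by
      rw [X_pow_eq_monomial, mul_comm]
      exact divMonomial_add_modMonomial f _
    have hIdeg : degreeOf p I = 0 := by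
      rw [degreeOf_eq_sup]
      apply Nat.le_antisymm _ (Nat.zero_le _)
      apply Finset.sup_le
      intro m' hm'
      rw [MvPolynomial.mem_support_iff, hI, coeff_divMonomial] at hm'
      have h2 := monomial_le_degreeOf p (MvPolynomial.mem_support_iff.mpr hm')
      simp [Finsupp.add_apply, Finsupp.single_apply] at h2
      omega
    have hIV : I.vars ⊆ f.vars := by
      intro n hn
      rw [mem_vars] at hn
      obtain ⟨m', hm', hnm⟩ := hn
      rw [MvPolynomial.mem_support_iff, hI, coeff_divMonomial] at hm'
      rw [mem_vars]
      refine ⟨Finsupp.single p d + m', MvPolynomial.mem_support_iff.mpr hm', ?_⟩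
      rw [Finsupp.mem_support_iff] at hnm ⊢
      simp only [Finsupp.add_apply]
      omega
    have hFdeg : degreeOf p F < d := by
      rw [degreeOf_lt_iff hpd]
      intro m' hm'
      rw [MvPolynomial.mem_support_iff, hF] at hm'
      by_contra hcon
      rw [coeff_modMonomial_of_le] at hm'
      · exact hm' rfl
      · rw [Finsupp.single_le_iff]; omega
    have hFV : F.vars ⊆ f.vars := by
      intro n hn
      rw [mem_vars] at hn
      obtain ⟨m', hm', hnm⟩ := hn
      rw [MvPolynomial.mem_support_iff, hF] at hm'
      rw [mem_vars]
      refine ⟨m', ?_, hnm⟩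
      rw [MvPolynomial.mem_support_iff]
      intro hz
      by_cases hle : Finsupp.single p d ≤ m'
      · rw [coeff_modMonomial_of_le _ hle] at hm'; exact hm' rfl
      · rw [coeff_modMonomial_of_not_le _ hle, hz] at hm'; exact hm' rfl
    have hI0 : I ≠ 0 := by
      intro h0
      rw [h0, zero_mul, zero_add] at hsplit
      rw [hsplit] at hFdeg
      omega
    obtain ⟨k, q, r', heq, hr'deg, hr'V⟩ :=
      SDCF.pseudo_div p d hpd I F hIdeg hFdeg (Finset.range (p + 1))
        (fun n hn => Finset.mem_range.mpr (Nat.lt_succ_of_le (hfv n (hIV hn))))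
        (fun n hn => Finset.mem_range.mpr (Nat.lt_succ_of_le (hfv n (hFV hn))))
        (by simp) (degreeOf p r) r
        (fun n hn => Finset.mem_range.mpr (Nat.lt_succ_of_le (hrv n hn))) le_rfl
    rw [hsplit] at heq
    have hr'P : r' ∈ P := by
      have h1 : r' = I ^ k * r - q * f := by rw [heq]; ring
      rw [h1]
      exact Ideal.sub_mem P (Ideal.mul_mem_left P _ hrP) (Ideal.mul_mem_left P q hfP)
    have hr'0 : r' = 0 := by
      by_contra h0
      exact hnotP r' h0
        (fun n hn => by have := Finset.mem_range.mp (hr'V hn); omega) hr'deg hr'P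
    rw [hr'0, add_zero] at heq
    have hfprime : Prime f := UniqueFactorizationMonoid.irreducible_iff_prime.mp hf
    have hInotP : I ∉ P := hnotP I hI0 (fun n hn => hfv n (hIV hn)) (by omega)
    have hfr : f ∣ r := by
      have hdvd : f ∣ I ^ k * r := ⟨q, by rw [heq, mul_comm]⟩
      rcases hfprime.2.2 _ _ hdvd with h1 | h1
      · exfalso
        obtain ⟨w, hw⟩ := hfprime.dvd_of_dvd_pow h1
        exact hInotP (by rw [hw]; exact Ideal.mul_mem_right w P hfP)
      · exact h1
    obtain ⟨w, hw⟩ := hfr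
    show ∃ m' : ℕ, sep f ^ m' * h ∈ diffIdeal D f
    refine ⟨m, ?_⟩
    have hfmem : f ∈ diffIdeal D f := Ideal.subset_span ⟨0, rfl⟩
    have h4 : sep f ^ m * h = (sep f ^ m * h - r) + f * w := by rw [← hw]; ring
    rw [h4]
    exact Ideal.add_mem _ hmem (Ideal.mul_mem_right w _ hfmem)
  · -- saturation ⊆ P
    rintro h ⟨m, hm⟩
    have h1 : sep f ^ m * h ∈ P := hdiffP hm
    rcases hPprime.mem_or_mem h1 with h2 | h2
    · exact absurd (hPprime.mem_of_pow_mem m h2) hsepP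
    · exact h2
end
end

section
/- Let (K, δ) be a separably differentially closed field of characteristic p > 0. Then the extension K/C_K of K over its field of constants has infinite degree; consequently [K : K^p] is infinite, so K is a separably closed field of infinite degree of imperfection. -/
set_option synthInstance.maxHeartbeats 1000000
set_option maxHeartbeats 1000000

open MvPolynomial
noncomputable section
variable {K : Type*} [Field K]

section Aux
variable {K : Type*} [Field K]

/-- iterates of a derivation kill zero -/
lemma iter_zero (δ : Derivation ℤ K K) (k : ℕ) : (⇑δ)^[k] (0 : K) = 0 := by
  induction k with
  | zero => rfl
  | succ k ih => rw [Function.iterate_succ_apply', ih, map_zero]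

lemma iter_high_zero (δ : Derivation ℤ K K) (a : K) (n : ℕ) (h0 : (⇑δ)^[n] a = 0)
    {k : ℕ} (hk : n ≤ k) : (⇑δ)^[k] a = 0 := by
  obtain ⟨m, rfl⟩ := Nat.exists_eq_add_of_le hk
  rw [Nat.add_comm, Function.iterate_add_apply, h0, iter_zero]

lemma delta_const_mul (δ : Derivation ℤ K K) {c : K} (hc : δ c = 0) (x : K) :
    δ (c * x) = c * δ x := by
  rw [Derivation.leibniz, hc]; simp

lemma iter_sum (δ : Derivation ℤ K K) {ι : Type*} (s : Finset ι) (c : ι → K)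
    (hc : ∀ i, δ (c i) = 0) (x : ι → K) (k : ℕ) :
    (⇑δ)^[k] (∑ i ∈ s, c i * x i) = ∑ i ∈ s, c i * (⇑δ)^[k] (x i) := by
  induction k with
  | zero => rfl
  | succ k ih =>
    rw [Function.iterate_succ_apply', ih, map_sum]
    refine Finset.sum_congr rfl fun i _ => ?_
    rw [delta_const_mul δ (hc i)]
    congr 1
    exact (Function.iterate_succ_apply' _ _ _).symm

/-- Key lemma: a subfield annihilated by δ gives no finite dimension. -/
lemma not_finiteDimensional_of_const (δ : Derivation ℤ K K) (h : SDCFAx δ)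
    (S : Subfield K) (hS : ∀ c ∈ S, δ c = 0) : ¬ FiniteDimensional S K := by
  intro hFD
  set n := Module.finrank S K with hn
  -- get a with δ^[n+1] a = 0, δ^[n] a ≠ 0
  obtain ⟨a, ha0, ha1⟩ := h (X (n + 1)) (X n) (X_ne_zero _) (X_ne_zero _)
    (by rw [sep, ordOf, vars_X, Finset.sup_singleton, id, pderiv_X_self]; exact one_ne_zero)
    (by rw [ordOf, ordOf, vars_X, vars_X, Finset.sup_singleton, Finset.sup_singleton]
        exact Nat.lt_succ_self n)
  rw [evalD, eval_X] at ha0 ha1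
  have hli : LinearIndependent S (fun i : Fin (n + 1) => (⇑δ)^[(i : ℕ)] a) := by
    rw [Fintype.linearIndependent_iff]
    intro c hsum
    have hsum' : ∑ i : Fin (n + 1), (c i : K) * (⇑δ)^[(i : ℕ)] a = 0 := by
      rw [← hsum]; exact Finset.sum_congr rfl fun i _ => rfl
    have key : ∀ m : ℕ, ∀ j : Fin (n + 1), (j : ℕ) = m → c j = 0 := by
      intro m
      induction m using Nat.strong_induction_on with
      | _ m ih =>
        intro j hj
        have h2 := iter_sum δ Finset.univ (fun i => (c i : K)) (fun i => hS _ (c i).2)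
          (fun i : Fin (n + 1) => (⇑δ)^[(i : ℕ)] a) (n - (j : ℕ))
        rw [hsum', iter_zero] at h2
        have h3 : ∀ i : Fin (n + 1), (⇑δ)^[n - (j : ℕ)] ((⇑δ)^[(i : ℕ)] a)
            = (⇑δ)^[n - (j : ℕ) + (i : ℕ)] a := fun i => (Function.iterate_add_apply _ _ _ _).symm
        have h4 : ∑ i : Fin (n + 1), (c i : K) * (⇑δ)^[n - (j : ℕ) + (i : ℕ)] a = 0 := by
          rw [← h2.symm]; exact Finset.sum_congr rfl fun i _ => by rw [h3]
        have hj' : (j : ℕ) ≤ n := Nat.lt_succ_iff.mp j.2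
        have h5 : (c j : K) * (⇑δ)^[n] a = 0 := by
          rw [← Nat.sub_add_cancel hj'] at ha1 ⊢
          rw [← h4]
          refine (Finset.sum_eq_single_of_mem (f := fun i : Fin (n + 1) =>
            (c i : K) * (⇑δ)^[n - (j : ℕ) + (i : ℕ)] a) j (Finset.mem_univ j)
            (fun b _ hb => ?_)).symm
          rcases lt_or_gt_of_ne (fun hv : (b : ℕ) = (j : ℕ) => hb (Fin.ext hv)) with hlt | hgt
          · simp only [ih (b : ℕ) (hj ▸ hlt) b rfl, ZeroMemClass.coe_zero, zero_mul]
          · have hnb : n + 1 ≤ n - (j : ℕ) + (b : ℕ) := by omega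
            simp only [iter_high_zero δ a (n + 1) ha0 hnb, mul_zero]
        have h6 : (c j : K) = 0 := by
          rcases mul_eq_zero.mp h5 with h | h
          · exact h
          · exact absurd h ha1
        exact Subtype.ext h6
    exact fun j => key (j : ℕ) j rfl
  have := hli.fintype_card_le_finrank
  rw [Fintype.card_fin, ← hn] at this
  omega

end Aux

/-- A separably differentially closed field of characteristic `p > 0` has `[K : C_K]`
infinite, hence `[K : K^p]` infinite; in particular `K` is separably closed of infinite
degree of imperfection. -/
theorem stmt11 {K : Type*} [Field K] (p : ℕ) [Fact p.Prime] [CharP K p]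
    (δ : Derivation ℤ K K) (h : SDCFAx δ) :
    ¬ FiniteDimensional (constants δ) K ∧
    ¬ FiniteDimensional ((frobenius K p).fieldRange) K ∧
    IsSepClosed K := by
  refine ⟨not_finiteDimensional_of_const δ h (constants δ) (fun c hc => hc), ?_, ?_⟩
  · refine not_finiteDimensional_of_const δ h _ (fun c hc => ?_)
    obtain ⟨y, rfl⟩ := RingHom.mem_fieldRange.mp hc
    show δ (y ^ p) = 0
    rw [Derivation.leibniz_pow, ← Nat.cast_smul_eq_nsmul K, CharP.cast_eq_zero K p, zero_smul]
  · refine IsSepClosed.of_exists_root K fun q hm hirr hsep => ?_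
    set f : MvPolynomial ℕ K := Polynomial.aeval (X 1 : MvPolynomial ℕ K) q with hf
    set ψ : MvPolynomial ℕ K →ₐ[K] Polynomial K :=
      MvPolynomial.aeval (fun _ : ℕ => Polynomial.X) with hψ
    have hψf : ψ f = q := by
      rw [hf, ← Polynomial.aeval_algHom_apply, MvPolynomial.aeval_X,
        Polynomial.aeval_X_left_apply]
    have hdeg : 0 < q.natDegree := hirr.natDegree_pos
    have hfne : f ≠ 0 := by
      intro h0
      have hq0 : q = 0 := by rw [← hψf, h0, map_zero]
      rw [hq0] at hdeg
      simp at hdeg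
    have hsub : (f.vars : Set ℕ) ⊆ {1} := by
      rw [← MvPolynomial.mem_supported]
      rw [MvPolynomial.supported]
      simp only [Set.image_singleton, Algebra.adjoin_singleton_eq_range_aeval]
      exact ⟨q, rfl⟩
    have hord : ordOf f = 1 := by
      rcases Finset.subset_singleton_iff.mp (by exact_mod_cast hsub) with hv | hv
      · exfalso
        have : f ∈ MvPolynomial.supported K (∅ : Set ℕ) := by
          rw [MvPolynomial.mem_supported, hv]; simp
        rw [MvPolynomial.supported_empty, Algebra.mem_bot] at this
        obtain ⟨c, hc⟩ := this
        have : q = Polynomial.C c := by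
          rw [← hψf, ← hc]; simp [hψ, MvPolynomial.algebraMap_eq]
        rw [this] at hdeg
        simp at hdeg
      · rw [ordOf, hv, Finset.sup_singleton, id]
    have hqd : Polynomial.derivative q ≠ 0 := by
      intro h0
      have := hsep
      rw [Polynomial.Separable, h0, isCoprime_zero_right] at this
      exact hirr.not_isUnit this
    have hsep' : sep f ≠ 0 := by
      rw [sep, hord]
      have : (MvPolynomial.pderiv 1) f
          = Polynomial.aeval (X 1 : MvPolynomial ℕ K) (Polynomial.derivative q) := by
        rw [hf, Derivation.map_aeval]; simp [smul_eq_mul]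
      rw [this]
      intro h0
      apply hqd
      have : ψ (Polynomial.aeval (X 1 : MvPolynomial ℕ K) (Polynomial.derivative q))
          = Polynomial.derivative q := by
        rw [← Polynomial.aeval_algHom_apply, MvPolynomial.aeval_X,
          Polynomial.aeval_X_left_apply]
      rw [← this, h0, map_zero]
    have hordg : ordOf (1 : MvPolynomial ℕ K) < ordOf f := by
      rw [hord, ordOf, vars_one]; simp
    obtain ⟨a, ha, -⟩ := h f 1 hfne one_ne_zero hsep' hordg
    refine ⟨δ a, ?_⟩
    have heval : evalD δ a f = q.eval (δ a) := by
      rw [evalD, hf]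
      have h1 : MvPolynomial.eval (fun m => (⇑δ)^[m] a) (Polynomial.aeval (X 1 : MvPolynomial ℕ K) q)
          = MvPolynomial.aeval (fun m => (⇑δ)^[m] a) (Polynomial.aeval (X 1 : MvPolynomial ℕ K) q) := by
        rw [← MvPolynomial.coe_aeval_eq_eval]; rfl
      rw [h1, ← Polynomial.aeval_algHom_apply, MvPolynomial.aeval_X, ← Polynomial.coe_aeval_eq_eval]
      rfl
    rw [← heval, ha]
end
end

section
/- Let (K, δ) be a separably differentially closed field of characteristic p > 0. Then the field of constants C_K is separably closed and has infinite degree of imperfection, i.e. [C_K : C_K^p] is infinite. -/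
set_option synthInstance.maxHeartbeats 1000000
set_option maxHeartbeats 1000000

open MvPolynomial
noncomputable section
variable {K : Type*} [Field K]

/-- embedding of polynomials into differential polynomials via `X 1` -/
def toDiff (q : Polynomial K) : MvPolynomial ℕ K :=
  q.eval₂ MvPolynomial.C (X 1)

def retr : MvPolynomial ℕ K →+* Polynomial K :=
  MvPolynomial.eval₂Hom (Polynomial.C : K →+* Polynomial K) (fun _ => Polynomial.X)

lemma retr_toDiff (q : Polynomial K) : retr (toDiff q) = q := by
  rw [toDiff, Polynomial.hom_eval₂]
  have h1 : (retr : MvPolynomial ℕ K →+* Polynomial K).comp MvPolynomial.C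
      = Polynomial.C := by
    ext a
    simp [retr]
  have h2 : retr (X 1 : MvPolynomial ℕ K) = Polynomial.X := by simp [retr]
  rw [h1, h2, Polynomial.eval₂_C_X]

lemma toDiff_ne_zero {q : Polynomial K} (hq : q ≠ 0) : toDiff q ≠ 0 := by
  intro h
  apply hq
  have := retr_toDiff (K := K) q
  rw [h, map_zero] at this
  exact this.symm

lemma eval_toDiff (v : ℕ → K) (q : Polynomial K) :
    MvPolynomial.eval v (toDiff q) = q.eval (v 1) := by
  rw [toDiff, Polynomial.hom_eval₂]
  have h1 : (MvPolynomial.eval v).comp (MvPolynomial.C (σ := ℕ)) = RingHom.id K := by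
    ext a; simp
  rw [h1, eval_X]
  rfl

lemma pderiv_toDiff (q : Polynomial K) :
    pderiv 1 (toDiff q) = toDiff q.derivative := by
  induction q using Polynomial.induction_on' with
  | add p q hp hq =>
      simp only [toDiff] at hp hq ⊢
      rw [Polynomial.eval₂_add, map_add, hp, hq, Polynomial.derivative_add,
        Polynomial.eval₂_add]
  | monomial n a =>
      rw [toDiff, Polynomial.eval₂_monomial, Polynomial.derivative_monomial, toDiff,
        Polynomial.eval₂_monomial, pderiv_C_mul, pderiv_pow, pderiv_X_self]
      rw [map_mul, map_natCast]
      ring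

lemma vars_toDiff (q : Polynomial K) : (toDiff q).vars ⊆ {1} := by
  induction q using Polynomial.induction_on' with
  | add p q hp hq =>
      rw [toDiff, Polynomial.eval₂_add]
      exact (vars_add_subset _ _).trans (Finset.union_subset hp hq)
  | monomial n a =>
      rw [toDiff, Polynomial.eval₂_monomial]
      refine (vars_mul _ _).trans (Finset.union_subset ?_ ?_)
      · rw [vars_C]; exact Finset.empty_subset _
      · refine (vars_pow _ _).trans ?_
        rcases subsingleton_or_nontrivial K with h | h
        · have : (X 1 : MvPolynomial ℕ K) = C 0 := Subsingleton.elim _ _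
          rw [this, vars_C]; exact Finset.empty_subset _
        · rw [vars_X]

lemma coeff_toDiff (q : Polynomial K) (n : ℕ) :
    MvPolynomial.coeff (Finsupp.single 1 n) (toDiff q) = q.coeff n := by
  induction q using Polynomial.induction_on' with
  | add p q hp hq =>
      simp only [toDiff] at hp hq ⊢
      rw [Polynomial.eval₂_add, MvPolynomial.coeff_add, Polynomial.coeff_add, hp, hq]
  | monomial m a =>
      rw [toDiff, Polynomial.eval₂_monomial, MvPolynomial.coeff_C_mul,
        MvPolynomial.coeff_X_pow, Polynomial.coeff_monomial]
      have : Finsupp.single (1:ℕ) m = Finsupp.single 1 n ↔ m = n :=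
        ⟨fun h => Finsupp.single_injective 1 h, fun h => by rw [h]⟩
      by_cases hmn : m = n
      · simp [this, hmn]
      · simp [this, hmn]

lemma ordOf_toDiff [Nontrivial K] (q : Polynomial K) (hq : q.natDegree ≠ 0) :
    ordOf (toDiff q) = 1 := by
  have hq0 : q ≠ 0 := fun h => hq (by simp [h])
  apply le_antisymm
  · refine Finset.sup_le fun x hx => ?_
    have := vars_toDiff q hx
    simp only [Finset.mem_singleton] at this
    simp [this]
  · have h1 : (1:ℕ) ∈ (toDiff q).vars := by
      rw [MvPolynomial.mem_vars]
      refine ⟨Finsupp.single 1 q.natDegree, ?_, ?_⟩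
      · rw [MvPolynomial.mem_support_iff, coeff_toDiff]
        exact Polynomial.leadingCoeff_ne_zero.mpr hq0
      · rw [Finsupp.support_single_ne_zero _ hq]; simp
    exact Finset.le_sup (f := id) h1

lemma ordOf_one : ordOf (1 : MvPolynomial ℕ K) = 0 := by
  have : (1 : MvPolynomial ℕ K).vars = ∅ := by
    rw [← C_1, vars_C]
  rw [ordOf, this, Finset.sup_empty]
  rfl

/-- every monic irreducible separable polynomial over the constants has a root there -/
lemma key_root (δ : Derivation ℤ K K) (h : SDCFAx δ)
    (P : Polynomial (constants δ)) (hm : P.Monic) (hi : Irreducible P) (hs : P.Separable) :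
    ∃ x, P.eval x = 0 := by
  set Q : Polynomial K := P.map (algebraMap (constants δ) K) with hQ
  have hPdeg : P.natDegree ≠ 0 := hi.natDegree_pos.ne'
  have hQdeg : Q.natDegree ≠ 0 := by
    rwa [hQ, Polynomial.natDegree_map]
  have hQ0 : Q ≠ 0 := fun h0 => hQdeg (by simp [h0])
  have hQsep : Q.Separable := hs.map
  have hQder : Q.derivative ≠ 0 := by
    intro h0
    have : IsUnit Q := by
      have := hQsep
      rw [Polynomial.Separable, h0] at this
      exact (isCoprime_zero_right.mp this)
    exact hQdeg (Polynomial.natDegree_eq_zero_of_isUnit this)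
  -- apply the axiom with f = toDiff Q, g = 1
  have hord : ordOf (toDiff Q) = 1 := ordOf_toDiff Q hQdeg
  have hsep : sep (toDiff Q) ≠ 0 := by
    rw [sep, hord, pderiv_toDiff]
    exact toDiff_ne_zero hQder
  obtain ⟨a, hfa, -⟩ := h (toDiff Q) 1 (toDiff_ne_zero hQ0) one_ne_zero hsep
    (by rw [ordOf_one, hord]; norm_num)
  set b : K := δ a with hb
  have hQb : Q.eval b = 0 := by
    have := hfa
    rw [evalD, eval_toDiff] at this
    simpa using this
  -- b is a constant
  have hmap : δ.mapCoeffs Q = 0 := by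
    apply PolynomialModule.ext; apply Finsupp.ext
    intro i
    show δ (Q.coeff i) = 0
    rw [hQ, Polynomial.coeff_map]
    exact (P.coeff i).2
  have hδb : δ b = 0 := by
    have h1 := δ.apply_eval_eq b Q
    rw [hQb, map_zero, hmap, map_zero, zero_add, smul_eq_mul] at h1
    -- h1 : 0 = Q.derivative.eval b * δ b
    have hne : Q.derivative.eval b ≠ 0 := by
      obtain ⟨u, v, huv⟩ := hQsep
      intro h0
      have := congrArg (Polynomial.eval b) huv
      rw [Polynomial.eval_add, Polynomial.eval_mul, Polynomial.eval_mul, hQb, h0,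
        Polynomial.eval_one, mul_zero, mul_zero, add_zero] at this
      exact zero_ne_one this
    have := h1.symm
    rcases mul_eq_zero.mp this with h0 | h0
    · exact absurd h0 hne
    · exact h0
  refine ⟨⟨b, hδb⟩, ?_⟩
  apply (algebraMap (constants δ) K).injective
  rw [map_zero]
  have heq : Q.eval b = algebraMap (constants δ) K (P.eval ⟨b, hδb⟩) := by
    rw [hQ, Polynomial.eval_map]
    exact Polynomial.eval₂_at_apply (algebraMap (constants δ) K) ⟨b, hδb⟩
  rw [← heq, hQb]

lemma iter_smul_const (δ : Derivation ℤ K K) {c : K} (hc : δ c = 0) (x : K) (i : ℕ) :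
    (⇑δ)^[i] (c * x) = c * (⇑δ)^[i] x := by
  induction i with
  | zero => rfl
  | succ i ih =>
      rw [Function.iterate_succ_apply', ih, Function.iterate_succ_apply',
        Derivation.leibniz, hc, smul_eq_mul, smul_eq_mul, mul_zero, add_zero]

lemma iter_sum_s12 (δ : Derivation ℤ K K) {n : ℕ} (c v : Fin n → K)
    (hc : ∀ j, δ (c j) = 0) (i : ℕ) :
    (⇑δ)^[i] (∑ j, c j * v j) = ∑ j, c j * (⇑δ)^[i] (v j) := by
  have hadd : ∀ (i : ℕ) (w : Fin n → K),
      (⇑δ)^[i] (∑ j, w j) = ∑ j, (⇑δ)^[i] (w j) := by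
    intro i
    induction i with
    | zero => intro w; rfl
    | succ i ih =>
        intro w
        rw [Function.iterate_succ_apply', ih, map_sum]
        congr 1
        funext j
        rw [Function.iterate_succ_apply']
  rw [hadd i fun j => c j * v j]
  congr 1
  funext j
  exact iter_smul_const δ (hc j) (v j) i

/-- linear independence over constants from nonzero Wronskian -/
lemma wronskian_li (δ : Derivation ℤ K K) {n : ℕ} (v : Fin n → K)
    (hdet : (Matrix.of fun i j : Fin n => (⇑δ)^[(i:ℕ)] (v j)).det ≠ 0)
    (c : Fin n → K) (hc : ∀ j, δ (c j) = 0) (hsum : ∑ j, c j * v j = 0) :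
    ∀ j, c j = 0 := by
  set M : Matrix (Fin n) (Fin n) K := Matrix.of fun i j : Fin n => (⇑δ)^[(i:ℕ)] (v j) with hM
  have hmv : M.mulVec c = 0 := by
    funext i
    show ∑ j, M i j * c j = 0
    have : ∑ j, M i j * c j = (⇑δ)^[(i:ℕ)] (∑ j, c j * v j) := by
      rw [iter_sum_s12 δ (fun j => c j) (fun j => v j) hc i]
      · congr 1
        funext j
        rw [mul_comm]
        rfl
    rw [this, hsum]
    induction (i : ℕ) with
    | zero => rfl
    | succ k ih => rw [Function.iterate_succ_apply', ih, map_zero]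
  intro j
  have h1 : M⁻¹.mulVec (M.mulVec c) = c := by
    rw [Matrix.mulVec_mulVec, Matrix.nonsing_inv_mul _ (Ne.isUnit hdet), Matrix.one_mulVec]
  rw [hmv, Matrix.mulVec_zero] at h1
  exact congrFun h1.symm j

lemma ordOf_X (m : ℕ) [Nontrivial K] : ordOf (X m : MvPolynomial ℕ K) = m := by
  rw [ordOf, vars_X, Finset.sup_singleton]
  rfl

/-- existence of arbitrarily large families with nonzero Wronskian -/
lemma exists_wronskian (δ : Derivation ℤ K K) (h : SDCFAx δ) (n : ℕ) :
    ∃ v : Fin n → K, (Matrix.of fun i j : Fin n => (⇑δ)^[(i:ℕ)] (v j)).det ≠ 0 := by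
  induction n with
  | zero =>
      exact ⟨fun j => 0, by rw [Matrix.det_fin_zero]; exact one_ne_zero⟩
  | succ n ih =>
      obtain ⟨v, hdet⟩ := ih
      set N : Matrix (Fin (n+1)) (Fin n) K := Matrix.of fun i j => (⇑δ)^[(i:ℕ)] (v j) with hN
      set c : Fin (n+1) → K := fun i =>
        (-1 : K) ^ ((i:ℕ) + n) * (Matrix.of fun r s : Fin n => N (i.succAbove r) s).det with hc
      set g : MvPolynomial ℕ K := ∑ i : Fin (n+1), MvPolynomial.C (c i) * X (i:ℕ) with hg
      have hclast : c (Fin.last n) = (Matrix.of fun i j : Fin n => (⇑δ)^[(i:ℕ)] (v j)).det := by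
        simp only [hc]
        have h2 : (-1 : K) ^ (n + n) = 1 := Even.neg_one_pow ⟨n, rfl⟩
        rw [Fin.val_last, h2, one_mul]
        congr 1
        funext r s
        rw [Fin.succAbove_last]
        rfl
      have hg0 : g ≠ 0 := by
        intro h0
        have hco : MvPolynomial.coeff (Finsupp.single n 1) g = c (Fin.last n) := by
          rw [hg, MvPolynomial.coeff_sum]
          have : ∀ i : Fin (n+1), MvPolynomial.coeff (Finsupp.single n 1)
              (MvPolynomial.C (c i) * X (i:ℕ)) = if i = Fin.last n then c i else 0 := by
            intro i
            rw [MvPolynomial.coeff_C_mul, MvPolynomial.coeff_X']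
            by_cases hi : i = Fin.last n
            · have : ((i:ℕ)) = n := by rw [hi]; rfl
              simp [hi, this]
            · have hne : ((i:ℕ)) ≠ n := by
                intro hcon
                exact hi (Fin.ext hcon)
              have : Finsupp.single (i:ℕ) 1 ≠ Finsupp.single (n:ℕ) 1 := fun hcon =>
                hne ((Finsupp.single_left_inj one_ne_zero).mp hcon)
              simp [hi, this]
          rw [Finset.sum_congr rfl fun i _ => this i, Finset.sum_ite_eq' Finset.univ,
            if_pos (Finset.mem_univ _)]
        rw [h0, MvPolynomial.coeff_zero, hclast] at hco
        exact hdet hco.symm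
      have hordg : ordOf g ≤ n := by
        refine Finset.sup_le fun x hx => ?_
        have hsub : g.vars ⊆ Finset.univ.biUnion
            fun i : Fin (n+1) => (MvPolynomial.C (c i) * X (i:ℕ)).vars := by
          rw [hg]
          exact vars_sum_subset _ _
        obtain ⟨i, -, hxi⟩ := Finset.mem_biUnion.mp (hsub hx)
        have : (MvPolynomial.C (c i) * X (i:ℕ)).vars ⊆ {(i:ℕ)} := by
          refine (vars_mul _ _).trans (Finset.union_subset ?_ ?_)
          · rw [vars_C]; exact Finset.empty_subset _
          · rw [vars_X]
        have := this hxi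
        simp only [Finset.mem_singleton] at this
        have : x ≤ n := by rw [this]; exact Fin.is_le i
        simpa using this
      obtain ⟨a, -, hga⟩ := h (X (n+1)) g (X_ne_zero _) hg0
        (by rw [sep, ordOf_X, pderiv_X_self]; exact one_ne_zero)
        (by rw [ordOf_X]; exact Nat.lt_succ_of_le hordg)
      refine ⟨(Fin.snoc v a : Fin (n+1) → K), ?_⟩
      have heval : evalD δ a g = ∑ i : Fin (n+1), c i * (⇑δ)^[(i:ℕ)] a := by
        rw [evalD, hg, map_sum]
        congr 1
        funext i
        rw [map_mul, eval_C, eval_X]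
      rw [Matrix.det_succ_column _ (Fin.last n)]
      have hexp : ∀ i : Fin (n+1),
          (-1 : K) ^ ((i:ℕ) + ((Fin.last n : Fin (n+1)):ℕ)) *
            (Matrix.of fun r s : Fin (n+1) => (⇑δ)^[(r:ℕ)] ((Fin.snoc v a : Fin (n+1) → K) s)) i (Fin.last n) *
            ((Matrix.of fun r s : Fin (n+1) => (⇑δ)^[(r:ℕ)] ((Fin.snoc v a : Fin (n+1) → K) s)).submatrix
              i.succAbove (Fin.last n).succAbove).det
          = c i * (⇑δ)^[(i:ℕ)] a := by
        intro i
        have h1 : (Matrix.of fun r s : Fin (n+1) => (⇑δ)^[(r:ℕ)] ((Fin.snoc v a : Fin (n+1) → K) s)) i (Fin.last n)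
            = (⇑δ)^[(i:ℕ)] a := by
          show (⇑δ)^[(i:ℕ)] ((Fin.snoc v a : Fin (n+1) → K) (Fin.last n)) = _
          rw [Fin.snoc_last]
        have h2 : ((Matrix.of fun r s : Fin (n+1) => (⇑δ)^[(r:ℕ)] ((Fin.snoc v a : Fin (n+1) → K) s)).submatrix
              i.succAbove (Fin.last n).succAbove)
            = Matrix.of fun r s : Fin n => N (i.succAbove r) s := by
          funext r s
          show (⇑δ)^[((i.succAbove r : Fin (n+1)):ℕ)] ((Fin.snoc v a : Fin (n+1) → K) ((Fin.last n).succAbove s)) = _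
          rw [Fin.succAbove_last]
          show (⇑δ)^[((i.succAbove r : Fin (n+1)):ℕ)] ((Fin.snoc v a : Fin (n+1) → K) s.castSucc) = _
          rw [Fin.snoc_castSucc]
          rfl
        rw [h1, h2, hc]
        have h3 : ((Fin.last n : Fin (n+1)) : ℕ) = n := rfl
        rw [h3]
        ring
      rw [Finset.sum_congr rfl fun i _ => hexp i, ← heval]
      exact hga

/-- If `(K, δ)` is separably differentially closed of characteristic `p > 0`, then the
field of constants `C_K` is separably closed and `[C_K : C_K^p]` is infinite. -/
theorem stmt12 {K : Type*} [Field K] (p : ℕ) [Fact p.Prime] [CharP K p]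
    (δ : Derivation ℤ K K) (h : SDCFAx δ) :
    IsSepClosed (constants δ) ∧
    ¬ FiniteDimensional ((frobenius (constants δ) p).fieldRange) (constants δ) := by
  have hp0 : p ≠ 0 := (Fact.out : p.Prime).ne_zero
  constructor
  · exact IsSepClosed.of_exists_root _ (key_root δ h)
  · intro hFD
    set F := (frobenius (constants δ) p).fieldRange with hF
    set d := Module.finrank F (constants δ) with hd
    obtain ⟨v, hdet⟩ := exists_wronskian δ h (d+1)
    have hpow : ∀ x : K, δ (x ^ p) = 0 := by
      intro x
      rw [Derivation.leibniz_pow, nsmul_eq_mul, CharP.cast_eq_zero K p, zero_mul]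
    set w : Fin (d+1) → (constants δ) := fun j => ⟨v j ^ p, hpow _⟩ with hw
    have hli : LinearIndependent F w := by
      rw [Fintype.linearIndependent_iff]
      intro gc hsum j
      have hmem : ∀ j, ∃ x : constants δ, frobenius (constants δ) p x = (gc j : constants δ) :=
        fun j => RingHom.mem_fieldRange.mp (gc j).2
      choose cc hcc using hmem
      have hsumK : ∑ j, ((cc j : K) * v j) ^ p = 0 := by
        have h1 : ((∑ i, gc i • w i : constants δ) : K) = 0 := by rw [hsum]; rfl
        rw [← h1]
        have hc2 : ((∑ i, gc i • w i : constants δ) : K) = ∑ i, ((gc i • w i : constants δ) : K) :=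
          map_sum ((constants δ).subtype) _ Finset.univ
        rw [hc2]
        refine Finset.sum_congr rfl fun i _ => ?_
        show ((cc i : K) * v i) ^ p = ((gc i • w i : constants δ) : K)
        have h2 : (gc i • w i : constants δ) = ((gc i : constants δ) * w i : constants δ) := rfl
        rw [h2, ← hcc i]
        have h3 : (frobenius (constants δ) p (cc i)) = cc i ^ p := rfl
        rw [h3]
        push_cast
        show ((cc i : K) * v i) ^ p = (cc i : K) ^ p * ((v i ^ p : K))
        rw [mul_pow]
      have hzero : (∑ j, (cc j : K) * v j) ^ p = 0 := by
        calc (∑ j, (cc j : K) * v j) ^ p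
            = frobenius K p (∑ j, (cc j : K) * v j) := (frobenius_def p _).symm
          _ = ∑ j, frobenius K p ((cc j : K) * v j) := map_sum _ _ _
          _ = ∑ j, ((cc j : K) * v j) ^ p := Finset.sum_congr rfl fun j _ => frobenius_def p _
          _ = 0 := hsumK
      have hsum0 : ∑ j, (cc j : K) * v j = 0 :=
        pow_eq_zero_iff hp0 |>.mp hzero
      have hall := wronskian_li δ v hdet (fun j => (cc j : K)) (fun j => (cc j).2) hsum0
      have hccj : cc j = 0 := by
        have := hall j
        exact Subtype.ext this
      have : (gc j : constants δ) = 0 := by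
        rw [← hcc j, hccj, map_zero]
      exact Subtype.ext this
    have hcard := hli.fintype_card_le_finrank
    rw [Fintype.card_fin] at hcard
    omega
end
end

section
/- Let (K, δ) be a differential field of characteristic p > 0 such that K is separably closed as a field. If (L, δ) is a differential field extension of K in which every finite tuple is constrained over K, then L = K. Conversely, if K has this property (no proper constrained extension), then K is separably closed. -/
set_option synthInstance.maxHeartbeats 1000000
set_option maxHeartbeats 1000000

noncomputable section

open MvPolynomial

universe u

variable {K : Type u} [Field K]

/-- Evaluation of a differential polynomial in `m` differential variables (variable
`(i, j)` standing for `δʲ xᵢ`) at a tuple `β` of a differential field extension. -/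
def devalT {L : Type u} [Field L] [Algebra K L] (δL : Derivation ℤ L L) {m : ℕ}
    (β : Fin m → L) (f : MvPolynomial (Fin m × ℕ) K) : L :=
  aeval (fun q : Fin m × ℕ => (⇑δL)^[q.2] (β q.1)) f

/-- The defining differential ideal `I_δ(β/K)` of a tuple `β`. -/
def IdeltaT {L : Type u} [Field L] [Algebra K L] (δL : Derivation ℤ L L) {m : ℕ}
    (β : Fin m → L) : Ideal (MvPolynomial (Fin m × ℕ) K) :=
  RingHom.ker ((aeval (fun q : Fin m × ℕ => (⇑δL)^[q.2] (β q.1)) :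
    MvPolynomial (Fin m × ℕ) K →ₐ[K] L) : MvPolynomial (Fin m × ℕ) K →+* L)

/-- The differential subfield `K⟨β⟩` of `L` generated by a tuple `β` over `K`. -/
def dgen {L : Type u} [Field L] [Algebra K L] (δL : Derivation ℤ L L) {m : ℕ}
    (β : Fin m → L) : Subfield L :=
  Subfield.closure
    (Set.range (algebraMap K L) ∪ Set.range fun q : Fin m × ℕ => (⇑δL)^[q.2] (β q.1))

/-- `K⟨β⟩/K` is a separable field extension (characteristic `p`): every
`K^p`-linearly independent family in `K` remains linearly independent over `K⟨β⟩^p`. -/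
def sepTuple (p : ℕ) [Fact p.Prime] [CharP K p] {L : Type u} [Field L] [CharP L p]
    [Algebra K L] (δL : Derivation ℤ L L) {m : ℕ} (β : Fin m → L) : Prop :=
  ∀ (n : ℕ) (v : Fin n → K),
    LinearIndependent ((frobenius K p).fieldRange) v →
    LinearIndependent ((dgen (K := K) δL β).map (frobenius L p))
      (fun i => algebraMap K L (v i))

/-- A tuple `α` from a differential extension `(L, δL)` is constrained over `(K, δ)`:
`K⟨α⟩/K` is separable and there is `g` with `g(α) ≠ 0` such that every differential
specialisation `β` of `α` (in any differential field extension of `K`) with `K⟨β⟩/K`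
separable and `g(β) ≠ 0` is a generic specialisation, i.e. has the same defining
differential ideal. -/
def Constrained (p : ℕ) [Fact p.Prime] [CharP K p] (δ : Derivation ℤ K K)
    {L : Type u} [Field L] [CharP L p] [Algebra K L] (δL : Derivation ℤ L L)
    {m : ℕ} (α : Fin m → L) : Prop :=
  sepTuple (K := K) p δL α ∧
  ∃ g : MvPolynomial (Fin m × ℕ) K, devalT δL α g ≠ 0 ∧
    ∀ (M : Type u) [Field M] [CharP M p] [Algebra K M] (δM : Derivation ℤ M M),
      (∀ a : K, δM (algebraMap K M a) = algebraMap K M (δ a)) →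
      ∀ β : Fin m → M,
        IdeltaT (K := K) δL α ≤ IdeltaT (K := K) δM β →
        sepTuple (K := K) p δM β → devalT δM β g ≠ 0 →
        IdeltaT (K := K) δM β = IdeltaT (K := K) δL α



section Basic
variable {L : Type u} [Field L]

lemma iter_map_zero (δL : Derivation ℤ L L) (j : ℕ) : (⇑δL)^[j] 0 = 0 := by
  induction j with
  | zero => rfl
  | succ n ih => rw [Function.iterate_succ_apply, map_zero]; exact ih

lemma iter_zero_s13 (δL : Derivation ℤ L L) {x : L} (hx : δL x = 0) {j : ℕ} (hj : j ≠ 0) :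
    (⇑δL)^[j] x = 0 := by
  obtain ⟨n, rfl⟩ := Nat.exists_eq_succ_of_ne_zero hj
  rw [Function.iterate_succ_apply, hx, iter_map_zero]

lemma deriv_pow_char (p : ℕ) [Fact p.Prime] [CharP L p] (δL : Derivation ℤ L L) (a : L) :
    δL (a ^ p) = 0 := by
  rw [Derivation.leibniz_pow, nsmul_eq_mul, CharP.cast_eq_zero, zero_mul]

lemma infinite_of_isSepClosed (p : ℕ) [Fact p.Prime] [CharP K p] [IsSepClosed K] :
    Infinite K := by
  by_contra h
  rw [not_infinite_iff_finite] at h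
  letI := Fintype.ofFinite K
  set q := Fintype.card K with hq
  have hq2 : 1 < q := Fintype.one_lt_card
  have hdeg : (Polynomial.X ^ q - Polynomial.X + 1 : Polynomial K).degree = q := by
    have h1 : ((1 : Polynomial K) - Polynomial.X).degree < (Polynomial.X ^ q :
        Polynomial K).degree := by
      rw [Polynomial.degree_X_pow]
      refine lt_of_le_of_lt (Polynomial.degree_sub_le _ _) ?_
      rw [Polynomial.degree_one, Polynomial.degree_X]
      exact max_lt (by exact_mod_cast by omega) (by exact_mod_cast by omega)
    calc (Polynomial.X ^ q - Polynomial.X + 1 : Polynomial K).degree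
        = (Polynomial.X ^ q + (1 - Polynomial.X) : Polynomial K).degree := by ring_nf
      _ = q := by rw [Polynomial.degree_add_eq_left_of_degree_lt h1,
          Polynomial.degree_X_pow]
  have hsep : (Polynomial.X ^ q - Polynomial.X + 1 : Polynomial K).Separable := by
    have hcast : ((q : ℕ) : K) = 0 := FiniteField.cast_card_eq_zero (K := K)
    have hder : (Polynomial.X ^ q - Polynomial.X + 1 : Polynomial K).derivative = -1 := by
      simp [Polynomial.derivative_X_pow, hcast]
    rw [Polynomial.Separable, hder]
    exact ⟨0, -1, by ring⟩
  obtain ⟨x, hx⟩ := IsSepClosed.exists_root (k := K)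
      (Polynomial.X ^ q - Polynomial.X + 1) (by
      intro h0
      rw [hdeg] at h0
      have hq0 : q = 0 := by exact_mod_cast h0
      omega) hsep
  have hx' : x ^ q - x + 1 = 0 := by simpa using hx
  rw [FiniteField.pow_card, sub_self, zero_add] at hx'
  exact one_ne_zero hx'

end Basic



lemma mem_IdeltaT {L : Type u} [Field L] [Algebra K L] (δL : Derivation ℤ L L) {m : ℕ}
    (β : Fin m → L) (f : MvPolynomial (Fin m × ℕ) K) :
    f ∈ IdeltaT (K := K) δL β ↔ devalT (K := K) δL β f = 0 := by
  rw [IdeltaT, RingHom.mem_ker]; rfl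

section Sigma

variable (K)

def sigma1 : MvPolynomial (Fin 1 × ℕ) K →ₐ[K] Polynomial K :=
  aeval (fun q : Fin 1 × ℕ => if q.2 = 0 then Polynomial.X else 0)

variable {K}

lemma devalT_of_deriv_zero {L : Type u} [Field L] [Algebra K L] (δL : Derivation ℤ L L)
    {x : L} (hx : δL x = 0) (f : MvPolynomial (Fin 1 × ℕ) K) :
    devalT (K := K) δL ![x] f = Polynomial.aeval x (sigma1 K f) := by
  have h : (aeval (fun q : Fin 1 × ℕ => (⇑δL)^[q.2] ((![x] : Fin 1 → L) q.1)) :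
      MvPolynomial (Fin 1 × ℕ) K →ₐ[K] L) = (Polynomial.aeval x).comp (sigma1 K) := by
    apply MvPolynomial.algHom_ext
    intro q
    rw [aeval_X, AlgHom.comp_apply, sigma1, aeval_X, Matrix.cons_val_fin_one]
    by_cases hq : q.2 = 0
    · rw [hq, if_pos rfl]
      simp
    · rw [if_neg hq, iter_zero_s13 δL hx hq, map_zero]
  show (aeval (fun q : Fin 1 × ℕ => (⇑δL)^[q.2] ((![x] : Fin 1 → L) q.1)) :
      MvPolynomial (Fin 1 × ℕ) K →ₐ[K] L) f = _
  rw [h]; rfl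

end Sigma

lemma dgen_map_frobenius_self (p : ℕ) [Fact p.Prime] [CharP K p] (δ : Derivation ℤ K K)
    {m : ℕ} (β : Fin m → K) :
    (dgen (K := K) δ β).map (frobenius K p) = (frobenius K p).fieldRange := by
  apply le_antisymm
  · rintro y hy
    rw [Subfield.mem_map] at hy
    obtain ⟨x, -, rfl⟩ := hy
    exact ⟨x, rfl⟩
  · rintro y hy
    rw [RingHom.mem_fieldRange] at hy
    obtain ⟨x, rfl⟩ := hy
    rw [Subfield.mem_map]
    exact ⟨x, Subfield.subset_closure (Or.inl ⟨x, by rw [Algebra.algebraMap_self_apply]⟩), rfl⟩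

lemma sepTuple_self (p : ℕ) [Fact p.Prime] [CharP K p] (δ : Derivation ℤ K K) {m : ℕ}
    (β : Fin m → K) : sepTuple (K := K) p δ β := by
  intro n v hv
  rw [dgen_map_frobenius_self]
  simpa [Algebra.algebraMap_self_apply] using hv

lemma isAlgebraic_of_constrained (p : ℕ) [Fact p.Prime] [CharP K p] [IsSepClosed K]
    {L : Type u} [Field L] [CharP L p] [Algebra K L]
    (δ : Derivation ℤ K K) (δL : Derivation ℤ L L)
    (hcon : ∀ (m : ℕ) (α : Fin m → L), Constrained (K := K) p δ δL α) (a : L) :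
    IsAlgebraic K a := by
  by_contra ht
  have hp : 0 < p := (Fact.out (p := p.Prime)).pos
  set c := a ^ p with hc
  have hct : Transcendental K c := by
    intro hal
    exact ht (isAlgebraic_iff_isIntegral.mpr
      (IsIntegral.of_pow hp (isAlgebraic_iff_isIntegral.mp hal)))
  have hδc : δL c = 0 := deriv_pow_char p δL a
  obtain ⟨hsep, g, hg, hspec⟩ := hcon 1 ![c]
  have hgc : Polynomial.aeval c (sigma1 K g) ≠ 0 := by
    rw [← devalT_of_deriv_zero δL hδc]; exact hg
  have hg1 : sigma1 K g ≠ 0 := fun h => hgc (by rw [h, map_zero])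
  haveI : Infinite K := infinite_of_isSepClosed p
  have hexp : Polynomial.expand K p (sigma1 K g) ≠ 0 := by
    rw [Ne, Polynomial.expand_eq_zero hp]; exact hg1
  obtain ⟨d, hd⟩ : ∃ d : K, Polynomial.eval d (Polynomial.expand K p (sigma1 K g)) ≠ 0 := by
    by_contra hall
    push_neg at hall
    exact hexp (Polynomial.zero_of_eval_zero _ hall)
  rw [Polynomial.expand_eval] at hd
  set b := d ^ p with hb
  have hδb : δ b = 0 := deriv_pow_char p δ d
  have hgb : devalT (K := K) δ ![b] g ≠ 0 := by
    rw [devalT_of_deriv_zero δ hδb, Polynomial.coe_aeval_eq_eval]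
    exact hd
  have hle : IdeltaT (K := K) δL ![c] ≤ IdeltaT (K := K) δ ![b] := by
    intro f hf
    rw [mem_IdeltaT] at hf ⊢
    rw [devalT_of_deriv_zero δL hδc] at hf
    have h0 : sigma1 K f = 0 := transcendental_iff.mp hct _ hf
    rw [devalT_of_deriv_zero δ hδb, h0, map_zero]
  have heq := hspec K δ (by intro a; rw [Algebra.algebraMap_self_apply, Algebra.algebraMap_self_apply])
    ![b] hle (sepTuple_self p δ ![b]) hgb
  have hFb : (X ((0 : Fin 1), 0) - C b : MvPolynomial (Fin 1 × ℕ) K)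
      ∈ IdeltaT (K := K) δ ![b] := by
    rw [mem_IdeltaT, devalT, map_sub, aeval_X, aeval_C, Algebra.algebraMap_self_apply]
    simp
  rw [heq, mem_IdeltaT, devalT, map_sub, aeval_X, aeval_C] at hFb
  rw [sub_eq_zero] at hFb
  have hceq : c = algebraMap K L b := by simpa using hFb
  exact hct (hceq ▸ isAlgebraic_algebraMap (R := K) (A := L) b)

lemma exists_pow_mem_range (p : ℕ) [Fact p.Prime] [CharP K p] [IsSepClosed K]
    {L : Type u} [Field L] [Algebra K L] {a : L} (ha : IsAlgebraic K a) :
    ∃ (m : ℕ) (r : K), a ^ p ^ m = algebraMap K L r := by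
  have hint : IsIntegral K a := isAlgebraic_iff_isIntegral.mp ha
  have hirr := minpoly.irreducible hint
  haveI : ExpChar K p := ExpChar.prime (Fact.out)
  obtain ⟨g, hgsep, m, hgf⟩ := hirr.hasSeparableContraction p
  have hgirr : Irreducible g := by
    rw [← hgf] at hirr
    exact Polynomial.of_irreducible_expand (pow_ne_zero m (Fact.out (p := p.Prime)).ne_zero)
      hirr
  have hdeg : g.degree = 1 := IsSepClosed.degree_eq_one_of_irreducible K hgirr hgsep
  have hroot : Polynomial.aeval (a ^ p ^ m) g = 0 := by
    rw [← Polynomial.expand_aeval (p ^ m) g a, hgf]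
    exact minpoly.aeval K a
  have hgeq := Polynomial.eq_X_add_C_of_degree_eq_one hdeg
  have hlc : g.leadingCoeff ≠ 0 := Polynomial.leadingCoeff_ne_zero.mpr hgirr.ne_zero
  have hx : algebraMap K L g.leadingCoeff * (a ^ p ^ m) + algebraMap K L (g.coeff 0) = 0 := by
    rw [hgeq] at hroot
    simpa only [map_add, map_mul, Polynomial.aeval_X, Polynomial.aeval_C] using hroot
  refine ⟨m, -(g.coeff 0) / g.leadingCoeff, ?_⟩
  have hlcL : algebraMap K L g.leadingCoeff ≠ 0 := by
    simpa using (map_ne_zero_iff _ (algebraMap K L).injective).mpr hlc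
  rw [map_div₀, map_neg, eq_div_iff hlcL]
  linear_combination hx

lemma pth_root_of_constrained (p : ℕ) [Fact p.Prime] [CharP K p]
    {L : Type u} [Field L] [CharP L p] [Algebra K L] (δL : Derivation ℤ L L)
    (a : L) (k : K) (hk : algebraMap K L k = a ^ p)
    (hsep : sepTuple (K := K) p δL ![a]) : ∃ t : K, algebraMap K L t = a := by
  by_cases hpow : ∃ t : K, frobenius K p t = k
  · obtain ⟨t, ht⟩ := hpow
    refine ⟨t, frobenius_inj L p ?_⟩
    rw [frobenius_def, ← map_pow, ← frobenius_def, ht, hk, frobenius_def]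
  · exfalso
    have hv : LinearIndependent ((frobenius K p).fieldRange) ![(1 : K), k] := by
      rw [LinearIndependent.pair_iff]
      intro s t hst
      have hst' : (s : K) * 1 + (t : K) * k = 0 := hst
      by_cases ht0 : (t : K) = 0
      · have hs0 : (s : K) = 0 := by
          rw [ht0, zero_mul, add_zero, mul_one] at hst'
          exact hst'
        exact ⟨Subtype.ext hs0, Subtype.ext ht0⟩
      · exfalso
        obtain ⟨u, hu⟩ := s.2
        obtain ⟨w, hw⟩ := t.2
        refine hpow ⟨-u / w, ?_⟩
        rw [map_div₀, map_neg, hu, hw, div_eq_iff ht0]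
        linear_combination -hst'
    have hli := hsep 2 ![1, k] hv
    rw [Fintype.linearIndependent_iff] at hli
    have mem0 : frobenius L p (-a) ∈ (dgen (K := K) δL ![a]).map (frobenius L p) := by
      rw [Subfield.mem_map]
      refine ⟨-a, Subfield.neg_mem _ (Subfield.subset_closure (Or.inr ⟨((0 : Fin 1), 0), rfl⟩)), rfl⟩
    set S' := (dgen (K := K) δL ![a]).map (frobenius L p)
    have hzero := hli ![⟨frobenius L p (-a), mem0⟩, ⟨1, one_mem S'⟩] ?_ 1
    · have : (1 : L) = 0 := congrArg Subtype.val hzero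
      exact one_ne_zero this
    · rw [Fin.sum_univ_two]
      show frobenius L p (-a) * algebraMap K L (![(1 : K), k] 0)
          + 1 * algebraMap K L (![(1 : K), k] 1) = 0
      simp only [Matrix.cons_val_zero, Matrix.cons_val_one, Matrix.head_cons, map_one,
        one_mul, mul_one, hk, map_neg]
      rw [frobenius_def]
      ring

lemma forward_surj (p : ℕ) [Fact p.Prime] [CharP K p] [IsSepClosed K]
    (δ : Derivation ℤ K K) {L : Type u} [Field L] [CharP L p] [Algebra K L]
    (δL : Derivation ℤ L L)
    (hcon : ∀ (m : ℕ) (α : Fin m → L), Constrained (K := K) p δ δL α) :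
    Function.Surjective (algebraMap K L) := by
  have key : ∀ (m : ℕ) (a : L) (r : K), a ^ p ^ m = algebraMap K L r →
      ∃ k, algebraMap K L k = a := by
    intro m
    induction m with
    | zero => intro a r h; exact ⟨r, by simpa using h.symm⟩
    | succ n ih =>
      intro a r h
      obtain ⟨k, hk⟩ := ih (a ^ p) r (by rw [← pow_mul, mul_comm, ← pow_succ]; exact h)
      exact pth_root_of_constrained p δL a k hk ((hcon 1 ![a]).1)
  intro a
  obtain ⟨m, r, hmr⟩ := exists_pow_mem_range p (isAlgebraic_of_constrained p δ δL hcon a)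
  exact key m a r hmr

/-! ### Coefficient-wise application of a derivation to a polynomial -/

def pd (δ : Derivation ℤ K K) (g : Polynomial K) : Polynomial K :=
  Polynomial.ofFinsupp (AddMonoidAlgebra.ofCoeff (Finsupp.mapRange ⇑δ (map_zero δ) g.toFinsupp.coeff))

lemma pd_coeff (δ : Derivation ℤ K K) (g : Polynomial K) (n : ℕ) :
    (pd δ g).coeff n = δ (g.coeff n) := by
  rcases g with ⟨g⟩
  simp [pd, Polynomial.coeff]

lemma pd_add (δ : Derivation ℤ K K) (g h : Polynomial K) :
    pd δ (g + h) = pd δ g + pd δ h := by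
  ext n
  simp [pd_coeff, Polynomial.coeff_add]

lemma pd_C (δ : Derivation ℤ K K) (a : K) : pd δ (Polynomial.C a) = Polynomial.C (δ a) := by
  ext n
  rw [pd_coeff, Polynomial.coeff_C, Polynomial.coeff_C]
  split
  · rfl
  · exact map_zero δ

lemma pd_one (δ : Derivation ℤ K K) : pd δ 1 = 0 := by
  rw [← Polynomial.C_1, pd_C, Derivation.map_one_eq_zero, Polynomial.C_0]

lemma pd_mul (δ : Derivation ℤ K K) (g h : Polynomial K) :
    pd δ (g * h) = pd δ g * h + g * pd δ h := by
  ext n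
  rw [pd_coeff, Polynomial.coeff_mul, map_sum, Polynomial.coeff_add, Polynomial.coeff_mul,
    Polynomial.coeff_mul, ← Finset.sum_add_distrib]
  apply Finset.sum_congr rfl
  intro x _
  rw [Derivation.leibniz, smul_eq_mul, smul_eq_mul, pd_coeff, pd_coeff]
  ring

/-! ### A derivation on `AdjoinRoot f` extending `δ`, for `f` monic irreducible separable -/

section RootDeriv

variable (δ : Derivation ℤ K K) (f : Polynomial K) [Fact (Irreducible f)]

def rootTan : AdjoinRoot f :=
  -(Polynomial.aeval (AdjoinRoot.root f) (pd δ f)) /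
    Polynomial.aeval (AdjoinRoot.root f) f.derivative

def Phi (g : Polynomial K) : AdjoinRoot f :=
  AdjoinRoot.mk f (pd δ g) + Polynomial.aeval (AdjoinRoot.root f) g.derivative * rootTan δ f

variable {f}

lemma aeval_derivative_ne_zero (hsepf : f.Separable) :
    Polynomial.aeval (AdjoinRoot.root f) f.derivative ≠ 0 := by
  obtain ⟨u, v, huv⟩ := hsepf
  intro h0
  have h1 : Polynomial.aeval (AdjoinRoot.root f) (u * f + v * f.derivative) = 1 := by
    rw [huv, map_one]
  rw [map_add, map_mul, map_mul, h0, mul_zero, add_zero, AdjoinRoot.aeval_eq,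
    AdjoinRoot.aeval_eq, AdjoinRoot.mk_self, mul_zero] at h1
  exact zero_ne_one h1

lemma Phi_f_key (hsepf : f.Separable) :
    Polynomial.aeval (AdjoinRoot.root f) (pd δ f) +
      Polynomial.aeval (AdjoinRoot.root f) f.derivative * rootTan δ f = 0 := by
  rw [rootTan, mul_div_assoc', mul_neg, neg_div, mul_comm]
  rw [mul_div_assoc, div_self (aeval_derivative_ne_zero hsepf), mul_one, add_neg_cancel]

lemma Phi_add (g h : Polynomial K) : Phi δ f (g + h) = Phi δ f g + Phi δ f h := by
  simp only [Phi, pd_add, Polynomial.derivative_add, map_add]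
  ring

lemma Phi_mul_f (hsepf : f.Separable) (q : Polynomial K) : Phi δ f (f * q) = 0 := by
  have hkey := Phi_f_key δ hsepf
  simp only [Phi, pd_mul, Polynomial.derivative_mul, map_add, map_mul, AdjoinRoot.mk_self,
    zero_mul, mul_zero, add_zero, zero_add]
  have haf : Polynomial.aeval (AdjoinRoot.root f) f = 0 := by
    rw [AdjoinRoot.aeval_eq, AdjoinRoot.mk_self]
  rw [← AdjoinRoot.aeval_eq, ← AdjoinRoot.aeval_eq]
  linear_combination (Polynomial.aeval (AdjoinRoot.root f) q) * hkey +
    (Polynomial.aeval (AdjoinRoot.root f) (Polynomial.derivative q) * rootTan δ f) * haf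

lemma Phi_mod (hsepf : f.Separable) (g q : Polynomial K) :
    Phi δ f (g + f * q) = Phi δ f g := by
  rw [Phi_add, Phi_mul_f δ hsepf, add_zero]

lemma Phi_mul (g h : Polynomial K) :
    Phi δ f (g * h) = AdjoinRoot.mk f g * Phi δ f h + AdjoinRoot.mk f h * Phi δ f g := by
  simp only [Phi, pd_mul, Polynomial.derivative_mul, map_add, map_mul]
  rw [← AdjoinRoot.aeval_eq g, ← AdjoinRoot.aeval_eq h, ← AdjoinRoot.aeval_eq (pd δ g),
    ← AdjoinRoot.aeval_eq (pd δ h)]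
  ring

lemma Phi_mod_mk (hmon : f.Monic) (hsepf : f.Separable) (g : Polynomial K) :
    Phi δ f (AdjoinRoot.modByMonicHom hmon (AdjoinRoot.mk f g)) = Phi δ f g := by
  rw [AdjoinRoot.modByMonicHom_mk]
  conv_rhs => rw [← Polynomial.modByMonic_add_div g f]
  rw [Phi_mod δ hsepf]

def rootDeriv (hmon : f.Monic) (hsepf : f.Separable) : Derivation ℤ (AdjoinRoot f) (AdjoinRoot f) where
  toLinearMap := (AddMonoidHom.mk'
    (fun y => Phi δ f (AdjoinRoot.modByMonicHom hmon y))
    (by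
      intro a b
      show Phi δ f (AdjoinRoot.modByMonicHom hmon (a + b)) = _
      rw [map_add, Phi_add])).toIntLinearMap
  map_one_eq_zero' := by
    show Phi δ f (AdjoinRoot.modByMonicHom hmon 1) = 0
    have h1 : (1 : AdjoinRoot f) = AdjoinRoot.mk f 1 := (map_one _).symm
    rw [h1, Phi_mod_mk δ hmon hsepf, Phi, pd_one, Polynomial.derivative_one]
    simp
  leibniz' := by
    intro a b
    obtain ⟨g, rfl⟩ := AdjoinRoot.mk_surjective a
    obtain ⟨h, rfl⟩ := AdjoinRoot.mk_surjective b
    show Phi δ f (AdjoinRoot.modByMonicHom hmon (AdjoinRoot.mk f g * AdjoinRoot.mk f h)) = _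
    rw [← map_mul, Phi_mod_mk δ hmon hsepf, Phi_mul]
    show _ = AdjoinRoot.mk f g • Phi δ f (AdjoinRoot.modByMonicHom hmon (AdjoinRoot.mk f h))
      + AdjoinRoot.mk f h • Phi δ f (AdjoinRoot.modByMonicHom hmon (AdjoinRoot.mk f g))
    rw [Phi_mod_mk δ hmon hsepf, Phi_mod_mk δ hmon hsepf, smul_eq_mul, smul_eq_mul]

lemma rootDeriv_apply_mk (hmon : f.Monic) (hsepf : f.Separable) (g : Polynomial K) :
    rootDeriv δ hmon hsepf (AdjoinRoot.mk f g) = Phi δ f g := by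
  show Phi δ f (AdjoinRoot.modByMonicHom hmon (AdjoinRoot.mk f g)) = Phi δ f g
  exact Phi_mod_mk δ hmon hsepf g

lemma rootDeriv_algebraMap (hmon : f.Monic) (hsepf : f.Separable) (a : K) :
    rootDeriv δ hmon hsepf (algebraMap K (AdjoinRoot f) a) =
      algebraMap K (AdjoinRoot f) (δ a) := by
  have h1 : algebraMap K (AdjoinRoot f) a = AdjoinRoot.mk f (Polynomial.C a) := rfl
  have h2 : algebraMap K (AdjoinRoot f) (δ a) = AdjoinRoot.mk f (Polynomial.C (δ a)) := rfl
  rw [h1, h2, rootDeriv_apply_mk δ hmon hsepf, Phi, pd_C, Polynomial.derivative_C, map_zero, zero_mul,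
    add_zero]

end RootDeriv

/-! ### Separable elements lie in the subfield generated by their `p`-th power -/

lemma mem_adjoin_pow_self (p : ℕ) [Fact p.Prime]
    {L : Type u} [Field L] [CharP L p] [Algebra K L]
    (x : L) (hint : IsIntegral K x) (hsep : (minpoly K x).Separable) :
    x ∈ IntermediateField.adjoin K {x ^ p} := by
  set F := IntermediateField.adjoin K {x ^ p} with hF
  have hxpF : x ^ p ∈ F := IntermediateField.mem_adjoin_simple_self K (x ^ p)
  have hintF : IsIntegral F x := hint.tower_top
  set m := minpoly F x with hm
  have hm_mon : m.Monic := minpoly.monic hintF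
  have hroot : Polynomial.aeval x (Polynomial.X ^ p - Polynomial.C (⟨x ^ p, hxpF⟩ : F)) = 0 := by
    rw [map_sub, map_pow, Polynomial.aeval_X, Polynomial.aeval_C]
    exact sub_eq_zero.mpr rfl
  have hdvd : m ∣ Polynomial.X ^ p - Polynomial.C (⟨x ^ p, hxpF⟩ : F) := minpoly.dvd F x hroot
  have hmap_dvd : m.map (algebraMap F L) ∣ (Polynomial.X - Polynomial.C x) ^ p := by
    have h2 := Polynomial.map_dvd (algebraMap F L) hdvd
    rw [Polynomial.map_sub, Polynomial.map_pow, Polynomial.map_X, Polynomial.map_C] at h2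
    have h3 : (Polynomial.X - Polynomial.C x) ^ p =
        Polynomial.X ^ p - Polynomial.C x ^ p := sub_pow_char _ _
    rw [h3]
    have h4 : algebraMap F L (⟨x ^ p, hxpF⟩ : F) = x ^ p := rfl
    rw [← map_pow]
    exact h2
  have hmsep : (m.map (algebraMap F L)).Separable := by
    have h1 : m ∣ (minpoly K x).map (algebraMap K F) := minpoly.dvd_map_of_isScalarTower K F x
    exact ((hsep.map.of_dvd h1)).map
  obtain ⟨i, hip, hassoc⟩ := (dvd_prime_pow (Polynomial.prime_X_sub_C x) p).mp hmap_dvd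
  have hdegm : m.natDegree = (Polynomial.map (algebraMap F L) m).natDegree :=
    (Polynomial.natDegree_map (algebraMap F L)).symm
  have hmpos : 0 < m.natDegree := minpoly.natDegree_pos hintF
  have hi1 : i = 1 := by
    rcases Nat.lt_or_ge i 2 with h2 | h2
    · interval_cases i
      · exfalso
        rw [pow_zero] at hassoc
        have : m.natDegree = 0 := by
          rw [hdegm]
          exact Polynomial.natDegree_eq_zero_of_isUnit (associated_one_iff_isUnit.mp hassoc)
        omega
      · rfl
    · exfalso
      have hdvd2 : (Polynomial.X - Polynomial.C x) * (Polynomial.X - Polynomial.C x) ∣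
          m.map (algebraMap F L) := by
        have := pow_dvd_pow (Polynomial.X - Polynomial.C x) h2
        rw [pow_two] at this
        exact this.trans hassoc.symm.dvd
      exact Polynomial.not_isUnit_X_sub_C x (hmsep.squarefree _ hdvd2)
  rw [hi1, pow_one] at hassoc
  have hdeg1 : m.natDegree = 1 := by
    have := Polynomial.degree_eq_degree_of_associated hassoc
    have h5 : (m.map (algebraMap F L)).natDegree =
        (Polynomial.X - Polynomial.C x).natDegree := by
      rw [Polynomial.natDegree, Polynomial.natDegree, this]
    rw [hdegm, h5, Polynomial.natDegree_X_sub_C]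
  have hmx := Polynomial.Monic.eq_X_add_C hm_mon hdeg1
  have haev : Polynomial.aeval x m = 0 := minpoly.aeval F x
  rw [hmx, map_add, Polynomial.aeval_X, Polynomial.aeval_C] at haev
  have hxeq : x = algebraMap F L (-(m.coeff 0)) := by
    rw [map_neg]
    linear_combination haev
  have hcoe : algebraMap F L (-(m.coeff 0)) = ((-(m.coeff 0) : F) : L) := rfl
  rw [hxeq, hcoe]
  exact SetLike.coe_mem _

lemma li_pow_p (p : ℕ) [Fact p.Prime] [CharP K p] {f : Polynomial K} [Fact (Irreducible f)]
    (hmon : f.Monic) (hsepf : f.Separable) :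
    LinearIndependent K
      (fun j : Fin f.natDegree => (AdjoinRoot.root f ^ p) ^ (j : ℕ)) := by
  haveI : CharP (AdjoinRoot f) p :=
    charP_of_injective_algebraMap (algebraMap K (AdjoinRoot f)).injective p
  set x := AdjoinRoot.root f with hxdef
  have hf0 : f ≠ 0 := hmon.ne_zero
  have hint : IsIntegral K x := AdjoinRoot.isIntegral_root hf0
  have hminp : minpoly K x = f := by
    rw [AdjoinRoot.minpoly_root hf0, hmon.leadingCoeff, inv_one, map_one, mul_one]
  have hxF : x ∈ IntermediateField.adjoin K {x ^ p} :=
    mem_adjoin_pow_self p x hint (by rw [hminp]; exact hsepf)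
  have htop : IntermediateField.adjoin K {x ^ p} = ⊤ := by
    apply IntermediateField.toSubalgebra_injective
    rw [IntermediateField.top_toSubalgebra, ← top_le_iff, ← AdjoinRoot.adjoinRoot_eq_top (f := f)]
    exact Algebra.adjoin_le (by simpa using hxF)
  have hdim : Module.finrank K (AdjoinRoot f) = f.natDegree := by
    rw [(AdjoinRoot.powerBasis hf0).finrank, AdjoinRoot.powerBasis_dim]
  have hdeg2 : (minpoly K (x ^ p)).natDegree = f.natDegree := by
    have h1 := IntermediateField.adjoin.finrank (hint.pow p)
    rw [htop] at h1
    have h2 : Module.finrank K (⊤ : IntermediateField K (AdjoinRoot f)) =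
        Module.finrank K (AdjoinRoot f) :=
      (IntermediateField.topEquiv (F := K) (E := AdjoinRoot f)).toLinearEquiv.finrank_eq
    rw [h2, hdim] at h1
    omega
  have hli := linearIndependent_pow (K := K) (x ^ p)
  rw [hdeg2] at hli
  exact hli

lemma sepTuple_adjoinRoot (p : ℕ) [Fact p.Prime] [CharP K p] {f : Polynomial K}
    [Fact (Irreducible f)] [CharP (AdjoinRoot f) p]
    (hmon : f.Monic) (hsepf : f.Separable)
    (δL : Derivation ℤ (AdjoinRoot f) (AdjoinRoot f)) {m : ℕ} (β : Fin m → AdjoinRoot f) :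
    sepTuple (K := K) p δL β := by
  intro n v hv
  have hf0 : f ≠ 0 := hmon.ne_zero
  set b : Module.Basis (Fin f.natDegree) K (AdjoinRoot f) :=
    (AdjoinRoot.powerBasis hf0).basis.reindex (finCongr (AdjoinRoot.powerBasis_dim hf0))
    with hbdef
  have hb : ∀ j : Fin f.natDegree, b j = AdjoinRoot.root f ^ (j : ℕ) := by
    intro j
    rw [hbdef, Module.Basis.reindex_apply, (AdjoinRoot.powerBasis hf0).coe_basis]
    rw [AdjoinRoot.powerBasis_gen]
    rfl
  rw [Fintype.linearIndependent_iff]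
  intro gc hsum
  choose lam hmem hlam using fun i => Subfield.mem_map.mp (gc i).2
  set μ : Fin n → Fin f.natDegree → K := fun i j => b.repr (lam i) j with hμ
  have hlamexp : ∀ i, lam i =
      ∑ j, algebraMap K (AdjoinRoot f) (μ i j) * AdjoinRoot.root f ^ (j : ℕ) := by
    intro i
    conv_lhs => rw [← b.sum_repr (lam i)]
    refine Finset.sum_congr rfl fun j _ => ?_
    rw [hb j, Algebra.smul_def]
  have hfrob : ∀ i, ((gc i : AdjoinRoot f)) =
      ∑ j, algebraMap K (AdjoinRoot f) (μ i j ^ p) * (AdjoinRoot.root f ^ p) ^ (j : ℕ) := by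
    intro i
    rw [← hlam i, hlamexp i, map_sum]
    refine Finset.sum_congr rfl fun j _ => ?_
    rw [map_mul, frobenius_def, frobenius_def, ← map_pow, ← pow_mul, ← pow_mul,
      mul_comm (j : ℕ) p]
  have hsum' : ∑ j : Fin f.natDegree,
      algebraMap K (AdjoinRoot f) (∑ i, μ i j ^ p * v i) *
        (AdjoinRoot.root f ^ p) ^ (j : ℕ) = 0 := by
    calc ∑ j : Fin f.natDegree, algebraMap K (AdjoinRoot f) (∑ i, μ i j ^ p * v i) *
          (AdjoinRoot.root f ^ p) ^ (j : ℕ)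
        = ∑ j : Fin f.natDegree, ∑ i, algebraMap K (AdjoinRoot f) (μ i j ^ p * v i) *
          (AdjoinRoot.root f ^ p) ^ (j : ℕ) := by
          refine Finset.sum_congr rfl fun j _ => ?_
          rw [map_sum, Finset.sum_mul]
      _ = ∑ i, ∑ j : Fin f.natDegree, algebraMap K (AdjoinRoot f) (μ i j ^ p * v i) *
          (AdjoinRoot.root f ^ p) ^ (j : ℕ) := Finset.sum_comm
      _ = ∑ i, ((gc i : AdjoinRoot f)) * algebraMap K (AdjoinRoot f) (v i) := by
          refine Finset.sum_congr rfl fun i _ => ?_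
          rw [hfrob i, Finset.sum_mul]
          refine Finset.sum_congr rfl fun j _ => ?_
          rw [map_mul]
          ring
      _ = 0 := hsum
  have hK : ∀ j : Fin f.natDegree, ∑ i, μ i j ^ p * v i = 0 := by
    have hli := li_pow_p (K := K) p hmon hsepf
    rw [Fintype.linearIndependent_iff] at hli
    intro j
    refine hli (fun j => ∑ i, μ i j ^ p * v i) ?_ j
    rw [← hsum']
    refine Finset.sum_congr rfl fun j _ => ?_
    rw [Algebra.smul_def]
  rw [Fintype.linearIndependent_iff] at hv
  have hμ0 : ∀ i j, μ i j = 0 := by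
    intro i j
    have h := hv (fun i => (⟨μ i j ^ p, ⟨μ i j, rfl⟩⟩ : ((frobenius K p).fieldRange)))
      (hK j) i
    have h2 : μ i j ^ p = 0 := congrArg Subtype.val h
    exact pow_eq_zero_iff (Fact.out (p := p.Prime)).ne_zero |>.mp h2
  intro i0
  apply Subtype.ext
  have hlam0 : lam i0 = 0 := by
    rw [hlamexp i0]
    refine Finset.sum_eq_zero fun j _ => ?_
    rw [hμ0 i0 j, map_zero, zero_mul]
  rw [← hlam i0, hlam0, map_zero]
  rfl

lemma constrained_adjoinRoot (p : ℕ) [Fact p.Prime] [CharP K p] (δ : Derivation ℤ K K)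
    {f : Polynomial K} [Fact (Irreducible f)] [CharP (AdjoinRoot f) p]
    (hmon : f.Monic) (hsepf : f.Separable)
    (δL : Derivation ℤ (AdjoinRoot f) (AdjoinRoot f)) {m : ℕ} (α : Fin m → AdjoinRoot f) :
    Constrained (K := K) p δ δL α := by
  refine ⟨sepTuple_adjoinRoot p hmon hsepf δL α, 1, ?_, ?_⟩
  · change (aeval (fun q : Fin m × ℕ => (⇑δL)^[q.2] (α q.1)) :
      MvPolynomial (Fin m × ℕ) K →ₐ[K] AdjoinRoot f) 1 ≠ 0
    rw [map_one]
    exact one_ne_zero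
  · intro M _ _ _ δM hcomp β hle hsepβ hgβ
    have hmax : (IdeltaT (K := K) δL α).IsMaximal := by
      set φ := (aeval (fun q : Fin m × ℕ => (⇑δL)^[q.2] (α q.1)) :
        MvPolynomial (Fin m × ℕ) K →ₐ[K] AdjoinRoot f) with hφ
      haveI : Module.Finite K (AdjoinRoot f) := (AdjoinRoot.powerBasis hmon.ne_zero).finite
      haveI : Algebra.IsAlgebraic K (AdjoinRoot f) := Algebra.IsAlgebraic.of_finite K _
      have hfield : IsField φ.range := Subalgebra.isField_of_algebraic φ.range
      letI := hfield.toField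
      have hker : RingHom.ker φ.rangeRestrict = IdeltaT (K := K) δL α := by
        rw [AlgHom.ker_rangeRestrict]
        rfl
      rw [← hker]
      exact RingHom.ker_isMaximal_of_surjective _ φ.rangeRestrict_surjective
    have hne : IdeltaT (K := K) δM β ≠ ⊤ := by
      intro htop
      have h1 : (1 : MvPolynomial (Fin m × ℕ) K) ∈ IdeltaT (K := K) δM β := by
        rw [htop]; trivial
      rw [mem_IdeltaT, devalT, map_one] at h1
      exact one_ne_zero h1
    exact (hmax.eq_of_le hne hle).symm

/-- A differential field `(K, δ)` of characteristic `p > 0` is separably closed (as a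
field) if and only if it has no proper constrained extension: every differential field
extension `(L, δL)` of `(K, δ)` in which every finite tuple is constrained over `K`
satisfies `L = K`. -/
theorem stmt13 (p : ℕ) [Fact p.Prime] [CharP K p] (δ : Derivation ℤ K K) :
    IsSepClosed K ↔
      ∀ (L : Type u) [Field L] [CharP L p] [Algebra K L] (δL : Derivation ℤ L L),
        (∀ a : K, δL (algebraMap K L a) = algebraMap K L (δ a)) →
        (∀ (m : ℕ) (α : Fin m → L), Constrained p δ δL α) →
        Function.Surjective (algebraMap K L) := by
  constructor
  · intro hsc L _ _ _ δL hcomp hcon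
    exact forward_surj p δ δL hcon
  · intro H
    apply IsSepClosed.of_exists_root
    intro f hmon hirr hsepf
    haveI := Fact.mk hirr
    haveI : CharP (AdjoinRoot f) p :=
      charP_of_injective_algebraMap (algebraMap K (AdjoinRoot f)).injective p
    have hsurj := H (AdjoinRoot f) (rootDeriv δ hmon hsepf)
      (rootDeriv_algebraMap δ hmon hsepf)
      (fun m α => constrained_adjoinRoot p δ hmon hsepf _ α)
    obtain ⟨k, hk⟩ := hsurj (AdjoinRoot.root f)
    refine ⟨k, ?_⟩
    have h1 : Polynomial.aeval (AdjoinRoot.root f) f = 0 := by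
      rw [AdjoinRoot.aeval_eq, AdjoinRoot.mk_self]
    rw [← hk, Polynomial.aeval_algebraMap_apply] at h1
    have h2 := (map_eq_zero_iff (algebraMap K (AdjoinRoot f))
      (algebraMap K (AdjoinRoot f)).injective).mp h1
    rw [← Polynomial.coe_aeval_eq_eval k]
    exact h2
end
end
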